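/- arXiv:0809.4810 — 4 statements merged into one kernel-verified Lean document; each statement's English description precedes it below -/
import Mathlib

section
/- Let E be a free A-module over A = ℤ[u,u⁻¹] with basis {t_i : i ∈ I} and an involution bar : E → E satisfying bar(a·t) = bar(a)·bar(t) for a ∈ A (where bar on A sends u to u⁻¹). Suppose (I,≺) is a poset such that for every j ∈ I the set {i ∈ I : i ≺ j} is finite and bar(t_j) ≡ t_j modulo the A-span of {t_i : i ≺ j}, so that by Du's theorem the IC basis {c_i : i ∈ I} of E exists. If I′ is a lower order ideal of (I,≺) and E′ is the A-span of {t_i : i ∈ I′}, then the IC basis of E′ (with respect to the restricted involution and standard basis {t_i : i ∈ I′}) exists and equals {c_i : i ∈ I′}, a subset of the IC basis of E. -/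
/-!
# Statement 0 (Proposition: IC bases and lower order ideals)

Setup: `A = ℤ[u,u⁻¹]` with the bar involution `u ↦ u⁻¹`, `A⁻ = ℤ[u⁻¹]`.  Given a free
`A`-module `E` with basis `{t i : i ∈ I}` and a compatible involution `bar`, the IC basis
of `E` is the unique `bar`-invariant basis `{c i}` of the lattice `L = A⁻{t i}` with
`c i ≡ t i mod u⁻¹ L`.  If `(I, ≺)` is a poset with finite lower sets and
`bar (t j) ≡ t j` modulo `A{t i : i ≺ j}`, the IC basis exists (Du).  The statement:
for a lower order ideal `I′` of `I` and `E′ = A{t i : i ∈ I′}`, the IC basis of `E′`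
exists and equals `{c i : i ∈ I′}`, a subset of the IC basis of `E`.
-/

noncomputable section

open LaurentPolynomial

/-- The ring `A = ℤ[u, u⁻¹]` of Laurent polynomials over `ℤ`; `u` is `T 1`. -/
abbrev A : Type := LaurentPolynomial ℤ

/-- The bar involution on `A`, determined by `u ↦ u⁻¹` (i.e. `T n ↦ T (-n)`). -/
def Abar : A →+* A :=
  (invert : LaurentPolynomial ℤ ≃ₐ[ℤ] LaurentPolynomial ℤ).toAlgHom.toRingHom

/-- The lattice `u⁻¹ ⋅ (A⁻-span of the family t)`, realized as the `ℤ`-span of the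
elements `u⁻ᵏ • t i` with `k ≥ 1`.  (Here `A⁻ = ℤ[u⁻¹]`.) -/
def uinvLattice {I E : Type*} [AddCommGroup E] [Module A E] (t : I → E) : Submodule ℤ E :=
  Submodule.span ℤ {x | ∃ (k : ℕ) (i : I), x = (T (-(k : ℤ) - 1) : A) • t i}

/-- `c` is the IC (canonical) basis for the standard basis `t` and involution `bar`:
each `c i` is `bar`-invariant and congruent to `t i` modulo `u⁻¹ ⋅ A⁻{t i}`, and `c` is the
unique family with these two properties (equivalently, the unique `bar`-invariant basis of
the lattice `A⁻{t i}` congruent to the standard basis mod `u⁻¹` times the lattice). -/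
structure IsICBasis {I E : Type*} [AddCommGroup E] [Module A E]
    (bar : E → E) (t : I → E) (c : I → E) : Prop where
  bar_invariant : ∀ i, bar (c i) = c i
  congruent : ∀ i, c i - t i ∈ uinvLattice t
  unique : ∀ d : I → E, (∀ i, bar (d i) = d i) → (∀ i, d i - t i ∈ uinvLattice t) → d = c

/-! ### Auxiliary lemmas -/

/-- The `ℤ`-submodule `u⁻¹ℤ[u⁻¹]` of `A`: span of the `T (-k-1)`, `k : ℕ`. -/
def Mneg : Submodule ℤ A := Submodule.span ℤ {a : A | ∃ k : ℕ, a = T (-(k : ℤ) - 1)}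

lemma Abar_apply (a : A) (n : ℤ) : (Abar a).coeff n = a.coeff (-n) := invert_apply a n

lemma coeff_eq_zero_of_mem_Mneg {a : A} (ha : a ∈ Mneg) {n : ℤ} (hn : 0 ≤ n) : a.coeff n = 0 := by
  induction ha using Submodule.span_induction with
  | mem x hx =>
    obtain ⟨k, rfl⟩ := hx
    show Finsupp.single (-(k : ℤ) - 1) (1 : ℤ) n = 0
    rw [Finsupp.single_apply, if_neg]
    omega
  | zero => rfl
  | add x y _ _ hx hy => show (x + y).coeff n = 0; rw [AddMonoidAlgebra.coeff_add, Finsupp.add_apply, hx, hy, add_zero]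
  | smul z x _ hx => show (z • x).coeff n = 0; rw [AddMonoidAlgebra.coeff_smul, Finsupp.smul_apply, hx, smul_zero]

lemma mem_Mneg_of_coeff {a : A} (h : ∀ n : ℤ, 0 ≤ n → a.coeff n = 0) : a ∈ Mneg := by
  have : a = ∑ n ∈ a.coeff.support, AddMonoidAlgebra.single n (a.coeff n) :=
    AddMonoidAlgebra.ext (by
      rw [AddMonoidAlgebra.coeff_sum]; exact (Finsupp.sum_single a.coeff).symm)
  rw [this]
  refine Submodule.sum_mem _ fun n hn => ?_
  have hneg : n < 0 := by
    by_contra hge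
    exact Finsupp.mem_support_iff.mp hn (h n (by omega))
  have : AddMonoidAlgebra.single n (a.coeff n) = (a.coeff n) • (T n : A) := by
    show _ = (a.coeff n) • AddMonoidAlgebra.single n (1 : ℤ)
    rw [AddMonoidAlgebra.smul_single, smul_eq_mul, mul_one]
  rw [this]
  refine Submodule.smul_mem _ _ (Submodule.subset_span ⟨(-n - 1).toNat, ?_⟩)
  congr 1
  omega

lemma eq_zero_of_mem_Mneg_of_bar_fixed {a : A} (ha : a ∈ Mneg) (h : Abar a = a) : a = 0 := by
  have key : ∀ n : ℤ, a.coeff n = 0 := by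
    intro n
    rcases le_or_gt 0 n with h0 | h0
    · exact coeff_eq_zero_of_mem_Mneg ha h0
    · have : (Abar a).coeff n = a.coeff n := by rw [h]
      rw [Abar_apply] at this
      rw [← this]
      exact coeff_eq_zero_of_mem_Mneg ha (by omega)
  exact AddMonoidAlgebra.ext (Finsupp.ext key)

lemma repr_mem_Mneg_of_mem_uinvLattice {I E : Type*} [AddCommGroup E] [Module A E]
    (t : Module.Basis I A E) {x : E} (hx : x ∈ uinvLattice ⇑t) (j : I) : t.repr x j ∈ Mneg := by
  classical
  induction hx using Submodule.span_induction with
  | mem y hy =>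
    obtain ⟨k, i, rfl⟩ := hy
    rw [map_smul, Module.Basis.repr_self, Finsupp.smul_apply, Finsupp.single_apply]
    split
    · simp only [smul_eq_mul, mul_one]
      exact Submodule.subset_span ⟨k, rfl⟩
    · simp [Submodule.zero_mem]
  | zero => simp [Submodule.zero_mem]
  | add y z _ _ hy hz =>
    rw [map_add, Finsupp.add_apply]; exact Submodule.add_mem _ hy hz
  | smul z y _ hy =>
    rw [map_zsmul, Finsupp.smul_apply]
    exact Submodule.smul_mem _ _ hy

lemma smul_mem_uinvLattice {I E : Type*} [AddCommGroup E] [Module A E]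
    (t : I → E) {a : A} (ha : a ∈ Mneg) (i : I) : a • t i ∈ uinvLattice t := by
  induction ha using Submodule.span_induction with
  | mem y hy =>
    obtain ⟨k, rfl⟩ := hy
    exact Submodule.subset_span ⟨k, i, rfl⟩
  | zero => rw [zero_smul]; exact Submodule.zero_mem _
  | add y z _ _ hy hz => rw [add_smul]; exact Submodule.add_mem _ hy hz
  | smul z y _ hy => rw [smul_assoc]; exact Submodule.smul_mem _ _ hy

lemma mem_uinvLattice_restrict {I E : Type*} [AddCommGroup E] [Module A E]
    (t : Module.Basis I A E) (s : Set I) {x : E}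
    (h1 : ∀ j, t.repr x j ∈ Mneg) (h2 : ↑(t.repr x).support ⊆ s) :
    x ∈ uinvLattice (fun i : s => t i) := by
  have hx : x = ∑ j ∈ (t.repr x).support, t.repr x j • t j := by
    conv_lhs => rw [← t.linearCombination_repr x]
    rw [Finsupp.linearCombination_apply, Finsupp.sum]
  rw [hx]
  refine Submodule.sum_mem _ fun j hj => ?_
  exact smul_mem_uinvLattice (fun i : s => t i) (h1 j) ⟨j, h2 hj⟩

lemma uinvLattice_restrict_le {I E : Type*} [AddCommGroup E] [Module A E]
    (t : I → E) (s : Set I) :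
    uinvLattice (fun i : s => t i) ≤ uinvLattice t := by
  refine Submodule.span_le.mpr fun x hx => ?_
  obtain ⟨k, i, rfl⟩ := hx
  exact Submodule.subset_span ⟨k, i, rfl⟩

/-- Key vanishing lemma: if all coordinates of `x` lie in `u⁻¹ℤ[u⁻¹]` and
`bar x ≡ x` modulo the span of the `t i`, `i ∈ I'`, with `I'` a lower order ideal,
then the coordinates of `x` vanish off `I'`. -/
lemma repr_eq_zero_of_not_mem {I E : Type*} [PartialOrder I] [AddCommGroup E] [Module A E]
    (t : Module.Basis I A E) (bar : E →+ E)
    (bar_semilinear : ∀ (a : A) (x : E), bar (a • x) = Abar a • bar x)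
    (htriangular : ∀ j : I, bar (t j) - t j ∈ Submodule.span A (⇑t '' {i : I | i < j}))
    (I' : Set I) (hI' : ∀ ⦃i j : I⦄, i ∈ I' → j ≤ i → j ∈ I')
    {x : E} (hx : ∀ j, t.repr x j ∈ Mneg)
    (hbx : bar x - x ∈ Submodule.span A (⇑t '' I')) :
    ∀ j ∉ I', t.repr x j = 0 := by
  classical
  by_contra hcon
  push_neg at hcon
  set f := t.repr x with hf
  set S : Set I := {j | j ∉ I' ∧ f j ≠ 0} with hS
  have hSfin : S.Finite :=
    f.support.finite_toSet.subset fun j hj => Finsupp.mem_support_iff.mpr hj.2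
  have hSne : S.Nonempty := by
    obtain ⟨j, hj1, hj2⟩ := hcon
    exact ⟨j, hj1, hj2⟩
  obtain ⟨j, hjS, hjmax⟩ := hSfin.exists_maximalFor id S hSne
  -- express bar x
  have hxsum : x = ∑ k ∈ f.support, f k • t k := by
    conv_lhs => rw [← t.linearCombination_repr x]
    rw [Finsupp.linearCombination_apply, Finsupp.sum]
  have hbarx : bar x = ∑ k ∈ f.support, Abar (f k) • bar (t k) := by
    rw [hxsum, map_sum]
    exact Finset.sum_congr rfl fun k _ => bar_semilinear _ _
  -- coordinate j of bar x
  have hterm : ∀ k ∈ f.support, t.repr (Abar (f k) • bar (t k)) j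
      = if k = j then Abar (f j) else 0 := by
    intro k hk
    have hrepr : t.repr (bar (t k)) j
        = t.repr (t k) j + t.repr (bar (t k) - t k) j := by
      rw [← Finsupp.add_apply, ← map_add, add_sub_cancel]
    have htri : t.repr (bar (t k) - t k) j = 0 := by
      have hsupp := (Module.Basis.mem_span_image t).mp (htriangular k)
      by_contra hne
      have hjk : j < k := hsupp (Finsupp.mem_support_iff.mpr hne)
      rcases Classical.em (k ∈ I') with hkI | hkI
      · exact hjS.1 (hI' hkI hjk.le)
      · have hkS : k ∈ S := ⟨hkI, Finsupp.mem_support_iff.mp hk⟩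
        exact hjk.ne (le_antisymm hjk.le (hjmax hkS hjk.le))
    rw [map_smul, Finsupp.smul_apply, hrepr, htri, add_zero, Module.Basis.repr_self,
      Finsupp.single_apply]
    by_cases h : k = j
    · subst h; rw [if_pos rfl, if_pos rfl, smul_eq_mul, mul_one]
    · rw [if_neg h, if_neg h, smul_zero]
  have hcoord : t.repr (bar x) j = Abar (f j) := by
    rw [hbarx, map_sum, Finsupp.finset_sum_apply]
    rw [Finset.sum_congr rfl hterm, Finset.sum_ite_eq' f.support j (fun _ => Abar (f j)),
      if_pos (Finsupp.mem_support_iff.mpr hjS.2)]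
  -- bar x and x agree at coordinate j
  have hagree : t.repr (bar x) j = f j := by
    have hsupp := (Module.Basis.mem_span_image t).mp hbx
    have h0 : t.repr (bar x - x) j = 0 := by
      by_contra hne
      exact hjS.1 (hsupp (Finsupp.mem_support_iff.mpr hne))
    rw [map_sub, Finsupp.sub_apply] at h0
    have := sub_eq_zero.mp h0
    rw [this]
  have : f j = 0 :=
    eq_zero_of_mem_Mneg_of_bar_fixed (hx j) (by rw [← hcoord, hagree])
  exact hjS.2 this

/-- Let `E` be a free `A`-module with basis `t : I → E` and a semilinear
involution `bar`, where `(I, <)` is a poset such that each lower set `{i | i < j}` is finite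
and `bar (t j) ≡ t j` modulo the `A`-span of `{t i : i < j}` (so Du's theorem provides the
IC basis `c` of `E`, taken here as a hypothesis).  If `I′` is a lower order ideal of `I` and
`E′` is the `A`-span of `{t i : i ∈ I′}`, then the `c i` for `i ∈ I′` lie in `E′` and the
restricted family is the IC basis of `E′` (with respect to the restricted standard basis and
the restricted involution); in particular it exists, and it is a subset of the IC basis of
`E`. -/
theorem ic_basis_of_lower_order_ideal
    {I E : Type*} [PartialOrder I] [AddCommGroup E] [Module A E]
    (t : Module.Basis I A E)
    (bar : E →+ E)
    (bar_semilinear : ∀ (a : A) (x : E), bar (a • x) = Abar a • bar x)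
    (bar_involutive : ∀ x : E, bar (bar x) = x)
    (hfin : ∀ j : I, {i : I | i < j}.Finite)
    (htriangular : ∀ j : I, bar (t j) - t j ∈ Submodule.span A (⇑t '' {i : I | i < j}))
    (c : I → E) (hc : IsICBasis (⇑bar) (⇑t) c)
    (I' : Set I) (hI' : ∀ ⦃i j : I⦄, i ∈ I' → j ≤ i → j ∈ I') :
    (∀ i ∈ I', c i ∈ Submodule.span A (⇑t '' I')) ∧
      IsICBasis (⇑bar) (fun i : I' => t i) (fun i : I' => c i) := by
  -- coordinates of `c i - t i` vanish off `I'`, for `i ∈ I'`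
  have key : ∀ i ∈ I', ∀ j ∉ I', t.repr (c i - t i) j = 0 := by
    intro i hi
    refine repr_eq_zero_of_not_mem t bar bar_semilinear htriangular I' hI'
      (fun j => repr_mem_Mneg_of_mem_uinvLattice t (hc.congruent i) j) ?_
    have hbar : bar (c i - t i) - (c i - t i) = t i - bar (t i) := by
      rw [map_sub, hc.bar_invariant i]
      abel
    rw [hbar]
    have : t i - bar (t i) = -(bar (t i) - t i) := by abel
    rw [this]
    refine Submodule.neg_mem _ (Submodule.span_mono ?_ (htriangular i))
    exact Set.image_mono fun k hk => hI' hi hk.le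
  have hsupp : ∀ i ∈ I', ↑(t.repr (c i - t i)).support ⊆ I' := by
    intro i hi j hj
    by_contra hjI
    exact Finsupp.mem_support_iff.mp hj (key i hi j hjI)
  have hcong' : ∀ i : I', c i - t i ∈ uinvLattice (fun i : I' => t i) := by
    intro ⟨i, hi⟩
    exact mem_uinvLattice_restrict t I'
      (fun j => repr_mem_Mneg_of_mem_uinvLattice t (hc.congruent i) j) (hsupp i hi)
  constructor
  · intro i hi
    have hx : c i - t i ∈ Submodule.span A (⇑t '' I') := by
      rw [Module.Basis.mem_span_image]
      exact hsupp i hi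
    have ht : t i ∈ Submodule.span A (⇑t '' I') :=
      Submodule.subset_span ⟨i, hi, rfl⟩
    have := Submodule.add_mem _ hx ht
    simpa using this
  · refine ⟨fun i => hc.bar_invariant i, hcong', ?_⟩
    intro d hdbar hdcong
    classical
    set D : I → E := fun i => if h : i ∈ I' then d ⟨i, h⟩ else c i with hD
    have hDeq : D = c := by
      refine hc.unique D (fun i => ?_) (fun i => ?_)
      · by_cases h : i ∈ I' <;> simp [hD, h, hdbar, hc.bar_invariant]
      · by_cases h : i ∈ I'
        · simp only [hD, dif_pos h]
          exact uinvLattice_restrict_le ⇑t I' (hdcong ⟨i, h⟩)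
        · simp only [hD, dif_neg h]
          exact hc.congruent i
    funext i
    have := congrFun hDeq (i : I)
    simpa [hD, i.2] using this

end
end

section
/- Let H be the Hecke algebra of a Coxeter system (W,S), let J₂ ⊆ J₁ ⊆ S, let E be a left H_{J₂}-module with an involution bar intertwining the bar-involution of H_{J₂}, and let Γ be a bar-invariant A-basis of E. Let Λ_{J₁} be the canonical (IC) basis of H_{J₁} ⊗_{H_{J₂}} E built from the standard basis {T_w ⊠ γ : w ∈ W_{J₁}^{J₂}, γ ∈ Γ}. Then for Ẽ = H ⊗_{H_{J₂}} E, the IC basis of Ẽ built from the standard basis {T_w ⊠ γ : w ∈ W^{J₂}, γ ∈ Γ} equals the IC basis of Ẽ = H ⊗_{H_{J₁}} (H_{J₁} ⊗_{H_{J₂}} E) built from the standard basis {T_w ⊠ δ : w ∈ W^{J₁}, δ ∈ Λ_{J₁}}. Moreover the multiplication map (v₁, v₂) ↦ v₁v₂ is a bijection W^{J₁} × W_{J₁}^{J₂} → W^{J₂} with ℓ(v₁v₂) = ℓ(v₁) + ℓ(v₂). -/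
/-!
# Statement 4 (Proposition: canonical bases and nested parabolic subgroups)

`H` is the Hecke algebra of a Coxeter system `(W,S)` over `A = ℤ[u,u⁻¹]`,
`J₂ ⊆ J₁ ⊆ S`, `E` a left `H_{J₂}`-module with a compatible involution and a bar-invariant
`A`-basis `Γ`.  `Λ_{J₁}` denotes the IC (canonical) basis of `H_{J₁} ⊗_{H_{J₂}} E` built
from the standard basis `{T_w ⊠ γ : w ∈ W_{J₁}^{J₂}, γ ∈ Γ}`.

**Statement.** For `Ẽ = H ⊗_{H_{J₂}} E`, the IC basis built from the standard basis
`{T_w ⊠ γ : w ∈ W^{J₂}, γ ∈ Γ}` equals the IC basis built from the standard basis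
`{T_w ⊠ δ : w ∈ W^{J₁}, δ ∈ Λ_{J₁}}`; moreover `(v₁, v₂) ↦ v₁v₂` is a bijection
`W^{J₁} × W_{J₁}^{J₂} → W^{J₂}` with `ℓ(v₁v₂) = ℓ(v₁) + ℓ(v₂)`.
-/

open List

namespace CoxProof
variable {B : Type*} {W : Type*} [Group W] {M : CoxeterMatrix B} (cs : CoxeterSystem M W)

local prefix:100 "s" => cs.simple
local prefix:100 "π" => cs.wordProd
local prefix:100 "ℓ" => cs.length
local prefix:100 "ris" => cs.rightInvSeq

theorem conj_conj (i : B) (x : W) : s i * (s i * x * s i) * s i = x := by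
  calc s i * (s i * x * s i) * s i = (s i * s i) * x * (s i * s i) := by group
    _ = x := by rw [cs.simple_mul_simple_self]; simp

theorem simple_cube (i : B) : s i * s i * s i = s i := by
  rw [cs.simple_mul_simple_self]; simp

theorem conj_eq_simple_iff (i : B) (x : W) : s i * x * s i = s i ↔ x = s i := by
  constructor
  · intro h
    have h2 := congrArg (fun y => s i * y * s i) h
    rw [conj_conj, simple_cube] at h2
    exact h2
  · intro h
    rw [h]; exact simple_cube cs i

open Classical in
/-- The Björner–Brenti involution attached to a simple reflection. -/
noncomputable def nu (i : B) : Equiv.Perm (W × Bool) :=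
  Function.Involutive.toPerm
    (fun p => (s i * p.1 * s i, if p.1 = s i then !p.2 else p.2))
    (by
      rintro ⟨x, b⟩
      dsimp only
      by_cases h : x = s i
      · rw [if_pos h, if_pos ((conj_eq_simple_iff cs i x).mpr h), conj_conj, Bool.not_not]
      · rw [if_neg h, if_neg (fun hc => h ((conj_eq_simple_iff cs i x).mp hc)), conj_conj])

open Classical in
theorem nu_apply (i : B) (p : W × Bool) :
    nu cs i p = (s i * p.1 * s i, if p.1 = s i then !p.2 else p.2) := rfl

theorem decide_odd_succ (n : ℕ) : decide (Odd (n + 1)) = !decide (Odd n) := by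
  by_cases h : Odd n
  · have h2 : ¬ Odd (n + 1) := by rw [Nat.odd_iff] at *; omega
    simp [h, h2]
  · have h2 : Odd (n + 1) := by rw [Nat.odd_iff] at *; omega
    simp [h, h2]

theorem notxor (x y : Bool) : (!(x ^^ y)) = ((!x) ^^ y) := by
  cases x <;> cases y <;> rfl

open Classical in
theorem bool_step1 (n : ℕ) (P : Prop) [Decidable P] (ε : Bool) :
    (if P then !(xor (decide (Odd n)) ε) else xor (decide (Odd n)) ε)
      = xor (decide (Odd (n + if P then 1 else 0))) ε := by
  by_cases hP : P
  · rw [if_pos hP, if_pos hP, decide_odd_succ]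
    exact notxor _ _
  · rw [if_neg hP, if_neg hP, Nat.add_zero]

open Classical in
theorem bool_step2 (n : ℕ) (P Q : Prop) [Decidable P] [Decidable Q] (ε : Bool) :
    (if Q then !(if P then !(xor (decide (Odd n)) ε) else xor (decide (Odd n)) ε)
     else (if P then !(xor (decide (Odd n)) ε) else xor (decide (Odd n)) ε))
      = xor (decide (Odd ((n + if decide P = true then 1 else 0)
          + if decide Q = true then 1 else 0))) ε := by
  simp only [decide_eq_true_eq]
  rw [bool_step1, bool_step1]

open Classical in
theorem nu_iter (a b : B) (k : ℕ) (t : W) (ε : Bool) :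
    ((nu cs a * nu cs b) ^ k) (t, ε) =
      ((s a * s b) ^ k * t * ((s a * s b)⁻¹) ^ k,
        xor (decide (Odd ((List.range (2 * k)).countP
          (fun j => decide (t = ((s a * s b)⁻¹) ^ j * s b))))) ε) := by
  set g := s a * s b with hg
  set h := g⁻¹ with hh
  have hbg : ∀ n : ℕ, s b * g ^ n = h ^ n * s b := by
    intro n
    induction n with
    | zero => simp
    | succ n ih =>
      have hbgb : s b * g = h * s b := by
        rw [hh, hg, mul_inv_rev, cs.inv_simple, cs.inv_simple]; group
      calc s b * g ^ (n + 1) = (s b * g ^ n) * g := by rw [pow_succ]; group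
        _ = h ^ n * (s b * g) := by rw [ih]; group
        _ = h ^ (n + 1) * s b := by rw [hbgb, pow_succ]; group
  have key : ∀ (c : W) (k : ℕ), (g ^ k * t * h ^ k = c) ↔ (t = h ^ k * c * g ^ k) := by
    intro c k
    constructor
    · intro H; rw [← H, hh]; group
    · intro H; rw [H, hh]; group
  have hb2k : ∀ k : ℕ, h ^ k * s b * g ^ k = h ^ (2 * k) * s b := by
    intro k
    calc h ^ k * s b * g ^ k = h ^ k * (s b * g ^ k) := by group
      _ = h ^ k * (h ^ k * s b) := by rw [hbg]
      _ = h ^ (2 * k) * s b := by rw [two_mul, pow_add]; group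
  induction k with
  | zero => simp
  | succ k ih =>
    rw [pow_succ']
    rw [Equiv.Perm.mul_apply, ih]
    rw [Equiv.Perm.mul_apply, nu_apply, nu_apply]
    simp only
    -- conditions
    have condb : (g ^ k * t * h ^ k = s b) ↔ (t = h ^ (2 * k) * s b) := by
      rw [key, hb2k]
    have conda : (s b * (g ^ k * t * h ^ k) * s b = s a) ↔ (t = h ^ (2 * k + 1) * s b) := by
      have e1 : (s b * (g ^ k * t * h ^ k) * s b = s a) ↔ (g ^ k * t * h ^ k = s b * s a * s b) := by
        constructor
        · intro H
          have h2 := congrArg (fun y => s b * y * s b) H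
          rw [conj_conj] at h2
          rw [h2]
        · intro H; rw [H, conj_conj]
      have e2 : s b * s a * s b = h * s b := by
        rw [hh, hg, mul_inv_rev, cs.inv_simple, cs.inv_simple]
      rw [e1, e2, key]
      constructor
      · intro H
        rw [H]
        calc h ^ k * (h * s b) * g ^ k = h * (h ^ k * s b * g ^ k) := by group
          _ = h * (h ^ (2 * k) * s b) := by rw [hb2k]
          _ = h ^ (2 * k + 1) * s b := by rw [pow_succ]; group
      · intro H
        rw [H]
        calc h ^ (2 * k + 1) * s b = h * (h ^ (2 * k) * s b) := by rw [pow_succ]; group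
          _ = h * (h ^ k * s b * g ^ k) := by rw [hb2k]
          _ = h ^ k * (h * s b) * g ^ k := by group
    have conj_ab : ∀ y : W, s a * (s b * y * s b) * s a = g * y * h := by
      intro y
      rw [hh, hg, mul_inv_rev, cs.inv_simple, cs.inv_simple]
      group
    -- first components
    rw [Prod.mk.injEq]
    constructor
    · show s a * (s b * (g ^ k * t * h ^ k) * s b) * s a = g ^ (k+1) * t * h ^ (k+1)
      rw [conj_ab, pow_succ' g k, pow_succ h k]
      group
    · -- bool component
      show (if s b * (g ^ k * t * h ^ k) * s b = s a
            then !(if g ^ k * t * h ^ k = s b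
                    then !(xor (decide (Odd ((List.range (2 * k)).countP
                      (fun j => decide (t = h ^ j * s b))))) ε)
                    else xor (decide (Odd ((List.range (2 * k)).countP
                      (fun j => decide (t = h ^ j * s b))))) ε)
            else (if g ^ k * t * h ^ k = s b
                    then !(xor (decide (Odd ((List.range (2 * k)).countP
                      (fun j => decide (t = h ^ j * s b))))) ε)
                    else xor (decide (Odd ((List.range (2 * k)).countP
                      (fun j => decide (t = h ^ j * s b))))) ε))
          = xor (decide (Odd ((List.range (2 * (k + 1))).countP
              (fun j => decide (t = h ^ j * s b))))) ε
      have hrange : (2 * (k + 1)) = (2 * k + 1) + 1 := by omega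
      rw [hrange, List.range_succ, List.range_succ, List.countP_append, List.countP_append]
      simp only [List.countP_singleton, List.countP_cons, List.countP_nil, condb, conda]
      simp only [Nat.zero_add]
      exact bool_step2 _ (t = h ^ (2 * k) * s b) (t = h ^ (2 * k + 1) * s b) ε
end CoxProof


namespace CoxProof
variable {B : Type*} {W : Type*} [Group W] {M : CoxeterMatrix B} (cs : CoxeterSystem M W)

local prefix:100 "s" => cs.simple
local prefix:100 "π" => cs.wordProd
local prefix:100 "ℓ" => cs.length
local prefix:100 "ris" => cs.rightInvSeq

open Classical in
theorem nu_liftable : M.IsLiftable (fun i => nu cs i) := by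
  intro a b
  apply Equiv.ext
  rintro ⟨t, ε⟩
  have h1 : ((nu cs a * nu cs b) ^ M.M a b) (t, ε) = (t, ε) := by
    rw [nu_iter]
    have hgm : (s a * s b) ^ M.M a b = 1 := cs.simple_mul_simple_pow a b
    have hhm : ((s a * s b)⁻¹) ^ M.M a b = 1 := by rw [inv_pow, hgm, inv_one]
    rw [Prod.mk.injEq]
    constructor
    · rw [hgm, hhm]; group
    · set m := M.M a b with hm
      have hsplit : 2 * m = m + m := by omega
      rw [hsplit, List.range_add, List.countP_append, List.countP_map]
      have hcong : ((fun j => decide (t = ((s a * s b)⁻¹) ^ j * s b)) ∘ (m + ·))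
            = (fun j => decide (t = ((s a * s b)⁻¹) ^ j * s b)) := by
        funext j
        simp only [Function.comp_apply]
        congr 2
        rw [pow_add, hhm, one_mul]
      rw [hcong]
      set n := (List.range m).countP (fun j => decide (t = ((s a * s b)⁻¹) ^ j * s b))
      have : ¬ Odd (n + n) := by rw [Nat.odd_iff]; omega
      simp [this]
  exact h1

/-- The Björner–Brenti homomorphism `W →* Perm (W × Bool)`. -/
noncomputable def phi : W →* Equiv.Perm (W × Bool) :=
  cs.lift ⟨fun i => nu cs i, nu_liftable cs⟩

theorem phi_simple (i : B) : phi cs (s i) = nu cs i :=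
  cs.lift_apply_simple (nu_liftable cs) i

open Classical in
theorem phi_wordProd (ω : List B) (t : W) (ε : Bool) :
    phi cs (π ω) (t, ε) = (π ω * t * (π ω)⁻¹,
      xor (decide (Odd ((ris ω).countP (fun r => decide (r = t))))) ε) := by
  induction ω with
  | nil =>
    simp only [CoxeterSystem.wordProd_nil, map_one, CoxeterSystem.rightInvSeq_nil,
      List.countP_nil]
    simp
  | cons i ω ih =>
    rw [CoxeterSystem.wordProd_cons, map_mul, Equiv.Perm.mul_apply, ih, phi_simple, nu_apply]
    have hris : ris (i :: ω) = ((π ω)⁻¹ * s i * π ω) :: ris ω := rfl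
    rw [hris, List.countP_cons]
    have hcond : (π ω * t * (π ω)⁻¹ = s i) ↔ ((π ω)⁻¹ * s i * π ω = t) := by
      constructor
      · intro H; rw [← H]; group
      · intro H; rw [← H]; group
    rw [Prod.mk.injEq]
    constructor
    · show s i * (π ω * t * (π ω)⁻¹) * s i = s i * π ω * t * (s i * π ω)⁻¹
      rw [mul_inv_rev, cs.inv_simple]
      group
    · simp only [hcond, decide_eq_true_eq]
      exact bool_step1 _ _ ε

end CoxProof


namespace CoxProof
variable {B : Type*} {W : Type*} [Group W] {M : CoxeterMatrix B} (cs : CoxeterSystem M W)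

local prefix:100 "s" => cs.simple
local prefix:100 "π" => cs.wordProd
local prefix:100 "ℓ" => cs.length
local prefix:100 "ris" => cs.rightInvSeq

open Classical in
/-- The (right) exchange condition. -/
theorem exchange {ω : List B} {i : B}
    (hl : ℓ (π ω * s i) < ℓ (π ω)) :
    ∃ j, j < ω.length ∧ π ω * s i = π (ω.eraseIdx j) := by
  obtain ⟨τ, hτred, hτ⟩ := cs.exists_reduced_word' (π ω * s i)
  have hτc : π (τ.concat i) = π ω := by
    rw [cs.wordProd_concat, ← hτ, cs.simple_mul_simple_cancel_right]
  -- the count of `s i` in `ris τ` is zero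
  have hzero : (ris τ).countP (fun r => decide (r = s i)) = 0 := by
    apply List.countP_eq_zero.mpr
    intro r hrmem
    simp only [decide_eq_true_eq]
    intro hreq
    rw [hreq] at hrmem
    have hinv := cs.isRightInversion_of_mem_rightInvSeq hτred hrmem
    have h2 : ℓ (π τ * s i) < ℓ (π τ) := hinv.2
    rw [← hτ, cs.simple_mul_simple_cancel_right] at h2
    omega
  -- the count of `s i` in `ris (τ.concat i)` is one
  have hconc : (ris (τ.concat i)).countP (fun r => decide (r = s i)) = 1 := by
    rw [cs.rightInvSeq_concat, List.concat_eq_append, List.countP_append, List.countP_map]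
    have : ((fun r => decide (r = s i)) ∘ (MulAut.conj (s i)))
        = (fun r => decide (r = s i)) := by
      funext r
      simp only [Function.comp_apply, MulAut.conj_apply, cs.inv_simple]
      by_cases h : r = s i
      · rw [h]
        have : s i * s i * s i = s i := simple_cube cs i
        simp [this]
      · have h2 : ¬ (s i * r * s i = s i) := fun hc => h ((conj_eq_simple_iff cs i r).mp hc)
        simp [h, h2]
    rw [this, hzero]
    simp
  -- compare the two parities
  have hpar : phi cs (π ω) ((s i : W), false) = phi cs (π (τ.concat i)) ((s i : W), false) := by
    rw [hτc]
  rw [phi_wordProd, phi_wordProd, hconc] at hpar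
  have hsnd := congrArg Prod.snd hpar
  simp only [Bool.xor_false] at hsnd
  have hodd : Odd ((ris ω).countP (fun r => decide (r = s i))) := by
    have hd : decide (Odd ((ris ω).countP (fun r => decide (r = s i)))) = true := by
      rw [hsnd]
      simp [Nat.odd_iff]
    exact of_decide_eq_true hd
  have hpos : 0 < (ris ω).countP (fun r => decide (r = s i)) := by
    rcases hodd with ⟨c, hc⟩; omega
  have hmem : ∃ r ∈ ris ω, (fun r => decide (r = s i)) r := List.countP_pos_iff.mp hpos
  obtain ⟨r, hrmem, hrq⟩ := hmem
  have hri : (s i : W) ∈ ris ω := by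
    have hre := of_decide_eq_true hrq
    rw [← hre]
    exact hrmem
  obtain ⟨j, hj, hget⟩ := List.mem_iff_getElem.mp hri
  have hlen : j < ω.length := by
    have := cs.length_rightInvSeq ω
    omega
  refine ⟨j, hlen, ?_⟩
  have hgd : (ris ω).getD j 1 = s i := by rw [List.getD_eq_getElem _ 1 hj, hget]
  rw [← hgd]
  exact cs.wordProd_mul_getD_rightInvSeq ω j

end CoxProof

namespace CoxProof
variable {B : Type*} {W : Type*} [Group W] {M : CoxeterMatrix B} (cs : CoxeterSystem M W)

local prefix:100 "s" => cs.simple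
local prefix:100 "π" => cs.wordProd
local prefix:100 "ℓ" => cs.length

theorem wordProd_mem_closure (J : Set B) (ω : List B) (hω : ∀ i ∈ ω, i ∈ J) :
    π ω ∈ Subgroup.closure (cs.simple '' J) := by
  induction ω with
  | nil => rw [cs.wordProd_nil]; exact Subgroup.one_mem _
  | cons i ω ih =>
    rw [cs.wordProd_cons]
    refine Subgroup.mul_mem _ ?_ (ih (fun j hj => hω j (List.mem_cons_of_mem i hj)))
    exact Subgroup.subset_closure ⟨i, hω i List.mem_cons_self, rfl⟩

theorem exists_Jword (J : Set B) {w : W} (hw : w ∈ Subgroup.closure (cs.simple '' J)) :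
    ∃ ω : List B, (∀ i ∈ ω, i ∈ J) ∧ π ω = w := by
  induction hw using Subgroup.closure_induction with
  | mem x hx =>
    obtain ⟨i, hi, rfl⟩ := hx
    exact ⟨[i], by simp [hi], by simp [cs.wordProd_cons, cs.wordProd_nil]⟩
  | one => exact ⟨[], by simp, cs.wordProd_nil⟩
  | mul x y hx hy ihx ihy =>
    obtain ⟨ω₁, h₁, e₁⟩ := ihx
    obtain ⟨ω₂, h₂, e₂⟩ := ihy
    refine ⟨ω₁ ++ ω₂, ?_, by rw [cs.wordProd_append, e₁, e₂]⟩
    intro i hi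
    rcases List.mem_append.mp hi with h | h
    · exact h₁ i h
    · exact h₂ i h
  | inv x hx ihx =>
    obtain ⟨ω, h₁, e₁⟩ := ihx
    refine ⟨ω.reverse, fun i hi => h₁ i (List.mem_reverse.mp hi), ?_⟩
    rw [cs.wordProd_reverse, e₁]

/-- The key length-additivity lemma for a minimal coset representative. -/
theorem key_length (J : Set B) (w : W)
    (hw : ∀ x ∈ Subgroup.closure (cs.simple '' J), ℓ w ≤ ℓ (w * x)) :
    ∀ ω : List B, (∀ i ∈ ω, i ∈ J) →
      (∀ σ : List B, (∀ i ∈ σ, i ∈ J) → π σ = π ω → ω.length ≤ σ.length) →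
      ℓ (w * π ω) = ℓ w + ω.length := by
  intro ω
  induction ω using List.reverseRecOn with
  | nil => intro _ _; simp [cs.wordProd_nil]
  | append_singleton ω' i₀ ih =>
    intro hlet hmin
    have hlet' : ∀ i ∈ ω', i ∈ J := fun i hi => hlet i (List.mem_append_left _ hi)
    have hi₀ : i₀ ∈ J := hlet i₀ (List.mem_append_right _ (List.mem_singleton_self i₀))
    have hmin' : ∀ σ : List B, (∀ i ∈ σ, i ∈ J) → π σ = π ω' → ω'.length ≤ σ.length := by
      intro σ hσ hπ
      have h1 := hmin (σ ++ [i₀]) (by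
        intro i hi
        rcases List.mem_append.mp hi with h | h
        · exact hσ i h
        · rw [List.mem_singleton.mp h]; exact hi₀)
        (by rw [cs.wordProd_append, cs.wordProd_append, hπ])
      simpa using h1
    have hlen' := ih hlet' hmin'
    have hsplit : π (ω' ++ [i₀]) = π ω' * s i₀ := by
      rw [cs.wordProd_append]
      congr 1
      rw [cs.wordProd_cons, cs.wordProd_nil, mul_one]
    have hlength : (ω' ++ [i₀]).length = ω'.length + 1 := by simp
    rw [hsplit, hlength, ← mul_assoc]
    set W1 := w * π ω' with hW1
    rcases cs.length_mul_simple W1 i₀ with hcase | hcase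
    · rw [hcase, hlen']
      omega
    · -- contradiction case
      exfalso
      have hne := cs.length_mul_simple_ne W1 i₀
      have hlt : ℓ (W1 * s i₀) < ℓ W1 := by omega
      obtain ⟨τ, hτlen, hτ⟩ := cs.exists_reduced_word w
      have hτlen' : ℓ w = τ.length := by rw [hτ]; exact hτlen
      have hπfull : π (τ ++ ω') = W1 := by rw [cs.wordProd_append, ← hτ]
      have hltfull : ℓ (π (τ ++ ω') * s i₀) < ℓ (π (τ ++ ω')) := by rw [hπfull]; exact hlt
      obtain ⟨j, hj, heq⟩ := exchange cs hltfull
      rw [hπfull] at heq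
      rw [List.length_append] at hj
      by_cases hjτ : j < τ.length
      · -- contradicts minimality of `w` in its coset
        rw [List.eraseIdx_append_of_lt_length hjτ] at heq
        have hx : π ω' * s i₀ * (π ω')⁻¹ ∈ Subgroup.closure (cs.simple '' J) := by
          refine Subgroup.mul_mem _ (Subgroup.mul_mem _ ?_ ?_) (Subgroup.inv_mem _ ?_)
          · exact wordProd_mem_closure cs J ω' hlet'
          · exact Subgroup.subset_closure ⟨i₀, hi₀, rfl⟩
          · exact wordProd_mem_closure cs J ω' hlet'
        have hwx : w * (π ω' * s i₀ * (π ω')⁻¹) = π (τ.eraseIdx j ++ ω') * (π ω')⁻¹ := by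
          rw [← heq, hW1]
          group
        have hb : ℓ (w * (π ω' * s i₀ * (π ω')⁻¹)) ≤ (τ.eraseIdx j).length := by
          rw [hwx, cs.wordProd_append]
          have : π (τ.eraseIdx j) * π ω' * (π ω')⁻¹ = π (τ.eraseIdx j) := by group
          rw [this]
          exact cs.length_wordProd_le _
        have hle : (τ.eraseIdx j).length + 1 = τ.length := List.length_eraseIdx_add_one hjτ
        have := hw _ hx
        omega
      · -- contradicts minimality of the word ω
        push_neg at hjτ
        rw [List.eraseIdx_append_of_length_le hjτ] at heq
        rw [cs.wordProd_append] at heq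
        have hcancel : π ω' * s i₀ = π (ω'.eraseIdx (j - τ.length)) := by
          have := heq
          rw [hW1] at this
          -- this : w * π ω' * s i₀ = π τ * π (ω'.eraseIdx (j - τ.length))
          rw [← hτ] at this
          calc π ω' * s i₀ = w⁻¹ * (w * π ω' * s i₀) := by group
            _ = w⁻¹ * (w * π (ω'.eraseIdx (j - τ.length))) := by rw [this]
            _ = π (ω'.eraseIdx (j - τ.length)) := by group
        have hσlet : ∀ i ∈ ω'.eraseIdx (j - τ.length), i ∈ J :=
          fun i hi => hlet' i (List.mem_of_mem_eraseIdx hi)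
        have hσπ : π (ω'.eraseIdx (j - τ.length)) = π (ω' ++ [i₀]) := by
          rw [hsplit, hcancel]
        have hmm := hmin _ hσlet hσπ
        have hjω : j - τ.length < ω'.length := by omega
        have := List.length_eraseIdx_add_one hjω
        rw [hlength] at hmm
        omega

theorem length_eq_min_word_length (J : Set B) (ω : List B) (hlet : ∀ i ∈ ω, i ∈ J)
    (hmin : ∀ σ : List B, (∀ i ∈ σ, i ∈ J) → π σ = π ω → ω.length ≤ σ.length) :
    ℓ (π ω) = ω.length := by
  have h := key_length cs J 1 (by intro x _; simp) ω hlet hmin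
  simpa using h

open Classical in
/-- Every element of a standard parabolic subgroup has a minimal `J`-word. -/
theorem exists_min_Jword (J : Set B) {v : W} (hv : v ∈ Subgroup.closure (cs.simple '' J)) :
    ∃ ω : List B, (∀ i ∈ ω, i ∈ J) ∧ π ω = v ∧ ω.length = ℓ v ∧
      (∀ σ : List B, (∀ i ∈ σ, i ∈ J) → π σ = π ω → ω.length ≤ σ.length) := by
  have hex : ∃ n : ℕ, ∃ ω : List B, ω.length = n ∧ (∀ i ∈ ω, i ∈ J) ∧ π ω = v := by
    obtain ⟨ω, h1, h2⟩ := exists_Jword cs J hv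
    exact ⟨ω.length, ω, rfl, h1, h2⟩
  obtain ⟨ω, hlen, hlet, hπ⟩ := Nat.find_spec hex
  have hmin : ∀ σ : List B, (∀ i ∈ σ, i ∈ J) → π σ = π ω → ω.length ≤ σ.length := by
    intro σ hσ hπσ
    by_contra hcon
    push_neg at hcon
    have : σ.length < Nat.find hex := by omega
    exact Nat.find_min hex this ⟨σ, rfl, hσ, by rw [hπσ, hπ]⟩
  refine ⟨ω, hlet, hπ, ?_, hmin⟩
  rw [← hπ]
  exact (length_eq_min_word_length cs J ω hlet hmin).symm ▸ rfl

/-- Length additivity for a minimal coset representative (fact 1). -/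
theorem length_min_mul (J : Set B) {w : W}
    (hw : ∀ x ∈ Subgroup.closure (cs.simple '' J), ℓ w ≤ ℓ (w * x))
    {v : W} (hv : v ∈ Subgroup.closure (cs.simple '' J)) :
    ℓ (w * v) = ℓ w + ℓ v := by
  obtain ⟨ω, hlet, hπ, hlen, hmin⟩ := exists_min_Jword cs J hv
  have h := key_length cs J w hw ω hlet hmin
  rw [hπ] at h
  rw [h, hlen]
end CoxProof

namespace CoxProof
variable {B : Type*} {W : Type*} [Group W] {M : CoxeterMatrix B} (cs : CoxeterSystem M W)

local prefix:100 "s" => cs.simple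
local prefix:100 "ℓ" => cs.length

section PartA
variable (J₁ J₂ : Set B)

theorem partA1 (hJ : J₂ ⊆ J₁) (v₁ : W)
    (h₁ : ∀ v ∈ Subgroup.closure (cs.simple '' J₁), ℓ v₁ ≤ ℓ (v₁ * v))
    (v₂ : W) (h₂m : v₂ ∈ Subgroup.closure (cs.simple '' J₁))
    (h₂ : ∀ v ∈ Subgroup.closure (cs.simple '' J₂), ℓ v₂ ≤ ℓ (v₂ * v)) :
    (∀ v ∈ Subgroup.closure (cs.simple '' J₂), ℓ (v₁ * v₂) ≤ ℓ (v₁ * v₂ * v)) ∧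
      ℓ (v₁ * v₂) = ℓ v₁ + ℓ v₂ := by
  have hsub : Subgroup.closure (cs.simple '' J₂) ≤ Subgroup.closure (cs.simple '' J₁) :=
    Subgroup.closure_mono (Set.image_mono hJ)
  have hadd : ℓ (v₁ * v₂) = ℓ v₁ + ℓ v₂ := length_min_mul cs J₁ h₁ h₂m
  refine ⟨?_, hadd⟩
  intro v hv
  have hv1 : v₂ * v ∈ Subgroup.closure (cs.simple '' J₁) :=
    Subgroup.mul_mem _ h₂m (hsub hv)
  rw [mul_assoc, length_min_mul cs J₁ h₁ hv1, hadd]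
  have := h₂ v hv
  omega

open Classical in
theorem partA2 (hJ : J₂ ⊆ J₁) (w : W)
    (hw : ∀ v ∈ Subgroup.closure (cs.simple '' J₂), ℓ w ≤ ℓ (w * v)) :
    ∃ (v₁ v₂ : W), v₁ * v₂ = w ∧
      (∀ x ∈ Subgroup.closure (cs.simple '' J₁), ℓ v₁ ≤ ℓ (v₁ * x)) ∧
      v₂ ∈ Subgroup.closure (cs.simple '' J₁) ∧
      (∀ x ∈ Subgroup.closure (cs.simple '' J₂), ℓ v₂ ≤ ℓ (v₂ * x)) := by
  have hsub : Subgroup.closure (cs.simple '' J₂) ≤ Subgroup.closure (cs.simple '' J₁) :=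
    Subgroup.closure_mono (Set.image_mono hJ)
  have hex : ∃ n : ℕ, ∃ y : W, y ∈ Subgroup.closure (cs.simple '' J₁) ∧ ℓ (w * y) = n :=
    ⟨ℓ (w * 1), 1, Subgroup.one_mem _, rfl⟩
  obtain ⟨y₀, hy₀mem, hy₀len⟩ := Nat.find_spec hex
  set v₁ := w * y₀ with hv₁
  have hmin1 : ∀ x ∈ Subgroup.closure (cs.simple '' J₁), ℓ v₁ ≤ ℓ (v₁ * x) := by
    intro x hx
    have h1 : Nat.find hex ≤ ℓ (w * (y₀ * x)) :=
      Nat.find_min' hex ⟨y₀ * x, Subgroup.mul_mem _ hy₀mem hx, rfl⟩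
    have hy2 : ℓ (w * y₀) = Nat.find hex := hy₀len
    rw [hv₁, mul_assoc]
    omega
  refine ⟨v₁, y₀⁻¹, by rw [hv₁]; group, hmin1, Subgroup.inv_mem _ hy₀mem, ?_⟩
  intro v hv
  have hinvmem : y₀⁻¹ ∈ Subgroup.closure (cs.simple '' J₁) := Subgroup.inv_mem _ hy₀mem
  have hvmem : y₀⁻¹ * v ∈ Subgroup.closure (cs.simple '' J₁) :=
    Subgroup.mul_mem _ hinvmem (hsub hv)
  have e1 : ℓ (v₁ * y₀⁻¹) = ℓ v₁ + ℓ y₀⁻¹ := length_min_mul cs J₁ hmin1 hinvmem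
  have e2 : ℓ (v₁ * (y₀⁻¹ * v)) = ℓ v₁ + ℓ (y₀⁻¹ * v) := length_min_mul cs J₁ hmin1 hvmem
  have e3 : v₁ * y₀⁻¹ = w := by rw [hv₁]; group
  have e4 : v₁ * (y₀⁻¹ * v) = w * v := by rw [hv₁]; group
  rw [e3] at e1
  rw [e4] at e2
  have := hw v hv
  omega

theorem partA2_unique (w : W) (a b a' b' : W)
    (ha : ∀ x ∈ Subgroup.closure (cs.simple '' J₁), ℓ a ≤ ℓ (a * x))
    (hb : b ∈ Subgroup.closure (cs.simple '' J₁))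
    (ha' : ∀ x ∈ Subgroup.closure (cs.simple '' J₁), ℓ a' ≤ ℓ (a' * x))
    (hb' : b' ∈ Subgroup.closure (cs.simple '' J₁))
    (hp : a * b = w) (hq : a' * b' = w) : a = a' ∧ b = b' := by
  have hx : b * b'⁻¹ ∈ Subgroup.closure (cs.simple '' J₁) :=
    Subgroup.mul_mem _ hb (Subgroup.inv_mem _ hb')
  have hxinv : (b * b'⁻¹)⁻¹ ∈ Subgroup.closure (cs.simple '' J₁) := Subgroup.inv_mem _ hx
  have he : a' = a * (b * b'⁻¹) := by
    have : a * b = a' * b' := by rw [hp, hq]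
    calc a' = a' * b' * b'⁻¹ := by group
      _ = a * b * b'⁻¹ := by rw [← this]
      _ = a * (b * b'⁻¹) := by group
  have he2 : a = a' * (b * b'⁻¹)⁻¹ := by rw [he]; group
  have l1 : ℓ a' = ℓ a + ℓ (b * b'⁻¹) := by
    rw [he]; exact length_min_mul cs J₁ ha hx
  have l2 : ℓ a = ℓ a' + ℓ ((b * b'⁻¹)⁻¹) := by
    rw [he2]; exact length_min_mul cs J₁ ha' hxinv
  rw [cs.length_inv] at l2
  have hzero : ℓ (b * b'⁻¹) = 0 := by omega
  have hone : b * b'⁻¹ = 1 := cs.length_eq_zero_iff.mp hzero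
  have hbb : b = b' := by
    calc b = b * b'⁻¹ * b' := by group
      _ = b' := by rw [hone]; group
  constructor
  · rw [he, hone]; group
  · exact hbb

end PartA
end CoxProof


noncomputable section
open LaurentPolynomial

theorem nested_parabolic_IC_bases
    {B W : Type*} [Group W] (M : CoxeterMatrix B) (cs : CoxeterSystem M W)
    -- nested subsets of simple reflections `J₂ ⊆ J₁ ⊆ S`, with parabolic subgroups
    (J₁ J₂ : Set B) (hJ : J₂ ⊆ J₁)
    (WJ1 WJ2 : Subgroup W)
    (hWJ1 : WJ1 = Subgroup.closure (cs.simple '' J₁))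
    (hWJ2 : WJ2 = Subgroup.closure (cs.simple '' J₂))
    -- the Hecke algebra of `W`
    (H : Type*) [Ring H] [Algebra A H] (Tb : Module.Basis W A H)
    (hT1 : Tb 1 = 1)
    (hTmul : ∀ v w : W, cs.length (v * w) = cs.length v + cs.length w →
      Tb (v * w) = Tb v * Tb w)
    (hTquad : ∀ i : B, Tb (cs.simple i) * Tb (cs.simple i) =
      (T 1 - T (-1) : A) • Tb (cs.simple i) + 1)
    (barH : H →+* H)
    (hbarH_smul : ∀ (a : A) (h : H), barH (a • h) = Abar a • barH h)
    (hbarH_T : ∀ w : W, barH (Tb w) * Tb w⁻¹ = 1 ∧ Tb w⁻¹ * barH (Tb w) = 1)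
    -- the parabolic Hecke subalgebra `H_{J₁}` (the `A`-span of `{T_w : w ∈ W_{J₁}}`)
    (HJ1 : Subalgebra A H)
    (hTmem : ∀ w ∈ WJ1, Tb w ∈ HJ1)
    (hHJ1span : ∀ h : H, h ∈ HJ1 → h ∈ Submodule.span A (⇑Tb '' (WJ1 : Set W)))
    (hbarHJ1 : ∀ r : HJ1, barH (r : H) ∈ HJ1)
    -- `E`, a left `H_{J₂}`-module with bar-invariant basis `Γ` and compatible involution
    {Γ : Type*} (E : Type*) [AddCommGroup E] [Module A E] (Γb : Module.Basis Γ A E)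
    (barE : E →+ E) (hbarE_smul : ∀ (a : A) (e : E), barE (a • e) = Abar a • barE e)
    (hbarE_fix : ∀ γ : Γ, barE (Γb γ) = Γb γ)
    -- `M1 = H_{J₁} ⊗_{H_{J₂}} E`: an `H_{J₁}`-module with balanced unit and involution
    (M1 : Type*) [AddCommGroup M1] [Module A M1] [Module HJ1 M1] [IsScalarTower A HJ1 M1]
    (unit1 : E →ₗ[A] M1)
    (barM1 : M1 →+ M1)
    (hbarM1_smul : ∀ (a : A) (x : M1), barM1 (a • x) = Abar a • barM1 x)
    (hbarM1_box : ∀ (r : HJ1) (e : E),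
      barM1 (r • unit1 e) = (⟨barH (r : H), hbarHJ1 r⟩ : HJ1) • unit1 (barE e))
    -- `Λ_{J₁}`: the IC basis of `M1` built from `{T_w ⊠ γ : w ∈ W_{J₁}^{J₂}, γ ∈ Γ}`
    (c1 : {w : W // w ∈ WJ1 ∧ ∀ v ∈ WJ2, cs.length w ≤ cs.length (w * v)} × Γ → M1)
    (hc1 : IsICBasis (⇑barM1)
      (fun p : {w : W // w ∈ WJ1 ∧ ∀ v ∈ WJ2, cs.length w ≤ cs.length (w * v)} × Γ =>
        (⟨Tb p.1.1, hTmem _ p.1.2.1⟩ : HJ1) • unit1 (Γb p.2)) c1)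
    -- `Ẽ = H ⊗_{H_{J₂}} E = H ⊗_{H_{J₁}} M1`: an `H`-module with compatible units
    (tE : Type*) [AddCommGroup tE] [Module A tE] [Module H tE] [IsScalarTower A H tE]
    (unit : E →ₗ[A] tE)
    (η : M1 →ₗ[A] tE)
    (hη_unit : ∀ e : E, η (unit1 e) = unit e)
    (hη_equiv : ∀ (r : HJ1) (x : M1), η (r • x) = (r : H) • η x)
    (barT : tE →+ tE)
    (hbarT_smul : ∀ (a : A) (x : tE), barT (a • x) = Abar a • barT x)
    (hbarT_box : ∀ (h : H) (e : E), barT (h • unit e) = barH h • unit (barE e)) :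
    -- (A) `(v₁,v₂) ↦ v₁v₂` is a length-additive bijection `W^{J₁} × W_{J₁}^{J₂} → W^{J₂}`
    ((∀ (v₁ : W) (_ : ∀ v ∈ WJ1, cs.length v₁ ≤ cs.length (v₁ * v))
        (v₂ : W) (_ : v₂ ∈ WJ1 ∧ ∀ v ∈ WJ2, cs.length v₂ ≤ cs.length (v₂ * v)),
        (∀ v ∈ WJ2, cs.length (v₁ * v₂) ≤ cs.length (v₁ * v₂ * v)) ∧
          cs.length (v₁ * v₂) = cs.length v₁ + cs.length v₂) ∧
      (∀ (w : W) (_ : ∀ v ∈ WJ2, cs.length w ≤ cs.length (w * v)),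
        ∃! p : {v : W // ∀ x ∈ WJ1, cs.length v ≤ cs.length (v * x)} ×
            {v : W // v ∈ WJ1 ∧ ∀ x ∈ WJ2, cs.length v ≤ cs.length (v * x)},
          p.1.1 * p.2.1 = w)) ∧
    -- (B) the two IC bases of `Ẽ` coincide: the IC basis built from
    -- `{T_w ⊠ γ : w ∈ W^{J₂}}` and the one built from `{T_w ⊠ δ : w ∈ W^{J₁}, δ ∈ Λ_{J₁}}`
    -- have the same elements, matched along `(w, (v, γ)) ↦ (wv, γ)`
    (∀ (c : {w : W // ∀ v ∈ WJ2, cs.length w ≤ cs.length (w * v)} × Γ → tE),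
      IsICBasis (⇑barT)
        (fun p : {w : W // ∀ v ∈ WJ2, cs.length w ≤ cs.length (w * v)} × Γ =>
          Tb p.1.1 • unit (Γb p.2)) c →
      ∀ (c2 : {w : W // ∀ v ∈ WJ1, cs.length w ≤ cs.length (w * v)} ×
          ({w : W // w ∈ WJ1 ∧ ∀ v ∈ WJ2, cs.length w ≤ cs.length (w * v)} × Γ) → tE),
        IsICBasis (⇑barT)
          (fun q : {w : W // ∀ v ∈ WJ1, cs.length w ≤ cs.length (w * v)} ×
              ({w : W // w ∈ WJ1 ∧ ∀ v ∈ WJ2, cs.length w ≤ cs.length (w * v)} × Γ) =>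
            Tb q.1.1 • η (c1 (q.2.1, q.2.2))) c2 →
        Set.range c2 = Set.range c ∧
          ∀ (q : {w : W // ∀ v ∈ WJ1, cs.length w ≤ cs.length (w * v)} ×
              ({w : W // w ∈ WJ1 ∧ ∀ v ∈ WJ2, cs.length w ≤ cs.length (w * v)} × Γ))
            (h : ∀ v ∈ WJ2, cs.length (q.1.1 * q.2.1.1) ≤ cs.length (q.1.1 * q.2.1.1 * v)),
            c2 q = c (⟨q.1.1 * q.2.1.1, h⟩, q.2.2)) := by
  subst hWJ1 hWJ2
  constructor
  · constructor
    · intro v₁ h₁ v₂ h₂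
      exact CoxProof.partA1 cs J₁ J₂ hJ v₁ h₁ v₂ h₂.1 h₂.2
    · intro w hw
      obtain ⟨v₁, v₂, hprod, hm1, hm2mem, hm2⟩ := CoxProof.partA2 cs J₁ J₂ hJ w hw
      refine ⟨(⟨v₁, hm1⟩, ⟨v₂, hm2mem, hm2⟩), hprod, ?_⟩
      rintro ⟨⟨a, haa⟩, ⟨b, hbb⟩⟩ hab
      obtain ⟨hav, hbv⟩ := CoxProof.partA2_unique cs J₁ w a b v₁ v₂ haa hbb.1 hm1
        hm2mem hab hprod
      exact Prod.ext (Subtype.ext hav) (Subtype.ext hbv)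
  · intro c hc c2 hc2
    -- the reindexing bijection
    set f : ({w : W // ∀ v ∈ Subgroup.closure (cs.simple '' J₁),
            cs.length w ≤ cs.length (w * v)} ×
          ({w : W // w ∈ Subgroup.closure (cs.simple '' J₁) ∧
            ∀ v ∈ Subgroup.closure (cs.simple '' J₂),
              cs.length w ≤ cs.length (w * v)} × Γ)) →
        ({w : W // ∀ v ∈ Subgroup.closure (cs.simple '' J₂),
            cs.length w ≤ cs.length (w * v)} × Γ) :=
      fun q => (⟨q.1.1 * q.2.1.1,
        (CoxProof.partA1 cs J₁ J₂ hJ q.1.1 q.1.2 q.2.1.1 q.2.1.2.1 q.2.1.2.2).1⟩, q.2.2)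
      with hf
    have hbij : Function.Bijective f := by
      constructor
      · rintro ⟨⟨a, haa⟩, ⟨⟨b, hbb⟩, γ⟩⟩ ⟨⟨a', haa'⟩, ⟨⟨b', hbb'⟩, γ'⟩⟩ heq
        rw [hf] at heq
        simp only [Prod.mk.injEq, Subtype.mk.injEq] at heq
        obtain ⟨hprod, hγ⟩ := heq
        obtain ⟨hav, hbv⟩ := CoxProof.partA2_unique cs J₁ (a' * b') a b a' b' haa hbb.1
          haa' hbb'.1 hprod rfl
        simp only [Prod.mk.injEq, Subtype.mk.injEq]
        exact ⟨hav, hbv, hγ⟩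
      · rintro ⟨⟨w, hw⟩, γ⟩
        obtain ⟨v₁, v₂, hprod, hm1, hm2mem, hm2⟩ := CoxProof.partA2 cs J₁ J₂ hJ w hw
        refine ⟨(⟨v₁, hm1⟩, (⟨v₂, hm2mem, hm2⟩, γ)), ?_⟩
        rw [hf]
        exact Prod.ext (Subtype.ext hprod) rfl
    set e := Equiv.ofBijective f hbij with he
    -- scalar commutation
    have hsmulcomm : ∀ (a : A) (h : H) (x : tE), h • (a • x) = a • (h • x) := by
      intro a h x
      calc h • (a • x) = h • ((algebraMap A H a) • x) := by rw [algebraMap_smul]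
        _ = (h * algebraMap A H a) • x := (mul_smul _ _ _).symm
        _ = (algebraMap A H a * h) • x := by rw [Algebra.commutes]
        _ = a • (h • x) := by rw [mul_smul, algebraMap_smul]
    -- names for the standard bases
    set tM1 : ({w : W // w ∈ Subgroup.closure (cs.simple '' J₁) ∧
          ∀ v ∈ Subgroup.closure (cs.simple '' J₂), cs.length w ≤ cs.length (w * v)} × Γ)
          → M1 :=
      (fun p => (⟨Tb p.1.1, hTmem _ p.1.2.1⟩ : HJ1) • unit1 (Γb p.2)) with htM1
    set tstd : ({w : W // ∀ v ∈ Subgroup.closure (cs.simple '' J₂),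
          cs.length w ≤ cs.length (w * v)} × Γ) → tE :=
      (fun p => Tb p.1.1 • unit (Γb p.2)) with htstd
    set t2 : ({w : W // ∀ v ∈ Subgroup.closure (cs.simple '' J₁),
          cs.length w ≤ cs.length (w * v)} ×
        ({w : W // w ∈ Subgroup.closure (cs.simple '' J₁) ∧
          ∀ v ∈ Subgroup.closure (cs.simple '' J₂),
            cs.length w ≤ cs.length (w * v)} × Γ)) → tE :=
      (fun q => Tb q.1.1 • η (c1 (q.2.1, q.2.2))) with ht2
    -- the key identity
    have hTv : ∀ q, Tb q.1.1 • η (tM1 q.2) = tstd (f q) := by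
      intro q
      rw [htM1, hη_equiv]
      simp only
      rw [hη_unit, smul_smul]
      have hadd := (CoxProof.partA1 cs J₁ J₂ hJ q.1.1 q.1.2 q.2.1.1 q.2.1.2.1 q.2.1.2.2).2
      rw [← hTmul _ _ hadd]
    -- pushing the M1-lattice into the tE-lattice
    have hmap : ∀ (w1 : {w : W // ∀ v ∈ Subgroup.closure (cs.simple '' J₁),
          cs.length w ≤ cs.length (w * v)}) (x : M1), x ∈ uinvLattice tM1 →
        Tb w1.1 • η x ∈ uinvLattice tstd := by
      intro w1 x hx
      let ψ : M1 →+ tE :=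
        { toFun := fun y => Tb w1.1 • η y
          map_zero' := by simp
          map_add' := fun y z => by
            show Tb w1.1 • η (y + z) = Tb w1.1 • η y + Tb w1.1 • η z
            rw [map_add, smul_add] }
      change ψ x ∈ uinvLattice tstd
      refine Submodule.span_induction ?_ ?_ ?_ ?_ hx
      · rintro y ⟨k, p, rfl⟩
        have : ψ ((T (-(k : ℤ) - 1) : A) • tM1 p) = (T (-(k : ℤ) - 1) : A) • tstd (f (w1, p)) := by
          show Tb w1.1 • η ((T (-(k : ℤ) - 1) : A) • tM1 p) = _
          rw [map_smul, hsmulcomm, hTv (w1, p)]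
        rw [this]
        exact Submodule.subset_span ⟨k, f (w1, p), rfl⟩
      · rw [map_zero]; exact Submodule.zero_mem _
      · intro y z _ _ hy hz
        rw [map_add]; exact Submodule.add_mem _ hy hz
      · intro n y _ hy
        rw [map_zsmul]; exact Submodule.smul_mem _ n hy
    -- the tE-lattice is stable under multiplication by u⁻ᵏ⁻¹
    have hsmulL : ∀ (k : ℕ) (y : tE), y ∈ uinvLattice tstd →
        (T (-(k : ℤ) - 1) : A) • y ∈ uinvLattice tstd := by
      intro k y hy
      let χ : tE →+ tE :=
        { toFun := fun z => (T (-(k : ℤ) - 1) : A) • z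
          map_zero' := smul_zero _
          map_add' := fun a b => smul_add _ a b }
      change χ y ∈ uinvLattice tstd
      refine Submodule.span_induction ?_ ?_ ?_ ?_ hy
      · rintro z ⟨m, i, rfl⟩
        have : χ ((T (-(m : ℤ) - 1) : A) • tstd i)
            = (T (-((k + m + 1 : ℕ) : ℤ) - 1) : A) • tstd i := by
          show (T (-(k : ℤ) - 1) : A) • ((T (-(m : ℤ) - 1) : A) • tstd i) = _
          rw [smul_smul, ← T_add]
          congr 2
          push_cast
          ring
        rw [this]
        exact Submodule.subset_span ⟨k + m + 1, i, rfl⟩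
      · rw [map_zero]; exact Submodule.zero_mem _
      · intro a b _ _ ha hb
        rw [map_add]; exact Submodule.add_mem _ ha hb
      · intro n a _ ha
        rw [map_zsmul]; exact Submodule.smul_mem _ n ha
    -- the second standard basis is congruent to the first one
    have ht2d : ∀ q, t2 q - tstd (f q) ∈ uinvLattice tstd := by
      intro q
      have h1 := hc1.congruent (q.2.1, q.2.2)
      have h2 := hmap q.1 _ h1
      have h3 : Tb q.1.1 • η (c1 (q.2.1, q.2.2) - tM1 (q.2.1, q.2.2))
          = t2 q - tstd (f q) := by
        rw [map_sub, smul_sub, ht2]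
        congr 1
        have : tM1 (q.2.1, q.2.2) = tM1 q.2 := rfl
        rw [this, hTv q]
      rwa [h3] at h2
    have hsub2 : uinvLattice t2 ≤ uinvLattice tstd := by
      rw [uinvLattice, Submodule.span_le]
      rintro y ⟨k, q, rfl⟩
      have hy : (T (-(k : ℤ) - 1) : A) • t2 q
          = (T (-(k : ℤ) - 1) : A) • tstd (f q)
            + (T (-(k : ℤ) - 1) : A) • (t2 q - tstd (f q)) := by
        rw [← smul_add]
        congr 1
        abel
      rw [SetLike.mem_coe, hy]
      refine Submodule.add_mem _ ?_ ?_
      · exact Submodule.subset_span ⟨k, f q, rfl⟩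
      · exact hsmulL k _ (ht2d q)
    -- transport the second IC basis along `f` and use uniqueness
    set d : ({w : W // ∀ v ∈ Subgroup.closure (cs.simple '' J₂),
          cs.length w ≤ cs.length (w * v)} × Γ) → tE :=
      (fun i => c2 (e.symm i)) with hd
    have hdbar : ∀ i, barT (d i) = d i := fun i => hc2.bar_invariant _
    have hdcong : ∀ i, d i - tstd i ∈ uinvLattice tstd := by
      intro i
      have hi : f (e.symm i) = i := e.apply_symm_apply i
      have h1 := hc2.congruent (e.symm i)
      have h2 := ht2d (e.symm i)
      have h3 : d i - tstd i = (c2 (e.symm i) - t2 (e.symm i))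
          + (t2 (e.symm i) - tstd (f (e.symm i))) := by
        rw [hd, hi]
        abel
      rw [h3]
      exact Submodule.add_mem _ (hsub2 h1) h2
    have hdc : d = c := hc.unique d hdbar hdcong
    have hfc2 : ∀ q, c2 q = c (f q) := by
      intro q
      have h1 : d (f q) = c (f q) := congrFun hdc (f q)
      rw [hd] at h1
      simp only at h1
      rw [show e.symm (f q) = q from e.symm_apply_apply q] at h1
      exact h1
    constructor
    · have hcomp : c2 = c ∘ f := funext hfc2
      rw [hcomp]
      exact Function.Surjective.range_comp hbij.2 c
    · intro q hq
      rw [hfc2 q]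


end
end

section
/- Let W = S_n, J = J_{n−1} = {s₁,…,s_{n−2}}, and b_k = s_k s_{k+1} ⋯ s_{n−1} for k ∈ {1,…,n−1}, b_n = 1 (the minimal left coset representatives of W_J). Let Γ be a W_J-graph and γ ∈ Γ with K := {s_k, …, s_{n−2}} ⊆ L(γ). Then the canonical basis element C̃′_{b_k,γ} of H ⊗_{H_J} AΓ satisfies C̃′_{b_k,γ} = (1/[n−k]!)· C′_{b_k · w₀(K)} ⊠ γ = (T_{b_k} + u⁻¹ T_{b_{k+1}} + ⋯ + u^{k−n} T_{b_n}) ⊠ γ, where w₀(K) is the longest element of W_K, [m] = (u^m − u^{−m})/(u − u⁻¹), and [m]! = [1][2]⋯[m]. -/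
/-!
# Statement 6 (Proposition: explicit canonical basis elements `C̃′_{b_k,γ}`)

`W = S_n` (`n = m+1`) with simple reflections `s₁, …, s_{n−1}` (indexed here by `Fin m`,
the index `i` corresponding to `s_{i+1}`), `J = J_{n−1} = {s₁,…,s_{n−2}}`, and
`b_k = s_k s_{k+1} ⋯ s_{n−1}` for `k ∈ [n−1]`, `b_n = 1` — the minimal left coset
representatives of `W_J`.  `H` is the Hecke algebra of `W` over `A = ℤ[u,u⁻¹]`, with
standard basis `{T_w}`, Kazhdan–Lusztig basis `{C′_w}`, and bar involution.  `Γ` is a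
`W_J`-graph with descent sets `L(γ)` and the induced module `H ⊗_{H_J} AΓ` carries the
standard basis `T_w ⊠ γ` (`w ∈ W^J`) and the Howlett–Yin canonical basis `{C̃′_{w,γ}}`.

**Statement.** If `K := {s_k, …, s_{n−2}} ⊆ L(γ)` then
`C̃′_{b_k,γ} = (1/[n−k]!) C′_{b_k ⋅ w₀(K)} ⊠ γ = (T_{b_k} + u⁻¹ T_{b_{k+1}} + ⋯ + u^{k−n} T_{b_n}) ⊠ γ`,
where `w₀(K)` is the longest element of `W_K`, `[j] = (u^j − u^{−j})/(u − u⁻¹)` and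
`[j]! = [1]⋯[j]`.  (The first equality is stated denominator-free, as
`[n−k]! • C̃′_{b_k,γ} = C′_{b_k ⋅ w₀(K)} ⊠ γ`.)
-/

noncomputable section
open LaurentPolynomial
open scoped Classical

/-- `[2] = u + u⁻¹`. -/
def qtwo : A := T 1 + T (-1)

/-- The quantum integer `[j] = u^{j−1} + u^{j−3} + ⋯ + u^{1−j} ∈ A`. -/
def qint (j : ℕ) : A := ∑ i ∈ Finset.range j, T ((j : ℤ) - 1 - 2 * i)

/-- The quantum factorial `[j]! = [1][2]⋯[j]`. -/
def qfact (j : ℕ) : A := ∏ i ∈ Finset.Icc 1 j, qint i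

/-- `c` is the IC/canonical basis for the standard basis `t` and involution `bar`. -/
structure IsCanonicalBasis {I E : Type*} [AddCommGroup E] [Module A E]
    (bar : E → E) (t : I → E) (c : I → E) : Prop where
  bar_invariant : ∀ i, bar (c i) = c i
  congruent : ∀ i, c i - t i ∈ uinvLattice t
  unique : ∀ d : I → E, (∀ i, bar (d i) = d i) → (∀ i, d i - t i ∈ uinvLattice t) → d = c

/-- `S_n` for `n = m+1`. -/
abbrev SymGrp (m : ℕ) := Equiv.Perm (Fin (m + 1))

/-- The simple reflection with index `i : Fin m` (the paper's `s_{i+1}`): the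
transposition of `i, i+1`. -/
def sg (m : ℕ) (i : Fin m) : SymGrp m := Equiv.swap i.castSucc i.succ

/-- The paper's `s_j` (`1 ≤ j ≤ n−1 = m`), with junk value `1` out of range. -/
def sgN (m : ℕ) (j : ℕ) : SymGrp m := if h : 1 ≤ j ∧ j ≤ m then sg m ⟨j - 1, by omega⟩ else 1

/-- The Coxeter length of `w ∈ S_n`: its number of inversions. -/
def len {m : ℕ} (w : SymGrp m) : ℕ :=
  (Finset.univ.filter fun p : Fin (m + 1) × Fin (m + 1) => p.1 < p.2 ∧ w p.2 < w p.1).card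

/-- The parabolic subgroup `W_K` generated by the simple reflections indexed by `K`. -/
def parab (m : ℕ) (K : Set (Fin m)) : Subgroup (SymGrp m) := Subgroup.closure (sg m '' K)

/-- `w` is the minimal-length representative of its left coset `w W_K` (i.e. `w ∈ W^K`). -/
def IsMinLeft {m : ℕ} (K : Set (Fin m)) (w : SymGrp m) : Prop :=
  ∀ v ∈ parab m K, len w ≤ len (w * v)

/-- `b_k = s_k s_{k+1} ⋯ s_{n−1}` (1-indexed `k ∈ [n]`; `b_n = 1`). -/
def bElt (m : ℕ) (k : ℕ) : SymGrp m := ((List.range' k (m + 1 - k)).map (sgN m)).prod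

/-- The `W_K`-graph operator `C_{s_i}` on `E = AΓ`, given by the `W`-graph formula. -/
def graphOp {m : ℕ} {Γ E : Type*} [AddCommGroup E] [Module A E] (Γb : Module.Basis Γ A E)
    (Lset : Γ → Set (Fin m)) (mu : Γ → Γ → ℤ) (i : Fin m) : E →ₗ[A] E :=
  Γb.constr ℕ fun γ =>
    if i ∈ Lset γ then qtwo • Γb γ
    else ∑ᶠ δ ∈ {δ : Γ | i ∈ Lset δ}, mu δ γ • Γb δ


namespace Work
section

variable {m : ℕ}

def Inv {m : ℕ} (w : SymGrp m) : Finset (Fin (m+1) × Fin (m+1)) :=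
  Finset.univ.filter fun p => p.1 < p.2 ∧ w p.2 < w p.1

lemma len_def (w : SymGrp m) : len w = (Inv w).card := rfl

lemma mem_Inv {w : SymGrp m} {p : Fin (m+1) × Fin (m+1)} :
    p ∈ Inv w ↔ p.1 < p.2 ∧ w p.2 < w p.1 := by
  simp [Inv]

lemma sg_val (i : Fin m) (z : Fin (m+1)) :
    ((sg m i z : Fin (m+1)) : ℕ) =
      if (z:ℕ) = (i:ℕ) then (i:ℕ)+1 else if (z:ℕ) = (i:ℕ)+1 then (i:ℕ) else z := by
  unfold sg
  rw [Equiv.swap_apply_def]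
  split_ifs with h1 h2 h3 h4 h5 <;>
    simp_all [Fin.ext_iff] <;> omega

lemma sg_lt_sg_iff (i : Fin m) (x y : Fin (m+1)) :
    sg m i x < sg m i y ↔
      ((x:ℕ) = (i:ℕ)+1 ∧ (y:ℕ) = (i:ℕ)) ∨
        (x < y ∧ ¬((x:ℕ) = (i:ℕ) ∧ (y:ℕ) = (i:ℕ)+1)) := by
  simp only [Fin.lt_def, sg_val]
  split_ifs <;> omega

lemma len_inv_eq (w : SymGrp m) : len w⁻¹ = len w := by
  rw [len_def, len_def]
  apply Finset.card_nbij' (fun p => (w⁻¹ p.2, w⁻¹ p.1)) (fun p => (w p.2, w p.1))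
  · intro p hp
    rw [Finset.mem_coe, mem_Inv] at hp ⊢
    simpa using hp.symm
  · intro p hp
    rw [Finset.mem_coe, mem_Inv] at hp ⊢
    constructor
    · exact hp.2
    · simpa using hp.1
  · intro p hp; simp
  · intro p hp; simp

lemma val_castSucc (i : Fin m) : ((i.castSucc : Fin (m+1)) : ℕ) = i := rfl
lemma val_succ (i : Fin m) : ((i.succ : Fin (m+1)) : ℕ) = i + 1 := rfl

lemma apply_eq_iff (w : SymGrp m) (q x : Fin (m+1)) : w q = x ↔ q = w⁻¹ x := by
  constructor
  · rintro rfl; simp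
  · rintro rfl; simp

lemma Inv_sg_mul_asc (i : Fin m) (w : SymGrp m) (h : w⁻¹ i.castSucc < w⁻¹ i.succ) :
    Inv (sg m i * w) = insert (w⁻¹ i.castSucc, w⁻¹ i.succ) (Inv w) := by
  ext ⟨p, q⟩
  simp only [mem_Inv, Finset.mem_insert, Prod.mk.injEq, Equiv.Perm.mul_apply]
  rw [sg_lt_sg_iff]
  have e1 : ((w q : Fin (m+1)) : ℕ) = (i:ℕ) + 1 ↔ q = w⁻¹ i.succ := by
    rw [← apply_eq_iff, Fin.ext_iff, val_succ]
  have e2 : ((w q : Fin (m+1)) : ℕ) = (i:ℕ) ↔ q = w⁻¹ i.castSucc := by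
    rw [← apply_eq_iff, Fin.ext_iff, val_castSucc]
  have e3 : ((w p : Fin (m+1)) : ℕ) = (i:ℕ) + 1 ↔ p = w⁻¹ i.succ := by
    rw [← apply_eq_iff, Fin.ext_iff, val_succ]
  have e4 : ((w p : Fin (m+1)) : ℕ) = (i:ℕ) ↔ p = w⁻¹ i.castSucc := by
    rw [← apply_eq_iff, Fin.ext_iff, val_castSucc]
  rw [e1, e2, e3, e4]
  constructor
  · rintro ⟨hpq, (⟨h1, h2⟩ | ⟨h1, h2⟩)⟩
    · exact Or.inl ⟨h2, h1⟩
    · exact Or.inr ⟨hpq, h1⟩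
  · rintro (⟨rfl, rfl⟩ | ⟨hpq, hinv⟩)
    · refine ⟨h, Or.inl ⟨rfl, rfl⟩⟩
    · refine ⟨hpq, Or.inr ⟨hinv, ?_⟩⟩
      rintro ⟨rfl, rfl⟩
      exact absurd h (not_lt.2 hpq.le)

lemma not_mem_Inv_asc (i : Fin m) (w : SymGrp m) :
    (w⁻¹ i.castSucc, w⁻¹ i.succ) ∉ Inv w := by
  rw [mem_Inv]
  rintro ⟨-, h2⟩
  simp only [Equiv.Perm.coe_inv, Equiv.apply_symm_apply] at h2
  exact absurd h2 (not_lt.2 (Fin.castSucc_lt_succ (i := i)).le)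

lemma len_sg_mul_asc (i : Fin m) (w : SymGrp m) (h : w⁻¹ i.castSucc < w⁻¹ i.succ) :
    len (sg m i * w) = len w + 1 := by
  rw [len_def, len_def, Inv_sg_mul_asc i w h,
    Finset.card_insert_of_notMem (not_mem_Inv_asc i w)]

lemma sg_mul_sg (i : Fin m) : sg m i * sg m i = 1 := by
  unfold sg
  exact Equiv.swap_mul_self _ _

lemma sg_inv (i : Fin m) : (sg m i)⁻¹ = sg m i := by
  unfold sg; exact Equiv.swap_inv _ _

lemma sg_mul_sg_mul (i : Fin m) (w : SymGrp m) : sg m i * (sg m i * w) = w := by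
  rw [← mul_assoc, sg_mul_sg, one_mul]

lemma sg_castSucc (i : Fin m) : sg m i i.castSucc = i.succ := Equiv.swap_apply_left _ _
lemma sg_succ (i : Fin m) : sg m i i.succ = i.castSucc := Equiv.swap_apply_right _ _

lemma inv_sg_mul_castSucc (i : Fin m) (w : SymGrp m) :
    (sg m i * w)⁻¹ i.castSucc = w⁻¹ i.succ := by
  rw [mul_inv_rev, sg_inv, Equiv.Perm.mul_apply, sg_castSucc]

lemma inv_sg_mul_succ (i : Fin m) (w : SymGrp m) :
    (sg m i * w)⁻¹ i.succ = w⁻¹ i.castSucc := by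
  rw [mul_inv_rev, sg_inv, Equiv.Perm.mul_apply, sg_succ]

lemma len_sg_mul_desc (i : Fin m) (w : SymGrp m) (h : w⁻¹ i.succ < w⁻¹ i.castSucc) :
    len w = len (sg m i * w) + 1 := by
  have := len_sg_mul_asc i (sg m i * w) (by
    rw [inv_sg_mul_castSucc, inv_sg_mul_succ]; exact h)
  rw [sg_mul_sg_mul] at this
  omega

lemma len_one : len (1 : SymGrp m) = 0 := by
  rw [len_def]
  rw [Finset.card_eq_zero]
  ext ⟨p, q⟩
  simp only [mem_Inv, Finset.notMem_empty, iff_false, not_and, Equiv.Perm.one_apply]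
  intro h; exact not_lt.2 h.le

lemma len_sg (i : Fin m) : len (sg m i) = 1 := by
  have := len_sg_mul_asc i 1 (by simp [Fin.castSucc_lt_succ])
  simpa [len_one] using this


end

section

variable {m : ℕ}

/-- permutations fixing everything outside positions `[a,b]`. -/
def FixOut (m a b : ℕ) : Finset (SymGrp m) :=
  Finset.univ.filter fun w => ∀ p : Fin (m+1), ((p:ℕ) < a ∨ b < (p:ℕ)) → w p = p

lemma mem_FixOut {a b : ℕ} {w : SymGrp m} :
    w ∈ FixOut m a b ↔ ∀ p : Fin (m+1), ((p:ℕ) < a ∨ b < (p:ℕ)) → w p = p := by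
  simp [FixOut]

lemma one_mem_FixOut {a b : ℕ} : (1 : SymGrp m) ∈ FixOut m a b := by
  rw [mem_FixOut]; intro p _; rfl

lemma mul_mem_FixOut {a b : ℕ} {v w : SymGrp m}
    (hv : v ∈ FixOut m a b) (hw : w ∈ FixOut m a b) : v * w ∈ FixOut m a b := by
  rw [mem_FixOut] at hv hw ⊢
  intro p hp
  rw [Equiv.Perm.mul_apply, hw p hp, hv p hp]

lemma inv_fix {w : SymGrp m} {x : Fin (m+1)} (h : w x = x) : w⁻¹ x = x := by
  conv_lhs => rw [← h]
  simp

lemma inv_mem_FixOut {a b : ℕ} {w : SymGrp m} (hw : w ∈ FixOut m a b) :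
    w⁻¹ ∈ FixOut m a b := by
  rw [mem_FixOut] at hw ⊢
  intro p hp
  exact inv_fix (hw p hp)

lemma FixOut_mono_left {a a' b : ℕ} (h : a ≤ a') : FixOut m a' b ⊆ FixOut m a b := by
  intro w hw
  rw [mem_FixOut] at hw ⊢
  intro p hp
  exact hw p (by omega)

lemma FixOut_mono_right {a b b' : ℕ} (h : b ≤ b') : FixOut m a b ⊆ FixOut m a b' := by
  intro w hw
  rw [mem_FixOut] at hw ⊢
  intro p hp
  exact hw p (by omega)

lemma FixOut_block_map {a b : ℕ} {w : SymGrp m} (hw : w ∈ FixOut m a b)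
    {p : Fin (m+1)} (h1 : a ≤ (p:ℕ)) (h2 : (p:ℕ) ≤ b) :
    a ≤ ((w p : Fin (m+1)) : ℕ) ∧ ((w p : Fin (m+1)) : ℕ) ≤ b := by
  rw [mem_FixOut] at hw
  by_cases hout : ((w p : Fin (m+1)) : ℕ) < a ∨ b < ((w p : Fin (m+1)) : ℕ)
  · have := hw _ hout
    have heq : w p = p := w.injective this
    rw [heq] at hout
    omega
  · omega

lemma FixOut_eq_one_of_le {a b : ℕ} {w : SymGrp m} (hba : b ≤ a) (hw : w ∈ FixOut m a b) :
    w = 1 := by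
  rw [mem_FixOut] at hw
  ext p
  simp only [Equiv.Perm.coe_one, id_eq]
  by_cases hp : (p:ℕ) < a ∨ b < (p:ℕ)
  · exact congrArg _ (hw p hp)
  · -- a ≤ p ≤ b ≤ a so p = a = b
    by_contra hne
    have hne' : w p ≠ p := fun hh => hne (congrArg Fin.val hh)
    have hout : ((w p : Fin (m+1)) : ℕ) < a ∨ b < ((w p : Fin (m+1)) : ℕ) := by
      by_contra hout
      push_neg at hout
      have : (w p : Fin (m+1)) = p := Fin.ext (by omega)
      exact hne' this
    have := hw _ hout
    exact hne' (w.injective this)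

/-- consecutive-increasing permutations are the identity -/
lemma strictmono_of_consec (f : SymGrp m) (h : ∀ i : Fin m, f i.castSucc < f i.succ) :
    ∀ p q : Fin (m+1), p < q → f p < f q := by
  suffices H : ∀ d (p q : Fin (m+1)), (q:ℕ) = (p:ℕ) + d + 1 → f p < f q by
    intro p q hpq
    exact H ((q:ℕ) - (p:ℕ) - 1) p q (by omega)
  intro d
  induction d with
  | zero =>
    intro p q hq
    have hpm : (p:ℕ) < m := by have := q.isLt; omega
    have h1 : (⟨(p:ℕ), hpm⟩ : Fin m).castSucc = p := by
      apply Fin.ext; simp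
    have h2 : (⟨(p:ℕ), hpm⟩ : Fin m).succ = q := by
      apply Fin.ext; simp [hq]
    have := h ⟨(p:ℕ), hpm⟩
    rwa [h1, h2] at this
  | succ d ih =>
    intro p q hq
    have hq' : (p:ℕ) + d + 1 < m + 1 := by have := q.isLt; omega
    set q' : Fin (m+1) := ⟨(p:ℕ) + d + 1, hq'⟩ with hq'def
    have step1 : f p < f q' := ih p q' rfl
    have hq'm : ((q' : Fin (m+1)):ℕ) < m := by have := q.isLt; simp [hq'def]; omega
    have h1 : (⟨(q':ℕ), hq'm⟩ : Fin m).castSucc = q' := by apply Fin.ext; simp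
    have h2 : (⟨(q':ℕ), hq'm⟩ : Fin m).succ = q := by apply Fin.ext; simp [hq'def, hq]; omega
    have step2 : f q' < f q := by
      have := h ⟨(q':ℕ), hq'm⟩
      rwa [h1, h2] at this
    exact lt_trans step1 step2

lemma le_apply_of_consec (f : SymGrp m) (h : ∀ i : Fin m, f i.castSucc < f i.succ)
    (p : Fin (m+1)) : (p:ℕ) ≤ ((f p : Fin (m+1)) : ℕ) := by
  suffices H : ∀ t (p : Fin (m+1)), (p:ℕ) = t → t ≤ ((f p : Fin (m+1)) : ℕ) by
    exact H (p:ℕ) p rfl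
  intro t
  induction t with
  | zero => intro p _; omega
  | succ t ih =>
    intro p hp
    have hpm : t < m + 1 := by omega
    set p' : Fin (m+1) := ⟨t, hpm⟩
    have hlt : p' < p := by simp [Fin.lt_def, p', hp]
    have := strictmono_of_consec f h p' p hlt
    have h2 := ih p' rfl
    rw [Fin.lt_def] at this
    omega

lemma eq_one_of_consec (f : SymGrp m) (h : ∀ i : Fin m, f i.castSucc < f i.succ) :
    f = 1 := by
  have hinvc : ∀ i : Fin m, f⁻¹ i.castSucc < f⁻¹ i.succ := by
    intro i
    rcases lt_trichotomy (f⁻¹ i.castSucc) (f⁻¹ i.succ) with h1 | h1 | h1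
    · exact h1
    · exact absurd (f⁻¹.injective h1)
        (by intro hh; exact absurd (congrArg Fin.val hh) (by simp))
    · have := strictmono_of_consec f h _ _ h1
      simp only [Equiv.Perm.coe_inv, Equiv.apply_symm_apply] at this
      exact absurd this (by
        rw [not_lt, Fin.le_def]
        simp)
  ext p
  have h1 := le_apply_of_consec f⁻¹ hinvc (f p)
  simp only [Equiv.Perm.coe_inv, Equiv.symm_apply_apply] at h1
  have h2 := le_apply_of_consec f h p
  simp only [Equiv.Perm.coe_one, id_eq]
  omega

lemma fixout_eq_one {a b : ℕ} (hb : b ≤ m) {w : SymGrp m} (hw : w ∈ FixOut m a b)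
    (h : ∀ i : Fin m, a ≤ (i:ℕ) → (i:ℕ)+1 ≤ b → w i.castSucc < w i.succ) : w = 1 := by
  apply eq_one_of_consec
  intro i
  have hcv : ((i.castSucc : Fin (m+1)) : ℕ) = (i:ℕ) := rfl
  have hsv : ((i.succ : Fin (m+1)) : ℕ) = (i:ℕ)+1 := rfl
  rw [mem_FixOut] at hw
  by_cases hblock : a ≤ (i:ℕ) ∧ (i:ℕ)+1 ≤ b
  · exact h i hblock.1 hblock.2
  · rw [Fin.lt_def]
    by_cases hc : (i:ℕ) < a ∨ b < (i:ℕ)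
    · -- castSucc is fixed
      rw [hw i.castSucc (by omega)]
      by_cases hs : (i:ℕ)+1 < a ∨ b < (i:ℕ)+1
      · rw [hw i.succ (by omega)]; simp
      · push_neg at hs
        have := FixOut_block_map (mem_FixOut.mpr hw) (p := i.succ) (by omega) (by omega)
        omega
    · -- i in block, i+1 > b (since ¬hblock)
      push_neg at hc
      have hs : b < (i:ℕ)+1 := by omega
      rw [hw i.succ (by omega)]
      have := FixOut_block_map (mem_FixOut.mpr hw) (p := i.castSucc) (by omega) (by omega)
      omega


end

section

variable {m : ℕ}

def revAux (m a b : ℕ) : Fin (m+1) → Fin (m+1) := fun p =>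
  if h : a ≤ (p:ℕ) ∧ (p:ℕ) ≤ b ∧ b ≤ m then ⟨a + b - p, by omega⟩ else p

lemma revAux_invol (m a b : ℕ) : Function.Involutive (revAux m a b) := by
  intro p
  unfold revAux
  split_ifs with h1 h2
  · apply Fin.ext; simp; omega
  · exfalso; simp at h2; omega
  · rfl

def blockRev (m a b : ℕ) : SymGrp m := Function.Involutive.toPerm _ (revAux_invol m a b)

lemma blockRev_apply {a b : ℕ} (hb : b ≤ m) (p : Fin (m+1)) :
    ((blockRev m a b p : Fin (m+1)) : ℕ) =
      if a ≤ (p:ℕ) ∧ (p:ℕ) ≤ b then a + b - (p:ℕ) else (p:ℕ) := by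
  show ((revAux m a b p : Fin (m+1)) : ℕ) = _
  unfold revAux
  split_ifs with h1 h2 h3 <;> simp_all <;> omega

lemma blockRev_mul_self (a b : ℕ) : blockRev m a b * blockRev m a b = 1 := by
  ext p
  simp only [Equiv.Perm.mul_apply, Equiv.Perm.coe_one, id_eq]
  exact congrArg Fin.val (revAux_invol m a b p)

lemma blockRev_inv (a b : ℕ) : (blockRev m a b)⁻¹ = blockRev m a b := by
  rw [inv_eq_iff_mul_eq_one]
  exact blockRev_mul_self a b

lemma blockRev_mem_FixOut {a b : ℕ} (hb : b ≤ m) : blockRev m a b ∈ FixOut m a b := by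
  rw [mem_FixOut]
  intro p hp
  apply Fin.ext
  rw [blockRev_apply hb]
  split_ifs with h
  · omega
  · rfl

lemma blockRev_eq_one {a b : ℕ} (h : b ≤ a) : blockRev m a b = 1 := by
  ext p
  simp only [Equiv.Perm.coe_one, id_eq]
  apply congrArg Fin.val
  show revAux m a b p = p
  unfold revAux
  split_ifs with h1
  · apply Fin.ext; simp; omega
  · rfl

lemma sgN_eq {a : ℕ} (h1 : 1 ≤ a) (h2 : a ≤ m) :
    sgN m a = sg m ⟨a - 1, by omega⟩ := dif_pos ⟨h1, h2⟩

def gammaP (m a b : ℕ) : SymGrp m := ((List.range' (a+1) (b - a)).map (sgN m)).prod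

lemma gammaP_eq_one {a b : ℕ} (h : b ≤ a) : gammaP m a b = 1 := by
  unfold gammaP
  have : b - a = 0 := by omega
  rw [this]
  simp

lemma gammaP_cons {a b : ℕ} (hab : a < b) :
    gammaP m a b = sgN m (a+1) * gammaP m (a+1) b := by
  unfold gammaP
  have h1 : b - a = (b - (a+1)) + 1 := by omega
  rw [h1, List.range'_succ]
  simp

lemma gammaP_val (a b : ℕ) (hb : b ≤ m) (p : Fin (m+1)) :
    ((gammaP m a b p : Fin (m+1)) : ℕ) =
      if (p:ℕ) < a ∨ b < (p:ℕ) then (p:ℕ) else if (p:ℕ) = b then a else (p:ℕ)+1 := by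
  suffices H : ∀ d a, b - a = d → ∀ p : Fin (m+1),
      ((gammaP m a b p : Fin (m+1)) : ℕ) =
        if (p:ℕ) < a ∨ b < (p:ℕ) then (p:ℕ) else if (p:ℕ) = b then a else (p:ℕ)+1 by
    exact H (b - a) a rfl p
  intro d
  induction d with
  | zero =>
    intro a ha p
    rw [gammaP_eq_one (by omega)]
    have := p.isLt
    simp only [Equiv.Perm.one_apply]
    split_ifs <;> omega
  | succ d ih =>
    intro a ha p
    have hab : a < b := by omega
    rw [gammaP_cons hab, Equiv.Perm.mul_apply, sgN_eq (by omega) (by omega)]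
    have hstep := ih (a+1) (by omega) p
    rw [sg_val]
    simp only [add_tsub_cancel_right]
    rw [hstep]
    have := p.isLt
    split_ifs <;> omega

lemma gammaP_mem_FixOut {a b : ℕ} (hb : b ≤ m) : gammaP m a b ∈ FixOut m a b := by
  rw [mem_FixOut]
  intro p hp
  apply Fin.ext
  rw [gammaP_val a b hb]
  rw [if_pos hp]

lemma exists_desc {a b : ℕ} (hb : b ≤ m) {w : SymGrp m} (hw : w ∈ FixOut m a b)
    (hne : w ≠ 1) :
    ∃ i : Fin m, a ≤ (i:ℕ) ∧ (i:ℕ)+1 ≤ b ∧ w⁻¹ i.succ < w⁻¹ i.castSucc := by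
  by_contra hcon
  push_neg at hcon
  apply hne
  have hkey : w⁻¹ = 1 := by
    apply fixout_eq_one hb (inv_mem_FixOut hw)
    intro i hi1 hi2
    have h1 := hcon i hi1 hi2
    rcases lt_or_eq_of_le h1 with h2 | h2
    · exact h2
    · exfalso
      have := w⁻¹.injective h2
      exact absurd (congrArg Fin.val this) (by simp)
  rw [← inv_inv w, hkey, inv_one]

lemma exists_asc {a b : ℕ} (hb : b ≤ m) {w : SymGrp m} (hw : w ∈ FixOut m a b)
    (hne : w ≠ blockRev m a b) :
    ∃ i : Fin m, a ≤ (i:ℕ) ∧ (i:ℕ)+1 ≤ b ∧ w⁻¹ i.castSucc < w⁻¹ i.succ := by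
  by_contra hcon
  push_neg at hcon
  apply hne
  -- every block index is a descent of w⁻¹; show (blockRev) * w⁻¹ = 1
  have hdesc : ∀ i : Fin m, a ≤ (i:ℕ) → (i:ℕ)+1 ≤ b → w⁻¹ i.succ < w⁻¹ i.castSucc := by
    intro i hi1 hi2
    have h1 := hcon i hi1 hi2
    rcases lt_or_eq_of_le h1 with h2 | h2
    · exact h2
    · exfalso
      have := w⁻¹.injective h2.symm
      exact absurd (congrArg Fin.val this) (by simp)
  have hg : blockRev m a b * w⁻¹ ∈ FixOut m a b :=
    mul_mem_FixOut (blockRev_mem_FixOut hb) (inv_mem_FixOut hw)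
  have hgone : blockRev m a b * w⁻¹ = 1 := by
    apply fixout_eq_one hb hg
    intro i hi1 hi2
    simp only [Equiv.Perm.mul_apply]
    have hc1 := FixOut_block_map (inv_mem_FixOut hw) (p := i.castSucc)
      (by simpa using hi1) (by show (i:ℕ) ≤ b; omega)
    have hc2 := FixOut_block_map (inv_mem_FixOut hw) (p := i.succ)
      (by show a ≤ (i:ℕ)+1; omega) (by show (i:ℕ)+1 ≤ b; omega)
    have hlt := hdesc i hi1 hi2
    rw [Fin.lt_def] at hlt ⊢
    rw [blockRev_apply hb, blockRev_apply hb]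
    rw [if_pos ⟨hc1.1, hc1.2⟩, if_pos ⟨hc2.1, hc2.2⟩]
    omega
  have : blockRev m a b = w := by
    have h2 : blockRev m a b * w⁻¹ * w = w := by rw [hgone, one_mul]
    rw [mul_assoc, inv_mul_cancel, mul_one] at h2
    exact h2
  exact this.symm

lemma len_le_card (w : SymGrp m) : len w ≤ (m+1)*(m+1) := by
  rw [len_def]
  calc (Inv w).card ≤ (Finset.univ : Finset (Fin (m+1) × Fin (m+1))).card :=
        Finset.card_filter_le _ _
    _ = (m+1)*(m+1) := by simp [Finset.card_univ]

lemma sg_mem_FixOut {a b : ℕ} {i : Fin m} (h1 : a ≤ (i:ℕ)) (h2 : (i:ℕ)+1 ≤ b) :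
    sg m i ∈ FixOut m a b := by
  rw [mem_FixOut]
  intro p hp
  apply Fin.ext
  rw [sg_val]
  split_ifs <;> omega

lemma len_le_blockRev {a b : ℕ} (hb : b ≤ m) :
    ∀ w ∈ FixOut m a b, len w ≤ len (blockRev m a b) ∧
      (w ≠ blockRev m a b → len w < len (blockRev m a b)) := by
  suffices H : ∀ d, ∀ w ∈ FixOut m a b, (m+1)*(m+1) ≤ len w + d →
      len w ≤ len (blockRev m a b) ∧
        (w ≠ blockRev m a b → len w < len (blockRev m a b)) by
    intro w hw
    exact H ((m+1)*(m+1)) w hw (by omega)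
  intro d
  induction d with
  | zero =>
    intro w hw hle
    rcases eq_or_ne w (blockRev m a b) with rfl | hne
    · exact ⟨le_refl _, fun h => absurd rfl h⟩
    · exfalso
      obtain ⟨i, hi1, hi2, hasc⟩ := exists_asc hb hw hne
      have := len_sg_mul_asc i w hasc
      have := len_le_card (sg m i * w)
      omega
  | succ d ih =>
    intro w hw hle
    rcases eq_or_ne w (blockRev m a b) with rfl | hne
    · exact ⟨le_refl _, fun h => absurd rfl h⟩
    · obtain ⟨i, hi1, hi2, hasc⟩ := exists_asc hb hw hne
      have hlen := len_sg_mul_asc i w hasc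
      have hw' : sg m i * w ∈ FixOut m a b :=
        mul_mem_FixOut (sg_mem_FixOut hi1 hi2) hw
      have := (ih (sg m i * w) hw' (by omega)).1
      constructor
      · omega
      · intro _; omega

lemma len_gammaP_mul {a b : ℕ} (hb : b ≤ m) {v : SymGrp m} (hv : v ∈ FixOut m a (b-1)) :
    ∀ {j : ℕ}, a ≤ j → j ≤ b → len (gammaP m j b * v) = (b - j) + len v := by
  suffices H : ∀ d j, a ≤ j → j ≤ b → b - j = d →
      len (gammaP m j b * v) = d + len v by
    intro j h1 h2
    exact H (b - j) j h1 h2 rfl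
  intro d
  induction d with
  | zero =>
    intro j h1 h2 h3
    rw [gammaP_eq_one (by omega), one_mul]
    omega
  | succ d ih =>
    intro j h1 h2 h3
    have hjb : j < b := by omega
    have hjm : j < m := by omega
    rw [gammaP_cons hjb, sgN_eq (by omega) (by omega), mul_assoc]
    simp only [add_tsub_cancel_right]
    set i : Fin m := ⟨j, hjm⟩ with hidef
    set w' := gammaP m (j+1) b * v with hw'def
    have hic : ((i.castSucc : Fin (m+1)) : ℕ) = j := rfl
    have his : ((i.succ : Fin (m+1)) : ℕ) = j + 1 := rfl
    have hgfix : gammaP m (j+1) b i.castSucc = i.castSucc := by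
      apply Fin.ext
      rw [gammaP_val (j+1) b hb]
      rw [if_pos (by omega)]
    have hgtop : gammaP m (j+1) b ⟨b, by omega⟩ = i.succ := by
      apply Fin.ext
      rw [gammaP_val (j+1) b hb]
      simp only [his]
      split_ifs <;> omega
    have hwinv1 : w'⁻¹ i.castSucc = v⁻¹ i.castSucc := by
      rw [hw'def, mul_inv_rev, Equiv.Perm.mul_apply]
      rw [inv_fix hgfix]
    have hwinv2 : w'⁻¹ i.succ = ⟨b, by omega⟩ := by
      rw [hw'def, mul_inv_rev, Equiv.Perm.mul_apply]
      have : (gammaP m (j+1) b)⁻¹ i.succ = ⟨b, by omega⟩ := by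
        rw [← hgtop]; simp
      rw [this]
      apply inv_fix
      rw [mem_FixOut] at hv
      apply hv
      right
      show b - 1 < b
      omega
    have hasc : w'⁻¹ i.castSucc < w'⁻¹ i.succ := by
      rw [hwinv1, hwinv2, Fin.lt_def]
      show ((v⁻¹ i.castSucc : Fin (m+1)) : ℕ) < b
      by_cases hja : a ≤ j
      · have := FixOut_block_map (inv_mem_FixOut hv) (p := i.castSucc)
          (by rw [hic]; omega) (by rw [hic]; omega)
        omega
      · omega
    have := len_sg_mul_asc i w' hasc
    rw [this, ih (j+1) (by omega) (by omega) (by omega)]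
    omega

lemma blockRev_decomp {a b : ℕ} (hab : a ≤ b) (hb : b ≤ m) :
    blockRev m a b = gammaP m a b * blockRev m a (b-1) := by
  rcases eq_or_lt_of_le hab with rfl | hlt
  · rw [blockRev_eq_one (le_refl a), gammaP_eq_one (le_refl a),
      blockRev_eq_one (by omega), one_mul]
  · ext p
    rw [Equiv.Perm.mul_apply]
    have hinner := blockRev_apply (a := a) (b := b-1) (by omega) p
    rw [gammaP_val a b hb, hinner, blockRev_apply hb]
    have := p.isLt
    split_ifs <;> omega

lemma len_blockRev_decomp {a b : ℕ} (hab : a ≤ b) (hb : b ≤ m) :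
    len (blockRev m a b) = (b - a) + len (blockRev m a (b-1)) := by
  rw [blockRev_decomp hab hb]
  exact len_gammaP_mul hb (blockRev_mem_FixOut (by omega)) (le_refl a) hab

lemma sg_comm_FixOut {a b : ℕ} {i : Fin m} {w : SymGrp m} (hw : w ∈ FixOut m a b)
    (hi : (i:ℕ)+1 < a) : sg m i * w = w * sg m i := by
  have hmem := hw
  rw [mem_FixOut] at hmem
  ext p
  rw [Equiv.Perm.mul_apply, Equiv.Perm.mul_apply]
  by_cases hp : (p:ℕ) = (i:ℕ) ∨ (p:ℕ) = (i:ℕ)+1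
  · have hfixp : w p = p := hmem p (by omega)
    have hsgv : ((sg m i p : Fin (m+1)) : ℕ) = (i:ℕ) ∨
        ((sg m i p : Fin (m+1)) : ℕ) = (i:ℕ)+1 := by
      rw [sg_val]; split_ifs <;> omega
    have hfixsp : w (sg m i p) = sg m i p := hmem _ (by omega)
    rw [hfixp, hfixsp]
  · have hsp : sg m i p = p := by
      apply Fin.ext; rw [sg_val]; split_ifs <;> omega
    rw [hsp]
    have hwp : ((w p : Fin (m+1)) : ℕ) ≠ (i:ℕ) ∧ ((w p : Fin (m+1)) : ℕ) ≠ (i:ℕ)+1 := by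
      by_cases hpo : (p:ℕ) < a ∨ b < (p:ℕ)
      · rw [hmem p hpo]; omega
      · have := FixOut_block_map hw (p := p) (by omega) (by omega)
        omega
    have : sg m i (w p) = w p := by
      apply Fin.ext; rw [sg_val]
      split_ifs <;> omega
    rw [this]


end

section

variable {m : ℕ}

lemma FixOut_singleton {a b : ℕ} (h : b ≤ a) : FixOut m a b = {1} := by
  ext w
  simp only [Finset.mem_singleton]
  constructor
  · exact FixOut_eq_one_of_le h
  · rintro rfl; exact one_mem_FixOut

lemma bElt_eq_gammaP {j : ℕ} (hj : 1 ≤ j) : bElt m j = gammaP m (j-1) m := by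
  unfold bElt gammaP
  have h1 : j - 1 + 1 = j := by omega
  have h2 : m - (j-1) = m + 1 - j := by omega
  rw [h1, h2]

lemma bElt_top : bElt m (m+1) = 1 := by
  rw [bElt_eq_gammaP (by omega)]
  exact gammaP_eq_one (by omega)

lemma sum_FixOut_eq {M : Type*} [AddCommMonoid M] {a b : ℕ} (hab : a ≤ b) (hb1 : 1 ≤ b)
    (hb : b ≤ m) (φ : SymGrp m → M) :
    ∑ y ∈ FixOut m a b, φ y =
      ∑ j ∈ Finset.Icc a b, ∑ v ∈ FixOut m a (b-1), φ (gammaP m j b * v) := by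
  have hbfin : b < m + 1 := by omega
  set B : Fin (m+1) := ⟨b, hbfin⟩ with hBdef
  have hBval : (B : ℕ) = b := rfl
  rw [← Finset.sum_product']
  apply Finset.sum_nbij' (i := fun y => (((y B : Fin (m+1)) : ℕ), (gammaP m ((y B : Fin (m+1)) : ℕ) b)⁻¹ * y))
    (j := fun p => gammaP m p.1 b * p.2)
  · -- hi : maps into product
    intro y hy
    have hblock := FixOut_block_map hy (p := B) (by omega) (by omega)
    set j0 : ℕ := ((y B : Fin (m+1)) : ℕ) with hj0
    have hgtop : gammaP m j0 b B = y B := by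
      apply Fin.ext
      rw [gammaP_val j0 b hb]
      rw [hBval]
      split_ifs <;> omega
    rw [Finset.mem_product]
    constructor
    · simp only [Finset.mem_Icc]; omega
    · rw [mem_FixOut]
      intro p hp
      rw [mem_FixOut] at hy
      rcases hp with hp | hp
      · have h1 : y p = p := hy p (Or.inl hp)
        rw [Equiv.Perm.mul_apply, h1]
        apply inv_fix
        apply Fin.ext
        rw [gammaP_val j0 b hb, if_pos (Or.inl (by omega))]
      · -- b - 1 < p
        by_cases hpb : (p : ℕ) = b
        · have hpB : p = B := Fin.ext (by rw [hBval, hpb])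
          rw [hpB, Equiv.Perm.mul_apply, ← hgtop]
          simp
        · have h1 : y p = p := hy p (Or.inr (by omega))
          rw [Equiv.Perm.mul_apply, h1]
          apply inv_fix
          apply Fin.ext
          rw [gammaP_val j0 b hb, if_pos (Or.inr (by omega))]
  · -- hj : maps back
    rintro ⟨j, v⟩ hjv
    rw [Finset.mem_product, Finset.mem_Icc] at hjv
    obtain ⟨⟨hj1, hj2⟩, hv⟩ := hjv
    exact mul_mem_FixOut (FixOut_mono_left hj1 (gammaP_mem_FixOut hb))
      (FixOut_mono_right (by omega) hv)
  · -- left inverse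
    intro y hy
    simp only [Equiv.Perm.mul_apply]
    rw [← mul_assoc, mul_inv_cancel, one_mul]
  · -- right inverse
    rintro ⟨j, v⟩ hjv
    rw [Finset.mem_product, Finset.mem_Icc] at hjv
    obtain ⟨⟨hj1, hj2⟩, hv⟩ := hjv
    have hvB : v B = B := by
      rw [mem_FixOut] at hv
      apply hv
      right
      rw [hBval]
      omega
    have htopval : (((gammaP m j b * v) B : Fin (m+1)) : ℕ) = j := by
      rw [Equiv.Perm.mul_apply, hvB, gammaP_val j b hb, hBval]
      split_ifs <;> omega
    rw [Prod.mk.injEq]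
    constructor
    · exact htopval
    · rw [htopval, ← mul_assoc, inv_mul_cancel, one_mul]
  · -- value compatibility
    intro y hy
    have hblock := FixOut_block_map hy (p := B) (by omega) (by omega)
    have hgtop : gammaP m ((y B : Fin (m+1)) : ℕ) b B = y B := by
      apply Fin.ext
      rw [gammaP_val _ b hb, hBval]
      split_ifs <;> omega
    simp only []
    rw [← mul_assoc, mul_inv_cancel, one_mul]


end

section

variable {m : ℕ}

lemma Abar_T (n : ℤ) : Abar (T n) = T (-n) := by
  show (invert : LaurentPolynomial ℤ ≃ₐ[ℤ] LaurentPolynomial ℤ) (T n) = T (-n)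
  exact invert_T n

lemma qfact_zero : qfact 0 = 1 := by
  unfold qfact
  rw [Finset.Icc_eq_empty (by omega), Finset.prod_empty]

lemma qint_one : qint 1 = 1 := by
  unfold qint
  rw [Finset.sum_range_one]
  norm_num

lemma qfact_succ (s : ℕ) : qfact (s+1) = qfact s * qint (s+1) :=
  Finset.prod_Icc_succ_top (by omega) _

lemma sum_T_two (a b : ℕ) (hab : a ≤ b) :
    ∑ j ∈ Finset.Icc a b, (T (2*((b:ℤ) - j)) : A) = qint (b+1-a) * T ((b:ℤ) - a) := by
  unfold qint
  rw [Finset.sum_mul]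
  apply Finset.sum_nbij' (i := fun j => j - a) (j := fun i => a + i)
  · intro j hj
    rw [Finset.mem_Icc] at hj
    rw [Finset.mem_range]
    omega
  · intro i hi
    rw [Finset.mem_range] at hi
    rw [Finset.mem_Icc]
    omega
  · intro j hj
    rw [Finset.mem_Icc] at hj
    omega
  · intro i hi
    omega
  · intro j hj
    rw [Finset.mem_Icc] at hj
    rw [← T_add]
    congr 1
    have h1 : ((b + 1 - a : ℕ) : ℤ) = (b:ℤ) + 1 - a := by omega
    have h2 : ((j - a : ℕ) : ℤ) = (j:ℤ) - a := by omega
    rw [h1, h2]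
    ring

lemma QP {a : ℕ} : ∀ {b : ℕ}, b ≤ m → a ≤ b + 1 →
    ∑ v ∈ FixOut m a b, (T (2*(len v : ℤ)) : A) =
      qfact (b+1-a) * T ((len (blockRev m a b) : ℤ)) := by
  intro b
  induction b using Nat.strong_induction_on with
  | _ b ih =>
    intro hb hab
    by_cases hba : b ≤ a
    · rw [FixOut_singleton hba]
      rw [Finset.sum_singleton, len_one]
      rw [blockRev_eq_one hba, len_one]
      norm_num
      rcases le_or_gt (b+1) a with h | h
      · have : b + 1 - a = 0 := by omega
        rw [this, qfact_zero]
      · have : b + 1 - a = 1 := by omega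
        rw [this]
        have : qfact 1 = qfact 0 * qint 1 := qfact_succ 0
        rw [this, qfact_zero, qint_one, one_mul]
    · push_neg at hba
      have hab' : a ≤ b := by omega
      have hb1 : 1 ≤ b := by omega
      rw [sum_FixOut_eq hab' hb1 hb]
      have hstep : ∀ j ∈ Finset.Icc a b, ∀ v ∈ FixOut m a (b-1),
          (T (2*(len (gammaP m j b * v) : ℤ)) : A) =
            T (2*((b:ℤ) - j)) * T (2*(len v : ℤ)) := by
        intro j hj v hv
        rw [Finset.mem_Icc] at hj
        rw [len_gammaP_mul hb hv hj.1 hj.2]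
        rw [← T_add]
        congr 1
        have : ((b - j : ℕ) : ℤ) = (b:ℤ) - j := by omega
        push_cast
        omega
      calc ∑ j ∈ Finset.Icc a b, ∑ v ∈ FixOut m a (b-1),
              (T (2*(len (gammaP m j b * v) : ℤ)) : A)
          = ∑ j ∈ Finset.Icc a b, ∑ v ∈ FixOut m a (b-1),
              T (2*((b:ℤ) - j)) * T (2*(len v : ℤ)) := by
            apply Finset.sum_congr rfl
            intro j hj
            apply Finset.sum_congr rfl
            intro v hv
            exact hstep j hj v hv
        _ = (∑ j ∈ Finset.Icc a b, (T (2*((b:ℤ) - j)) : A)) *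
              (∑ v ∈ FixOut m a (b-1), (T (2*(len v : ℤ)) : A)) := by
            rw [Finset.sum_mul]
            apply Finset.sum_congr rfl
            intro j hj
            rw [Finset.mul_sum]
        _ = (qint (b+1-a) * T ((b:ℤ) - a)) *
              (qfact (b-1+1-a) * T ((len (blockRev m a (b-1)) : ℤ))) := by
            rw [sum_T_two a b hab', ih (b-1) (by omega) (by omega) (by omega)]
        _ = qfact (b+1-a) * T ((len (blockRev m a b) : ℤ)) := by
            have h1 : b + 1 - a = (b - a) + 1 := by omega
            have h2 : b - 1 + 1 - a = b - a := by omega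
            rw [h1, h2, qfact_succ]
            rw [len_blockRev_decomp hab' hb]
            have h3 : (((b - a) + len (blockRev m a (b-1)) : ℕ) : ℤ) =
                ((b:ℤ) - a) + (len (blockRev m a (b-1)) : ℤ) := by
              push_cast
              omega
            rw [h3, T_add]
            ring


end

section

variable {m : ℕ} {H : Type*} [Ring H] [Algebra A H] (Tb : Module.Basis (SymGrp m) A H)

section mult
variable (hTmul : ∀ v w : SymGrp m, len (v * w) = len v + len w → Tb (v * w) = Tb v * Tb w)
  (hTquad : ∀ i : Fin m,
    Tb (sg m i) * Tb (sg m i) = (T 1 - T (-1) : A) • Tb (sg m i) + 1)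
omit Tb in
lemma inv_apply_ne (w : SymGrp m) (i : Fin m) : w⁻¹ i.castSucc ≠ w⁻¹ i.succ := by
  intro h
  have := w⁻¹.injective h
  exact absurd (congrArg Fin.val this) (by simp)

include hTmul


lemma Tmul_sg_asc {i : Fin m} {w : SymGrp m} (h : w⁻¹ i.castSucc < w⁻¹ i.succ) :
    Tb (sg m i) * Tb w = Tb (sg m i * w) :=
  (hTmul (sg m i) w (by rw [len_sg_mul_asc i w h, len_sg]; omega)).symm

include hTquad in
lemma Tmul_sg_desc {i : Fin m} {w : SymGrp m} (h : w⁻¹ i.succ < w⁻¹ i.castSucc) :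
    Tb (sg m i) * Tb w = Tb (sg m i * w) + (T 1 - T (-1) : A) • Tb w := by
  set w' := sg m i * w with hw'
  have hasc : w'⁻¹ i.castSucc < w'⁻¹ i.succ := by
    rw [hw', inv_sg_mul_castSucc, inv_sg_mul_succ]; exact h
  have h1 : Tb (sg m i) * Tb w' = Tb w := by
    rw [Tmul_sg_asc Tb hTmul hasc, hw', sg_mul_sg_mul]
  calc Tb (sg m i) * Tb w = Tb (sg m i) * (Tb (sg m i) * Tb w') := by rw [h1]
    _ = (Tb (sg m i) * Tb (sg m i)) * Tb w' := by rw [mul_assoc]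
    _ = ((T 1 - T (-1) : A) • Tb (sg m i) + 1) * Tb w' := by rw [hTquad i]
    _ = (T 1 - T (-1) : A) • (Tb (sg m i) * Tb w') + Tb w' := by
        rw [add_mul, smul_mul_assoc, one_mul]
    _ = Tb (sg m i * w) + (T 1 - T (-1) : A) • Tb w := by
        rw [h1, add_comm]

include hTquad in
lemma Tmul_sg (i : Fin m) (w : SymGrp m) :
    Tb (sg m i) * Tb w = Tb (sg m i * w) +
      (if w⁻¹ i.succ < w⁻¹ i.castSucc then (T 1 - T (-1) : A) • Tb w else 0) := by
  rcases lt_or_gt_of_ne (inv_apply_ne w i) with h | h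
  · rw [if_neg (by exact fun hh => absurd h (not_lt.2 hh.le))]
    rw [Tmul_sg_asc Tb hTmul h, add_zero]
  · rw [if_pos h]
    exact Tmul_sg_desc Tb hTmul hTquad h

end mult

section barsec
variable (hT1 : Tb 1 = 1)
  (hTmul : ∀ v w : SymGrp m, len (v * w) = len v + len w → Tb (v * w) = Tb v * Tb w)
  (hTquad : ∀ i : Fin m,
    Tb (sg m i) * Tb (sg m i) = (T 1 - T (-1) : A) • Tb (sg m i) + 1)
  (barH : H →+* H)
  (hbarH_smul : ∀ (a : A) (h : H), barH (a • h) = Abar a • barH h)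
  (hbarH_T : ∀ w : SymGrp m, barH (Tb w) * Tb w⁻¹ = 1 ∧ Tb w⁻¹ * barH (Tb w) = 1)

include hTquad hbarH_T in
lemma barH_sg (i : Fin m) :
    barH (Tb (sg m i)) = Tb (sg m i) - (T 1 - T (-1) : A) • 1 := by
  obtain ⟨h1, h2⟩ := hbarH_T (sg m i)
  rw [sg_inv] at h1 h2
  have hc1 : Tb (sg m i) * (Tb (sg m i) - (T 1 - T (-1) : A) • 1) = 1 := by
    rw [mul_sub, hTquad i, mul_smul_comm, mul_one]
    abel
  calc barH (Tb (sg m i)) = barH (Tb (sg m i)) * 1 := by rw [mul_one]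
    _ = barH (Tb (sg m i)) * (Tb (sg m i) * (Tb (sg m i) - (T 1 - T (-1) : A) • 1)) := by
        rw [hc1]
    _ = (barH (Tb (sg m i)) * Tb (sg m i)) * (Tb (sg m i) - (T 1 - T (-1) : A) • 1) := by
        rw [mul_assoc]
    _ = Tb (sg m i) - (T 1 - T (-1) : A) • 1 := by rw [h1, one_mul]

/-- generic: left multiplication maps a span into a submodule -/
lemma mul_left_span (y : H) {S : Set (SymGrp m)} {P : Submodule A H}
    (h : ∀ w ∈ S, y * Tb w ∈ P) {x : H} (hx : x ∈ Submodule.span A (Tb '' S)) :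
    y * x ∈ P := by
  have hle : Submodule.map (LinearMap.mulLeft A y) (Submodule.span A (Tb '' S)) ≤ P := by
    rw [Submodule.map_span, Submodule.span_le]
    rintro z ⟨u, ⟨w, hw, rfl⟩, rfl⟩
    exact h w hw
  exact hle ⟨x, hx, rfl⟩

include hT1 hTmul hTquad hbarH_T in
lemma barH_Tb_lower :
    ∀ t : ℕ, ∀ y : SymGrp m, len y ≤ t →
      barH (Tb y) - Tb y ∈ Submodule.span A (Tb '' {z | len z < len y}) := by
  intro t
  induction t with
  | zero =>
    intro y hy
    have hy1 : y = 1 := by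
      by_contra hne
      obtain ⟨i, -, -, hdesc⟩ := exists_desc (a := 0) (b := m) (le_refl m)
        (by rw [mem_FixOut]; intro p hp; exfalso; have := p.isLt; omega) hne
      have := len_sg_mul_desc i y hdesc
      omega
    subst hy1
    rw [hT1, map_one, sub_self]
    exact Submodule.zero_mem _
  | succ t ih =>
    intro y hy
    rcases eq_or_ne y 1 with rfl | hne
    · rw [hT1, map_one, sub_self]
      exact Submodule.zero_mem _
    obtain ⟨i, -, -, hdesc⟩ := exists_desc (a := 0) (b := m) (le_refl m)
      (by rw [mem_FixOut]; intro p hp; exfalso; have := p.isLt; omega) hne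
    set y' := sg m i * y with hy'
    have hlen : len y = len y' + 1 := len_sg_mul_desc i y hdesc
    have hasc : y'⁻¹ i.castSucc < y'⁻¹ i.succ := by
      rw [hy', inv_sg_mul_castSucc, inv_sg_mul_succ]; exact hdesc
    have hTy : Tb y = Tb (sg m i) * Tb y' := by
      rw [Tmul_sg_asc Tb hTmul hasc, hy', sg_mul_sg_mul]
    have hLmem : barH (Tb y') - Tb y' ∈ Submodule.span A (Tb '' {z | len z < len y'}) :=
      ih y' (by omega)
    have hexp : barH (Tb y) - Tb y =
        Tb (sg m i) * (barH (Tb y') - Tb y') - (T 1 - T (-1) : A) • Tb y'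
          - (T 1 - T (-1) : A) • (barH (Tb y') - Tb y') := by
      rw [hTy, map_mul, barH_sg Tb hTquad barH hbarH_T i]
      rw [sub_mul, smul_mul_assoc, one_mul, mul_sub, smul_sub]
      abel
    rw [hexp]
    apply Submodule.sub_mem
    apply Submodule.sub_mem
    · -- Tb (sg m i) * L
      apply mul_left_span Tb (Tb (sg m i)) (S := {z | len z < len y'})
        (P := Submodule.span A (Tb '' {z | len z < len y})) ?_ hLmem
      intro w hw
      simp only [Set.mem_setOf_eq] at hw
      rw [Tmul_sg Tb hTmul hTquad i w]
      apply Submodule.add_mem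
      · apply Submodule.subset_span
        refine ⟨sg m i * w, ?_, rfl⟩
        simp only [Set.mem_setOf_eq]
        rcases lt_or_gt_of_ne (inv_apply_ne w i) with h | h
        · have := len_sg_mul_asc i w h; omega
        · have := len_sg_mul_desc i w h; omega
      · split_ifs
        · apply Submodule.smul_mem
          apply Submodule.subset_span
          exact ⟨w, by simp only [Set.mem_setOf_eq]; omega, rfl⟩
        · exact Submodule.zero_mem _
    · apply Submodule.smul_mem
      apply Submodule.subset_span
      exact ⟨y', by simp only [Set.mem_setOf_eq]; omega, rfl⟩
    · apply Submodule.smul_mem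
      exact Submodule.span_mono (Set.image_mono (fun z hz => by
        simp only [Set.mem_setOf_eq] at hz ⊢; omega)) hLmem

lemma repr_eq_zero_of_span {S : Set (SymGrp m)} {x : H}
    (hx : x ∈ Submodule.span A (Tb '' S)) {w : SymGrp m} (hw : w ∉ S) :
    Tb.repr x w = 0 := by
  rw [Module.Basis.mem_span_image] at hx
  by_contra h
  exact hw (hx (Finsupp.mem_support_iff.mpr h))

lemma sum_repr_of_span {F : Finset (SymGrp m)} {x : H}
    (hx : x ∈ Submodule.span A (Tb '' (F : Set (SymGrp m)))) :
    x = ∑ w ∈ F, Tb.repr x w • Tb w := by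
  conv_lhs => rw [← Tb.linearCombination_repr x]
  rw [Finsupp.linearCombination_apply]
  rw [Finsupp.sum_of_support_subset _ ?_ _ (by intro i _; exact zero_smul A (Tb i))]
  rw [Module.Basis.mem_span_image] at hx
  exact fun w hw => hx hw

end barsec

end

section

variable {m : ℕ} {H : Type*} [Ring H] [Algebra A H] (Tb : Module.Basis (SymGrp m) A H)

lemma T_coef_desc (x : ℤ) : (T (x - 1) : A) + (T 1 - T (-1) : A) * T x = T 1 * T x := by
  rw [sub_mul, ← T_add, ← T_add]
  have h : (-1 : ℤ) + x = x - 1 := by ring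
  rw [h]
  abel

omit Tb in
lemma sg_mul_ne (i : Fin m) (v : SymGrp m) : sg m i * v ≠ v := by
  intro h
  have h2 : sg m i = 1 := mul_right_cancel (h.trans (one_mul v).symm)
  have h3 := congrArg (fun w : SymGrp m => w i.castSucc) h2
  simp only [Equiv.Perm.one_apply] at h3
  rw [sg_castSucc] at h3
  exact absurd (congrArg Fin.val h3) (by simp)

section mult
variable (hTmul : ∀ v w : SymGrp m, len (v * w) = len v + len w → Tb (v * w) = Tb v * Tb w)
  (hTquad : ∀ i : Fin m,
    Tb (sg m i) * Tb (sg m i) = (T 1 - T (-1) : A) • Tb (sg m i) + 1)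
include hTmul hTquad

lemma repr_sg_mul (i : Fin m) (z : H) (v : SymGrp m) :
    Tb.repr (Tb (sg m i) * z) v = Tb.repr z (sg m i * v) +
      (if v⁻¹ i.succ < v⁻¹ i.castSucc then (T 1 - T (-1) : A) else 0) * Tb.repr z v := by
  let L1 : H →ₗ[A] A :=
    (Finsupp.lapply v) ∘ₗ Tb.repr.toLinearMap ∘ₗ (LinearMap.mulLeft A (Tb (sg m i)))
  let L2 : H →ₗ[A] A :=
    ((Finsupp.lapply (sg m i * v)) ∘ₗ Tb.repr.toLinearMap) +
      (if v⁻¹ i.succ < v⁻¹ i.castSucc then (T 1 - T (-1) : A) else 0) •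
        ((Finsupp.lapply v) ∘ₗ Tb.repr.toLinearMap)
  have hL : L1 = L2 := by
    apply Module.Basis.ext Tb
    intro w
    show Tb.repr (Tb (sg m i) * Tb w) v =
      Tb.repr (Tb w) (sg m i * v) +
        (if v⁻¹ i.succ < v⁻¹ i.castSucc then (T 1 - T (-1) : A) else 0) • (Tb.repr (Tb w) v)
    rw [Tmul_sg Tb hTmul hTquad i w]
    rw [map_add, smul_eq_mul]
    have hsw : Tb.repr (if w⁻¹ i.succ < w⁻¹ i.castSucc
          then ((T 1 - T (-1) : A) • Tb w) else 0) v =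
        (if w⁻¹ i.succ < w⁻¹ i.castSucc then (T 1 - T (-1) : A) else 0) * Tb.repr (Tb w) v := by
      split_ifs
      · rw [map_smul, Finsupp.smul_apply, smul_eq_mul]
      · rw [map_zero, Finsupp.coe_zero, Pi.zero_apply, zero_mul]
    rw [Finsupp.add_apply, hsw]
    simp only [Module.Basis.repr_self, Finsupp.single_apply]
    by_cases hw1 : w = v
    · subst hw1
      rw [if_neg (sg_mul_ne i w), if_neg (fun h : w = sg m i * w => sg_mul_ne i w h.symm),
        if_pos rfl]
    · by_cases hw2 : w = sg m i * v
      · rw [if_pos (by rw [hw2, sg_mul_sg_mul]), if_pos hw2, if_neg hw1]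
        simp
      · rw [if_neg (fun h : sg m i * w = v => hw2 (by rw [← h, sg_mul_sg_mul])),
          if_neg hw2, if_neg hw1]
        simp
  have hLz := congrArg (fun f : H →ₗ[A] A => f z) hL
  simp only [L1, L2, LinearMap.coe_comp, Function.comp_apply, LinearMap.add_apply,
    LinearMap.smul_apply, LinearEquiv.coe_toLinearMap, Finsupp.lapply_apply,
    LinearMap.mulLeft_apply, smul_eq_mul] at hLz
  exact hLz

end mult

/-- the element `u^{-N} ∑_{y} u^{ℓ(y)} T_y` over the block `[a, m]`. -/
def h1elt (Tb : Module.Basis (SymGrp m) A H) (a : ℕ) : H :=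
  ∑ y ∈ FixOut m a m, (T ((len y : ℤ) - (len (blockRev m a m) : ℤ)) : A) • Tb y

lemma repr_h1 (a : ℕ) (v : SymGrp m) :
    Tb.repr (h1elt Tb a) v =
      if v ∈ FixOut m a m then (T ((len v : ℤ) - (len (blockRev m a m) : ℤ)) : A) else 0 := by
  unfold h1elt
  rw [map_sum, Finset.sum_apply']
  by_cases hv : v ∈ FixOut m a m
  · rw [if_pos hv]
    rw [Finset.sum_eq_single_of_mem v hv]
    · rw [map_smul, Finsupp.smul_apply, Module.Basis.repr_self, Finsupp.single_apply, if_pos rfl,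
        smul_eq_mul, mul_one]
    · intro y hy hne
      rw [map_smul, Finsupp.smul_apply, Module.Basis.repr_self, Finsupp.single_apply, if_neg hne,
        smul_zero]
  · rw [if_neg hv]
    apply Finset.sum_eq_zero
    intro y hy
    have hne : y ≠ v := fun h => hv (h ▸ hy)
    rw [map_smul, Finsupp.smul_apply, Module.Basis.repr_self, Finsupp.single_apply, if_neg hne,
      smul_zero]

lemma h1_mem_span (a : ℕ) :
    h1elt Tb a ∈ Submodule.span A (Tb '' (FixOut m a m : Set (SymGrp m))) := by
  unfold h1elt
  apply Submodule.sum_mem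
  intro y hy
  exact Submodule.smul_mem _ _ (Submodule.subset_span ⟨y, hy, rfl⟩)

section eigsec
variable (hTmul : ∀ v w : SymGrp m, len (v * w) = len v + len w → Tb (v * w) = Tb v * Tb w)
  (hTquad : ∀ i : Fin m,
    Tb (sg m i) * Tb (sg m i) = (T 1 - T (-1) : A) • Tb (sg m i) + 1)
include hTmul hTquad

lemma sg_mul_h1 (a : ℕ) (i : Fin m) (hi : a ≤ (i:ℕ)) :
    Tb (sg m i) * h1elt Tb a = (T 1 : A) • h1elt Tb a := by
  apply Tb.ext_elem
  intro v
  rw [repr_sg_mul Tb hTmul hTquad, map_smul, Finsupp.smul_apply, smul_eq_mul]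
  rw [repr_h1, repr_h1]
  have hsgF : sg m i * v ∈ FixOut m a m ↔ v ∈ FixOut m a m := by
    constructor
    · intro h
      have := mul_mem_FixOut (sg_mem_FixOut (b := m) hi (by have := i.isLt; omega)) h
      rwa [sg_mul_sg_mul] at this
    · intro h
      exact mul_mem_FixOut (sg_mem_FixOut (b := m) hi (by have := i.isLt; omega)) h
  by_cases hv : v ∈ FixOut m a m
  · rw [if_pos (hsgF.mpr hv), if_pos hv]
    rcases lt_or_gt_of_ne (inv_apply_ne v i) with h | h
    · -- ascent : len (sg*v) = len v + 1
      rw [if_neg (fun hh => absurd h (not_lt.2 hh.le))]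
      rw [len_sg_mul_asc i v h]
      rw [zero_mul, add_zero, ← T_add]
      congr 1
      push_cast
      ring
    · -- descent
      rw [if_pos h]
      have hlen := len_sg_mul_desc i v h
      have hcast : (len (sg m i * v) : ℤ) = (len v : ℤ) - 1 := by omega
      rw [hcast]
      have harg : (len v : ℤ) - 1 - (len (blockRev m a m) : ℤ) =
          ((len v : ℤ) - (len (blockRev m a m) : ℤ)) - 1 := by ring
      rw [harg]
      exact T_coef_desc _
  · rw [if_neg (fun hh => hv (hsgF.mp hh)), if_neg hv]
    ring

lemma eig_unique (a : ℕ) (z : H)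
    (hspan : z ∈ Submodule.span A (Tb '' (FixOut m a m : Set (SymGrp m))))
    (heig : ∀ i : Fin m, a ≤ (i:ℕ) → Tb (sg m i) * z = (T 1 : A) • z) :
    z = Tb.repr z (blockRev m a m) • h1elt Tb a := by
  have hw1F : blockRev m a m ∈ FixOut m a m := blockRev_mem_FixOut (le_refl m)
  -- coefficient recursion
  have hrec : ∀ (i : Fin m), a ≤ (i:ℕ) → ∀ v : SymGrp m,
      v⁻¹ i.succ < v⁻¹ i.castSucc →
      Tb.repr z (sg m i * v) = (T (-1) : A) * Tb.repr z v := by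
    intro i hi v hdesc
    have h1 := congrArg (fun x : H => Tb.repr x v) (heig i hi)
    rw [repr_sg_mul Tb hTmul hTquad, map_smul, Finsupp.smul_apply, smul_eq_mul,
      if_pos hdesc] at h1
    have h2 : Tb.repr z (sg m i * v) =
        (T 1 - (T 1 - T (-1)) : A) * Tb.repr z v := by
      rw [sub_mul, ← h1]
      ring
    rw [h2]
    congr 1
    ring
  -- climb
  have hclimb : ∀ d : ℕ, ∀ v ∈ FixOut m a m, len (blockRev m a m) ≤ len v + d →
      Tb.repr z v = (T ((len v : ℤ) - (len (blockRev m a m) : ℤ)) : A) *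
        Tb.repr z (blockRev m a m) := by
    intro d
    induction d with
    | zero =>
      intro v hv hle
      have hmax := len_le_blockRev (a := a) (b := m) (le_refl m) v hv
      have hveq : v = blockRev m a m := by
        by_contra hne
        have := hmax.2 hne
        omega
      rw [hveq, sub_self]
      norm_num
    | succ d ih =>
      intro v hv hle
      by_cases hne : v = blockRev m a m
      · rw [hne, sub_self]
        norm_num
      · obtain ⟨i, hi1, hi2, hasc⟩ := exists_asc (le_refl m) hv hne
        have hv'F : sg m i * v ∈ FixOut m a m :=
          mul_mem_FixOut (sg_mem_FixOut hi1 hi2) hv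
        have hlen : len (sg m i * v) = len v + 1 := len_sg_mul_asc i v hasc
        have hdesc' : (sg m i * v)⁻¹ i.succ < (sg m i * v)⁻¹ i.castSucc := by
          rw [inv_sg_mul_castSucc, inv_sg_mul_succ]
          exact hasc
        have hstep := hrec i hi1 (sg m i * v) hdesc'
        rw [sg_mul_sg_mul] at hstep
        have hmax := (len_le_blockRev (a := a) (b := m) (le_refl m) _ hv'F).1
        have hih := ih (sg m i * v) hv'F (by omega)
        rw [hstep, hih, hlen]
        rw [← mul_assoc, ← T_add]
        congr 2
        push_cast
        ring
  -- conclude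
  apply Tb.ext_elem
  intro v
  rw [map_smul, Finsupp.smul_apply, smul_eq_mul, repr_h1]
  by_cases hv : v ∈ FixOut m a m
  · rw [if_pos hv]
    have hmax := (len_le_blockRev (a := a) (b := m) (le_refl m) v hv).1
    have := hclimb (len (blockRev m a m)) v hv (by omega)
    rw [this]
    ring
  · rw [if_neg hv, mul_zero]
    exact repr_eq_zero_of_span Tb hspan (by
      intro hmem
      exact hv (by exact_mod_cast hmem))

end eigsec

end

section

variable {m : ℕ} {H : Type*} [Ring H] [Algebra A H] (Tb : Module.Basis (SymGrp m) A H)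
  (hT1 : Tb 1 = 1)
  (hTmul : ∀ v w : SymGrp m, len (v * w) = len v + len w → Tb (v * w) = Tb v * Tb w)
  (hTquad : ∀ i : Fin m,
    Tb (sg m i) * Tb (sg m i) = (T 1 - T (-1) : A) • Tb (sg m i) + 1)
  (barH : H →+* H)
  (hbarH_smul : ∀ (a : A) (h : H), barH (a • h) = Abar a • barH h)
  (hbarH_T : ∀ w : SymGrp m, barH (Tb w) * Tb w⁻¹ = 1 ∧ Tb w⁻¹ * barH (Tb w) = 1)

include hT1 hTmul hTquad hbarH_T in
lemma barH_Tb_mem_span (a : ℕ) : ∀ y ∈ FixOut m a m,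
    barH (Tb y) ∈ Submodule.span A (Tb '' (FixOut m a m : Set (SymGrp m))) := by
  suffices H : ∀ t : ℕ, ∀ y ∈ FixOut m a m, len y ≤ t →
      barH (Tb y) ∈ Submodule.span A (Tb '' (FixOut m a m : Set (SymGrp m))) by
    intro y hy
    exact H (len y) y hy (le_refl _)
  intro t
  induction t with
  | zero =>
    intro y hy hlen
    have hy1 : y = 1 := by
      by_contra hne
      obtain ⟨i, -, -, hdesc⟩ := exists_desc (le_refl m) hy hne
      have := len_sg_mul_desc i y hdesc
      omega
    subst hy1
    rw [hT1, map_one, ← hT1]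
    exact Submodule.subset_span ⟨1, Finset.mem_coe.mpr one_mem_FixOut, rfl⟩
  | succ t ih =>
    intro y hy hlen
    rcases eq_or_ne y 1 with rfl | hne
    · rw [hT1, map_one, ← hT1]
      exact Submodule.subset_span ⟨1, Finset.mem_coe.mpr one_mem_FixOut, rfl⟩
    obtain ⟨i, hi1, hi2, hdesc⟩ := exists_desc (le_refl m) hy hne
    have hy'F : sg m i * y ∈ FixOut m a m :=
      mul_mem_FixOut (sg_mem_FixOut hi1 hi2) hy
    have hlen' : len y = len (sg m i * y) + 1 := len_sg_mul_desc i y hdesc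
    have hasc : (sg m i * y)⁻¹ i.castSucc < (sg m i * y)⁻¹ i.succ := by
      rw [inv_sg_mul_castSucc, inv_sg_mul_succ]
      exact hdesc
    have hTy : Tb y = Tb (sg m i) * Tb (sg m i * y) := by
      rw [Tmul_sg_asc Tb hTmul hasc, sg_mul_sg_mul]
    have hX : barH (Tb (sg m i * y)) ∈
        Submodule.span A (Tb '' (FixOut m a m : Set (SymGrp m))) :=
      ih (sg m i * y) hy'F (by omega)
    rw [hTy, map_mul, barH_sg Tb hTquad barH hbarH_T i, sub_mul, smul_mul_assoc, one_mul]
    apply Submodule.sub_mem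
    · apply mul_left_span Tb (Tb (sg m i))
        (S := (FixOut m a m : Set (SymGrp m))) ?_ hX
      intro w hw
      have hwF : w ∈ FixOut m a m := Finset.mem_coe.mp hw
      rw [Tmul_sg Tb hTmul hTquad i w]
      apply Submodule.add_mem
      · exact Submodule.subset_span ⟨sg m i * w,
          Finset.mem_coe.mpr (mul_mem_FixOut (sg_mem_FixOut hi1 hi2) hwF), rfl⟩
      · split_ifs
        · exact Submodule.smul_mem _ _ (Submodule.subset_span ⟨w, hw, rfl⟩)
        · exact Submodule.zero_mem _
    · exact Submodule.smul_mem _ _ hX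

include hT1 hTmul hTquad hbarH_smul hbarH_T in
lemma barH_h1_eq (a : ℕ) : barH (h1elt Tb a) = h1elt Tb a := by
  have hspan : barH (h1elt Tb a) ∈
      Submodule.span A (Tb '' (FixOut m a m : Set (SymGrp m))) := by
    unfold h1elt
    rw [map_sum]
    apply Submodule.sum_mem
    intro y hy
    rw [hbarH_smul]
    exact Submodule.smul_mem _ _
      (barH_Tb_mem_span Tb hT1 hTmul hTquad barH hbarH_T a y hy)
  have hcand : ∀ i : Fin m, barH (Tb (sg m i) - (T 1 - T (-1) : A) • 1) = Tb (sg m i) := by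
    intro i
    rw [map_sub, barH_sg Tb hTquad barH hbarH_T i, hbarH_smul, map_one]
    have hA : Abar (T 1 - T (-1) : A) = T (-1) - T 1 := by
      rw [map_sub, Abar_T, Abar_T]
      norm_num
    rw [hA, sub_smul, sub_smul]
    abel
  have heig : ∀ i : Fin m, a ≤ (i:ℕ) →
      Tb (sg m i) * barH (h1elt Tb a) = (T 1 : A) • barH (h1elt Tb a) := by
    intro i hi
    have h1 : (Tb (sg m i) - (T 1 - T (-1) : A) • 1) * h1elt Tb a =
        (T (-1) : A) • h1elt Tb a := by
      rw [sub_mul, sg_mul_h1 Tb hTmul hTquad a i hi, smul_mul_assoc, one_mul, ← sub_smul]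
      congr 1
      ring
    calc Tb (sg m i) * barH (h1elt Tb a)
        = barH (Tb (sg m i) - (T 1 - T (-1) : A) • 1) * barH (h1elt Tb a) := by
          rw [hcand i]
      _ = barH ((Tb (sg m i) - (T 1 - T (-1) : A) • 1) * h1elt Tb a) :=
          (map_mul barH _ _).symm
      _ = barH ((T (-1) : A) • h1elt Tb a) := by rw [h1]
      _ = (T 1 : A) • barH (h1elt Tb a) := by
          rw [hbarH_smul, Abar_T]
          norm_num
  have hzeq := eig_unique Tb hTmul hTquad a (barH (h1elt Tb a)) hspan heig
  have htop : Tb.repr (barH (h1elt Tb a)) (blockRev m a m) = 1 := by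
    have hexpand : barH (h1elt Tb a) = ∑ y ∈ FixOut m a m,
        (Abar (T ((len y:ℤ) - (len (blockRev m a m):ℤ))) : A) •
          (Tb y + (barH (Tb y) - Tb y)) := by
      unfold h1elt
      rw [map_sum]
      apply Finset.sum_congr rfl
      intro y hy
      rw [hbarH_smul]
      congr 1
      abel
    rw [hexpand, map_sum, Finset.sum_apply']
    rw [Finset.sum_eq_single_of_mem (blockRev m a m) (blockRev_mem_FixOut (le_refl m))]
    · rw [map_smul, Finsupp.smul_apply, map_add, Finsupp.add_apply, Module.Basis.repr_self,
        Finsupp.single_apply, if_pos rfl]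
      have hL0 : Tb.repr (barH (Tb (blockRev m a m)) - Tb (blockRev m a m))
          (blockRev m a m) = 0 := by
        apply repr_eq_zero_of_span Tb
          (barH_Tb_lower Tb hT1 hTmul hTquad barH hbarH_T (len (blockRev m a m))
            (blockRev m a m) (le_refl _))
        simp only [Set.mem_setOf_eq]
        omega
      rw [hL0, add_zero, sub_self, smul_eq_mul, mul_one]
      show Abar (T 0) = 1
      rw [T_zero, map_one]
    · intro y hy hne
      rw [map_smul, Finsupp.smul_apply, map_add, Finsupp.add_apply, Module.Basis.repr_self,
        Finsupp.single_apply, if_neg hne]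
      have hL0 : Tb.repr (barH (Tb y) - Tb y) (blockRev m a m) = 0 := by
        apply repr_eq_zero_of_span Tb
          (barH_Tb_lower Tb hT1 hTmul hTquad barH hbarH_T (len y) y (le_refl _))
        simp only [Set.mem_setOf_eq]
        have := (len_le_blockRev (a := a) (b := m) (le_refl m) y hy).1
        omega
      rw [hL0, add_zero, smul_eq_mul, mul_zero]
  rw [htop, one_smul] at hzeq
  exact hzeq


end

section

variable {m : ℕ} {H : Type*} [Ring H] [Algebra A H] (Tb : Module.Basis (SymGrp m) A H)

lemma smul_comm_AH {tE : Type*} [AddCommGroup tE] [Module A tE] [Module H tE]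
    [IsScalarTower A H tE] (a : A) (h : H) (x : tE) : h • a • x = a • (h • x) := by
  calc h • (a • x) = h • ((a • (1:H)) • x) := by rw [smul_assoc, one_smul]
    _ = (h * (a • (1:H))) • x := (mul_smul _ _ _).symm
    _ = (a • (h * (1:H))) • x := by rw [mul_smul_comm]
    _ = (a • h) • x := by rw [mul_one]
    _ = a • (h • x) := smul_assoc _ _ _

section modsec
variable (hT1 : Tb 1 = 1)
  (hTmul : ∀ v w : SymGrp m, len (v * w) = len v + len w → Tb (v * w) = Tb v * Tb w)
  (Jset : Set (Fin m))
  {Γ : Type*} (E : Type*) [AddCommGroup E] [Module A E] (Γb : Module.Basis Γ A E)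
  (Lset : Γ → Set (Fin m)) (mu : Γ → Γ → ℤ)
  (tE : Type*) [AddCommGroup tE] [Module A tE] [Module H tE] [IsScalarTower A H tE]
  (unit : E →ₗ[A] tE)
  (hbox : ∀ i ∈ Jset, ∀ e : E,
    (Tb (sg m i) + (T (-1) : A) • 1) • unit e = unit (graphOp Γb Lset mu i e))
  (γ : Γ)

include hbox in
lemma Ts_smul_unit (i : Fin m) (hiJ : i ∈ Jset) (hiL : i ∈ Lset γ) :
    Tb (sg m i) • unit (Γb γ) = (T 1 : A) • unit (Γb γ) := by
  have hb := hbox i hiJ (Γb γ)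
  have hgo : graphOp Γb Lset mu i (Γb γ) = qtwo • Γb γ := by
    unfold graphOp
    rw [Module.Basis.constr_basis]
    rw [if_pos hiL]
  rw [hgo, map_smul] at hb
  have hexp : (Tb (sg m i) + (T (-1) : A) • 1) • unit (Γb γ) =
      Tb (sg m i) • unit (Γb γ) + (T (-1) : A) • unit (Γb γ) := by
    rw [add_smul, smul_assoc, one_smul]
  rw [hexp] at hb
  have := eq_sub_of_add_eq hb
  rw [this, ← sub_smul]
  congr 1
  unfold qtwo
  ring

include hT1 hTmul hbox in
lemma Tb_fix_smul_unit (a c : ℕ) (hc : c ≤ m)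
    (hblock : ∀ i : Fin m, a ≤ (i:ℕ) → (i:ℕ)+1 ≤ c → i ∈ Jset ∧ i ∈ Lset γ) :
    ∀ v ∈ FixOut m a c, Tb v • unit (Γb γ) = (T (len v : ℤ) : A) • unit (Γb γ) := by
  suffices H : ∀ t : ℕ, ∀ v ∈ FixOut m a c, len v ≤ t →
      Tb v • unit (Γb γ) = (T (len v : ℤ) : A) • unit (Γb γ) by
    intro v hv
    exact H (len v) v hv (le_refl _)
  intro t
  induction t with
  | zero =>
    intro v hv hlen
    have hv1 : v = 1 := by
      by_contra hne
      obtain ⟨i, -, -, hdesc⟩ := exists_desc hc hv hne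
      have := len_sg_mul_desc i v hdesc
      omega
    subst hv1
    rw [hT1, len_one, one_smul]
    norm_num
  | succ t ih =>
    intro v hv hlen
    rcases eq_or_ne v 1 with rfl | hne
    · rw [hT1, len_one, one_smul]
      norm_num
    obtain ⟨i, hi1, hi2, hdesc⟩ := exists_desc hc hv hne
    have hv'F : sg m i * v ∈ FixOut m a c :=
      mul_mem_FixOut (sg_mem_FixOut hi1 hi2) hv
    have hlen' : len v = len (sg m i * v) + 1 := len_sg_mul_desc i v hdesc
    have hasc : (sg m i * v)⁻¹ i.castSucc < (sg m i * v)⁻¹ i.succ := by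
      rw [inv_sg_mul_castSucc, inv_sg_mul_succ]
      exact hdesc
    have hTv : Tb v = Tb (sg m i) * Tb (sg m i * v) := by
      rw [Tmul_sg_asc Tb hTmul hasc, sg_mul_sg_mul]
    obtain ⟨hiJ, hiL⟩ := hblock i hi1 hi2
    rw [hTv, mul_smul, ih (sg m i * v) hv'F (by omega), smul_comm_AH,
      Ts_smul_unit Tb Jset E Γb Lset mu tE unit hbox γ i hiJ hiL, smul_smul, ← T_add]
    congr 2
    push_cast
    omega

end modsec

end

section

variable {m : ℕ} {H : Type*} [Ring H] [Algebra A H] (Tb : Module.Basis (SymGrp m) A H)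

def HSum (Tb : Module.Basis (SymGrp m) A H) (a : ℕ) : H :=
  ∑ j ∈ Finset.Icc a (m+1), (T ((a:ℤ) - (j:ℤ)) : A) • Tb (bElt m j)

lemma HSum_zero {a : ℕ} (ha : m + 2 ≤ a) : HSum Tb a = 0 := by
  unfold HSum
  rw [Finset.Icc_eq_empty (by omega), Finset.sum_empty]

lemma HSum_top (hT1 : Tb 1 = 1) : HSum Tb (m+1) = 1 := by
  unfold HSum
  rw [Finset.Icc_self, Finset.sum_singleton, sub_self, T_zero, bElt_top, hT1, one_smul]

lemma HSum_smul {tE : Type*} [AddCommGroup tE] [Module A tE] [Module H tE]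
    [IsScalarTower A H tE] (a : ℕ) (x : tE) :
    HSum Tb a • x = ∑ j ∈ Finset.Icc a (m+1),
      (T ((a:ℤ) - (j:ℤ)) : A) • (Tb (bElt m j) • x) := by
  unfold HSum
  rw [Finset.sum_smul]
  apply Finset.sum_congr rfl
  intro j hj
  rw [smul_assoc]

lemma bElt_cons {a : ℕ} (h1 : 1 ≤ a) (h2 : a ≤ m) :
    bElt m a = sgN m a * bElt m (a+1) := by
  unfold bElt
  have h3 : m + 1 - a = (m - a) + 1 := by omega
  rw [h3, List.range'_succ]
  simp

section recsec
variable (hT1 : Tb 1 = 1)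
  (hTmul : ∀ v w : SymGrp m, len (v * w) = len v + len w → Tb (v * w) = Tb v * Tb w)
  (Jset : Set (Fin m))
  {Γ : Type*} (E : Type*) [AddCommGroup E] [Module A E] (Γb : Module.Basis Γ A E)
  (Lset : Γ → Set (Fin m)) (mu : Γ → Γ → ℤ)
  (tE : Type*) [AddCommGroup tE] [Module A tE] [Module H tE] [IsScalarTower A H tE]
  (unit : E →ₗ[A] tE)
  (hbox : ∀ i ∈ Jset, ∀ e : E,
    (Tb (sg m i) + (T (-1) : A) • 1) • unit e = unit (graphOp Γb Lset mu i e))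
  (γ : Γ) (k : ℕ) (hk1 : 1 ≤ k) (hk : k ≤ m)
  (hblock : ∀ i : Fin m, k - 1 ≤ (i:ℕ) → (i:ℕ)+1 ≤ m-1 → i ∈ Jset ∧ i ∈ Lset γ)

include hT1 hTmul hbox hk1 hblock in
lemma theta_step {a : ℕ} (hka : k ≤ a) (ham : a ≤ m) :
    (Tb (sgN m a) + (T (-1) : A) • 1) • (HSum Tb (a+1) • unit (Γb γ))
      = HSum Tb a • unit (Γb γ) + HSum Tb (a+2) • unit (Γb γ) := by
  have ham1 : 1 ≤ a := by omega
  have hpf : a - 1 < m := by omega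
  set ia : Fin m := ⟨a - 1, hpf⟩ with hia
  have hiaval : (ia : ℕ) = a - 1 := rfl
  have hsgNa : sgN m a = sg m ia := sgN_eq ham1 ham
  have hiacs : ((ia.castSucc : Fin (m+1)) : ℕ) = a - 1 := by
    rw [Fin.coe_castSucc, hiaval]
  have hiasc : ((ia.succ : Fin (m+1)) : ℕ) = a := by
    rw [Fin.val_succ, hiaval]
    omega
  set U := unit (Γb γ) with hU
  -- fact: Tb (sg ia) * Tb (bElt m (a+1)) = Tb (bElt m a)
  have hgfix : ∀ p : Fin (m+1), (p:ℕ) < a → bElt m (a+1) p = p := by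
    intro p hp
    have := gammaP_mem_FixOut (m := m) (a := a) (b := m) (le_refl m)
    rw [mem_FixOut] at this
    rw [bElt_eq_gammaP (by omega)]
    have ha1 : a + 1 - 1 = a := by omega
    rw [ha1]
    exact this p (Or.inl hp)
  have hj1 : Tb (sg m ia) * Tb (bElt m (a+1)) = Tb (bElt m a) := by
    have hasc : (bElt m (a+1))⁻¹ ia.castSucc < (bElt m (a+1))⁻¹ ia.succ := by
      have hfix : (bElt m (a+1))⁻¹ ia.castSucc = ia.castSucc :=
        inv_fix (hgfix _ (by rw [hiacs]; omega))
      have htop : bElt m (a+1) ⟨m, by omega⟩ = ia.succ := by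
        apply Fin.ext
        have hval := gammaP_val (m := m) (a+1-1) m (le_refl m) ⟨m, by omega⟩
        rw [bElt_eq_gammaP (by omega), hval, hiasc]
        simp only [Fin.val_mk]
        split_ifs <;> omega
      have hinvtop : (bElt m (a+1))⁻¹ ia.succ = ⟨m, by omega⟩ := by
        rw [← htop]
        simp
      rw [hfix, hinvtop, Fin.lt_def, hiacs]
      show a - 1 < m
      omega
    rw [Tmul_sg_asc Tb hTmul hasc, ← hsgNa, ← bElt_cons ham1 ham]
  -- facts for j ≥ a + 2
  have hcomm : ∀ j : ℕ, a + 2 ≤ j → j ≤ m + 1 →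
      Tb (sg m ia) • (Tb (bElt m j) • U) = (T 1 : A) • (Tb (bElt m j) • U) := by
    intro j hj1' hj2'
    have hbF : bElt m j ∈ FixOut m (j-1) m := by
      rw [bElt_eq_gammaP (by omega)]
      exact gammaP_mem_FixOut (le_refl m)
    have hfixcs : bElt m j ia.castSucc = ia.castSucc := by
      rw [mem_FixOut] at hbF
      exact hbF _ (Or.inl (by rw [hiacs]; omega))
    have hfixsc : bElt m j ia.succ = ia.succ := by
      rw [mem_FixOut] at hbF
      exact hbF _ (Or.inl (by rw [hiasc]; omega))
    have hmul1 : Tb (sg m ia) * Tb (bElt m j) = Tb (sg m ia * bElt m j) := by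
      apply Tmul_sg_asc Tb hTmul
      rw [inv_fix hfixcs, inv_fix hfixsc, Fin.lt_def, hiacs, hiasc]
      omega
    have hpermcomm : sg m ia * bElt m j = bElt m j * sg m ia := by
      apply sg_comm_FixOut hbF
      show a - 1 + 1 < j - 1
      omega
    have hmul2 : Tb (bElt m j * sg m ia) = Tb (bElt m j) * Tb (sg m ia) := by
      apply hTmul
      have hlinv : len (bElt m j * sg m ia) = len (sg m ia * (bElt m j)⁻¹) := by
        rw [← len_inv_eq (bElt m j * sg m ia), mul_inv_rev, sg_inv]
      rw [hlinv, len_sg_mul_asc ia _ (by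
        simp only [inv_inv]
        rw [hfixcs, hfixsc, Fin.lt_def, hiacs, hiasc]
        omega), len_inv_eq, len_sg]
    have hiJL := hblock ia (show k - 1 ≤ a - 1 by omega) (show (a-1)+1 ≤ m-1 by omega)
    calc Tb (sg m ia) • (Tb (bElt m j) • U)
        = (Tb (sg m ia) * Tb (bElt m j)) • U := (mul_smul _ _ _).symm
      _ = (Tb (bElt m j) * Tb (sg m ia)) • U := by
          rw [hmul1, hpermcomm, hmul2]
      _ = Tb (bElt m j) • (Tb (sg m ia) • U) := mul_smul _ _ _
      _ = Tb (bElt m j) • ((T 1 : A) • U) := by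
          rw [hU, Ts_smul_unit Tb Jset E Γb Lset mu tE unit hbox γ ia hiJL.1 hiJL.2]
      _ = (T 1 : A) • (Tb (bElt m j) • U) := smul_comm_AH _ _ _
  -- now the sum manipulation
  rw [hsgNa]
  rw [HSum_smul, Finset.smul_sum]
  have hsplit : Finset.Icc (a+1) (m+1) = insert (a+1) (Finset.Icc (a+2) (m+1)) := by
    ext x
    simp only [Finset.mem_Icc, Finset.mem_insert]
    omega
  have hnotmem : (a+1) ∉ Finset.Icc (a+2) (m+1) := by
    simp only [Finset.mem_Icc]
    omega
  rw [hsplit, Finset.sum_insert hnotmem]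
  -- the j = a+1 term
  have hterm1 : (Tb (sg m ia) + (T (-1) : A) • 1) •
      ((T (((a:ℤ)+1) - ((a:ℤ)+1)) : A) • (Tb (bElt m (a+1)) • U)) =
      Tb (bElt m a) • U + (T (-1) : A) • (Tb (bElt m (a+1)) • U) := by
    rw [sub_self, T_zero, one_smul, add_smul, smul_assoc, one_smul]
    congr 1
    rw [← mul_smul, hj1]
  -- the j ≥ a+2 terms
  have hterm2 : ∀ j ∈ Finset.Icc (a+2) (m+1),
      (Tb (sg m ia) + (T (-1) : A) • 1) •
        ((T (((a:ℤ)+1) - (j:ℤ)) : A) • (Tb (bElt m j) • U)) =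
      (T (((a:ℤ)+2) - (j:ℤ)) : A) • (Tb (bElt m j) • U) +
        (T ((a:ℤ) - (j:ℤ)) : A) • (Tb (bElt m j) • U) := by
    intro j hj
    rw [Finset.mem_Icc] at hj
    have hs1 : (T (((a:ℤ)+1) - (j:ℤ)) : A) * T 1 = T (((a:ℤ)+2) - (j:ℤ)) := by
      rw [← T_add]
      congr 1
      ring
    have hs2 : (T (-1) : A) * T (((a:ℤ)+1) - (j:ℤ)) = T ((a:ℤ) - (j:ℤ)) := by
      rw [← T_add]
      congr 1
      ring
    rw [add_smul, smul_assoc, one_smul]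
    rw [smul_comm_AH ((T (((a:ℤ)+1) - (j:ℤ)) : A)) (Tb (sg m ia)) _]
    rw [hcomm j hj.1 hj.2]
    rw [smul_smul, smul_smul, hs1, hs2]
  have hsum2 : ∑ j ∈ Finset.Icc (a+2) (m+1), (Tb (sg m ia) + (T (-1) : A) • 1) •
        ((T ((((a:ℕ)+1 : ℕ):ℤ) - (j:ℤ)) : A) • (Tb (bElt m j) • U)) =
      ∑ j ∈ Finset.Icc (a+2) (m+1), ((T (((a:ℤ)+2) - (j:ℤ)) : A) • (Tb (bElt m j) • U) +
        (T ((a:ℤ) - (j:ℤ)) : A) • (Tb (bElt m j) • U)) := by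
    apply Finset.sum_congr rfl
    intro j hj
    have hc : ((((a:ℕ)+1 : ℕ):ℤ)) = (a:ℤ) + 1 := by push_cast; ring
    rw [hc]
    exact hterm2 j hj
  have hc1 : (((a+1 : ℕ)):ℤ) - ((a+1:ℕ):ℤ) = ((a:ℤ)+1) - ((a:ℤ)+1) := by push_cast; ring
  rw [show ((((a:ℕ)+1 : ℕ):ℤ) - (((a:ℕ)+1 : ℕ):ℤ)) = (((a:ℤ)+1) - ((a:ℤ)+1)) from by push_cast; ring]
  rw [hterm1, hsum2, Finset.sum_add_distrib]
  -- right-hand side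
  rw [HSum_smul, HSum_smul]
  have hsplit0 : Finset.Icc a (m+1) = insert a (insert (a+1) (Finset.Icc (a+2) (m+1))) := by
    ext x
    simp only [Finset.mem_Icc, Finset.mem_insert]
    omega
  rw [hsplit0, Finset.sum_insert (by simp only [Finset.mem_insert, Finset.mem_Icc]; omega),
    Finset.sum_insert (by simp only [Finset.mem_Icc]; omega)]
  rw [sub_self, T_zero, one_smul]
  rw [show ((a:ℤ) - ((a+1:ℕ):ℤ)) = (-1 : ℤ) from by push_cast; ring]
  have hcast2 : ∑ j ∈ Finset.Icc (a+2) (m+1), (T (((a+2:ℕ):ℤ) - (j:ℤ)) : A) • (Tb (bElt m j) • U) =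
      ∑ j ∈ Finset.Icc (a+2) (m+1), (T (((a:ℤ)+2) - (j:ℤ)) : A) • (Tb (bElt m j) • U) := by
    apply Finset.sum_congr rfl
    intro j hj
    rw [show (((a+2:ℕ)):ℤ) = (a:ℤ)+2 from by push_cast; ring]
  rw [hcast2]
  abel

section barsec2
variable (hTquad : ∀ i : Fin m,
    Tb (sg m i) * Tb (sg m i) = (T 1 - T (-1) : A) • Tb (sg m i) + 1)
  (barH : H →+* H)
  (hbarH_smul : ∀ (a : A) (h : H), barH (a • h) = Abar a • barH h)
  (hbarH_T : ∀ w : SymGrp m, barH (Tb w) * Tb w⁻¹ = 1 ∧ Tb w⁻¹ * barH (Tb w) = 1)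
  (barE : E →+ E) (hbarE_fix : ∀ γ : Γ, barE (Γb γ) = Γb γ)
  (barT : tE →+ tE)
  (hbarT_box : ∀ (h : H) (e : E), barT (h • unit e) = barH h • unit (barE e))

include hbarT_box hbarE_fix in
lemma barT_unit_smul (h : H) : barT (h • unit (Γb γ)) = barH h • unit (Γb γ) := by
  rw [hbarT_box, hbarE_fix]

include hTquad hbarH_smul hbarH_T in
lemma barH_theta (i : Fin m) :
    barH (Tb (sg m i) + (T (-1) : A) • 1) = Tb (sg m i) + (T (-1) : A) • 1 := by
  rw [map_add, barH_sg Tb hTquad barH hbarH_T i, hbarH_smul, map_one, Abar_T]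
  rw [sub_smul]
  norm_num
  abel

include hT1 hTmul hTquad hbox hk1 hk hblock hbarH_smul hbarH_T hbarT_box hbarE_fix in
lemma barT_HSum : ∀ a : ℕ, k ≤ a →
    barT (HSum Tb a • unit (Γb γ)) = HSum Tb a • unit (Γb γ) := by
  suffices Hs : ∀ t : ℕ, ∀ a : ℕ, k ≤ a → m + 2 ≤ a + t →
      barT (HSum Tb a • unit (Γb γ)) = HSum Tb a • unit (Γb γ) by
    intro a ha
    exact Hs (m+2) a ha (by omega)
  intro t
  induction t with
  | zero =>
    intro a ha ha2
    rw [HSum_zero Tb (by omega), zero_smul, map_zero]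
  | succ t ih =>
    intro a ha ha2
    by_cases hbig : m + 2 ≤ a
    · rw [HSum_zero Tb (by omega), zero_smul, map_zero]
    · by_cases htopc : a = m + 1
      · subst htopc
        have hone := barT_unit_smul E Γb tE unit γ barH barE hbarE_fix barT hbarT_box 1
        rw [map_one, one_smul] at hone
        rw [HSum_top Tb hT1]
        rw [one_smul (M := H)]
        exact hone
      · have ham : a ≤ m := by omega
        have hkey := theta_step Tb hT1 hTmul Jset E Γb Lset mu tE unit hbox γ k hk1 hblock
          (a := a) ha ham
        have hstep : HSum Tb a • unit (Γb γ) =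
            (Tb (sgN m a) + (T (-1) : A) • 1) • (HSum Tb (a+1) • unit (Γb γ))
              - HSum Tb (a+2) • unit (Γb γ) := by
          rw [hkey]
          abel
        rw [hstep, map_sub]
        have hsgNa : sgN m a = sg m ⟨a - 1, by omega⟩ := sgN_eq (by omega) ham
        have hih1 : barT (HSum Tb (a+1) • unit (Γb γ)) = HSum Tb (a+1) • unit (Γb γ) :=
          ih (a+1) (by omega) (by omega)
        have hbarh : barH (HSum Tb (a+1)) • unit (Γb γ) = HSum Tb (a+1) • unit (Γb γ) := by
          rw [← barT_unit_smul E Γb tE unit γ barH barE hbarE_fix barT hbarT_box]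
          exact hih1
        have h1 : barT ((Tb (sgN m a) + (T (-1) : A) • 1) • (HSum Tb (a+1) • unit (Γb γ)))
            = (Tb (sgN m a) + (T (-1) : A) • 1) • (HSum Tb (a+1) • unit (Γb γ)) := by
          rw [← mul_smul]
          rw [barT_unit_smul E Γb tE unit γ barH barE hbarE_fix barT hbarT_box]
          rw [map_mul]
          rw [hsgNa, barH_theta Tb hTquad barH hbarH_smul hbarH_T]
          rw [mul_smul, ← hsgNa, hbarh]
          exact (mul_smul _ _ _).symm
        rw [h1, ih (a+2) (by omega) (by omega), ← hstep]

end barsec2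
end recsec

end

end Work

open Work

theorem canonical_basis_element_bk_formula
    (m : ℕ) (hm : 1 ≤ m)
    -- the Hecke algebra of `S_n` over `A`, with standard basis and bar involution
    (H : Type*) [Ring H] [Algebra A H] (Tb : Module.Basis (SymGrp m) A H)
    (hT1 : Tb 1 = 1)
    (hTmul : ∀ v w : SymGrp m, len (v * w) = len v + len w → Tb (v * w) = Tb v * Tb w)
    (hTquad : ∀ i : Fin m,
      Tb (sg m i) * Tb (sg m i) = (T 1 - T (-1) : A) • Tb (sg m i) + 1)
    (barH : H →+* H)
    (hbarH_smul : ∀ (a : A) (h : H), barH (a • h) = Abar a • barH h)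
    (hbarH_T : ∀ w : SymGrp m, barH (Tb w) * Tb w⁻¹ = 1 ∧ Tb w⁻¹ * barH (Tb w) = 1)
    -- the Kazhdan–Lusztig basis `{C′_w}` of `H`
    (Cb : SymGrp m → H) (hCb : IsCanonicalBasis (⇑barH) (⇑Tb) Cb)
    -- `J = J_{n−1} = {s₁, …, s_{n−2}}`
    (Jset : Set (Fin m)) (hJ : Jset = {i : Fin m | (i : ℕ) + 1 ≤ m - 1})
    -- a `W_J`-graph `Γ`, giving `E = AΓ` with its bar involution fixing `Γ`
    {Γ : Type*} (E : Type*) [AddCommGroup E] [Module A E] (Γb : Module.Basis Γ A E)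
    (Lset : Γ → Set (Fin m)) (mu : Γ → Γ → ℤ)
    (hLJ : ∀ γ, Lset γ ⊆ Jset)
    (hmufin : ∀ γ : Γ, {δ : Γ | mu δ γ ≠ 0}.Finite)
    (barE : E →+ E) (hbarE_smul : ∀ (a : A) (e : E), barE (a • e) = Abar a • barE e)
    (hbarE_fix : ∀ γ : Γ, barE (Γb γ) = Γb γ)
    -- the induced module `Ẽ = H ⊗_{H_J} AΓ`: an `H`-module with a balanced unit map
    -- `e ↦ 1 ⊠ e`, on which `T_s ⊠ (⋅)` matches the `W_J`-graph action for `s ∈ J`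
    (tE : Type*) [AddCommGroup tE] [Module A tE] [Module H tE] [IsScalarTower A H tE]
    (unit : E →ₗ[A] tE)
    (hbox : ∀ i ∈ Jset, ∀ e : E,
      (Tb (sg m i) + (T (-1) : A) • 1) • unit e = unit (graphOp Γb Lset mu i e))
    -- its bar involution, `bar (h ⊠ e) = bar h ⊠ bar e`
    (barT : tE →+ tE)
    (hbarT_smul : ∀ (a : A) (x : tE), barT (a • x) = Abar a • barT x)
    (hbarT_box : ∀ (h : H) (e : E), barT (h • unit e) = barH h • unit (barE e))
    -- the Howlett–Yin canonical basis of `Ẽ`, w.r.t. the standard basis `T_w ⊠ γ`, `w ∈ W^J`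
    (hbmin : ∀ k : ℕ, IsMinLeft Jset (bElt m k))
    (c : {w : SymGrp m // IsMinLeft Jset w} × Γ → tE)
    (hc : IsCanonicalBasis (⇑barT) (fun p : {w : SymGrp m // IsMinLeft Jset w} × Γ =>
      Tb p.1.1 • unit (Γb p.2)) c)
    -- the data of the statement: `k`, `K = {s_k, …, s_{n−2}}`, `γ` with `K ⊆ L(γ)`,
    -- and `w₀(K)` the longest element of `W_K`
    (k : ℕ) (hk1 : 1 ≤ k) (hk : k ≤ m)
    (Kset : Set (Fin m)) (hKset : Kset = {i : Fin m | k ≤ (i : ℕ) + 1 ∧ (i : ℕ) + 1 ≤ m - 1})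
    (γ : Γ) (hKL : Kset ⊆ Lset γ)
    (w0K : SymGrp m) (hw0K : w0K ∈ parab m Kset) (hw0Kmax : ∀ v ∈ parab m Kset, len v ≤ len w0K) :
    c ⟨⟨bElt m k, hbmin k⟩, γ⟩ =
        ∑ j ∈ Finset.Icc k (m + 1), (T ((k : ℤ) - (j : ℤ)) : A) • (Tb (bElt m j) • unit (Γb γ))
      ∧ qfact (m + 1 - k) • c ⟨⟨bElt m k, hbmin k⟩, γ⟩ =
          Cb (bElt m k * w0K) • unit (Γb γ) := by
  have hblock : ∀ i : Fin m, k - 1 ≤ (i:ℕ) → (i:ℕ)+1 ≤ m-1 → i ∈ Jset ∧ i ∈ Lset γ := by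
    intro i h1 h2
    have hiK : i ∈ Kset := by
      rw [hKset]
      exact ⟨by omega, h2⟩
    exact ⟨hLJ γ (hKL hiK), hKL hiK⟩
  -- ==================== Part 1 ====================
  set p0 : {w : SymGrp m // IsMinLeft Jset w} × Γ := ⟨⟨bElt m k, hbmin k⟩, γ⟩ with hp0
  have hbar1 : barT (HSum Tb k • unit (Γb γ)) = HSum Tb k • unit (Γb γ) :=
    barT_HSum Tb hT1 hTmul Jset E Γb Lset mu tE unit hbox γ k hk1 hk hblock hTquad barH
      hbarH_smul hbarH_T barE hbarE_fix barT hbarT_box k (le_refl k)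
  have hpart1 : c p0 = HSum Tb k • unit (Γb γ) := by
    set d : {w : SymGrp m // IsMinLeft Jset w} × Γ → tE :=
      Function.update c p0 (HSum Tb k • unit (Γb γ)) with hd
    have hdbar : ∀ i, barT (d i) = d i := by
      intro i
      rcases eq_or_ne i p0 with rfl | hne
      · rw [hd, Function.update_self]
        exact hbar1
      · rw [hd, Function.update_of_ne hne]
        exact hc.bar_invariant i
    have hdcong : ∀ i, d i - (fun p : {w : SymGrp m // IsMinLeft Jset w} × Γ =>
        Tb p.1.1 • unit (Γb p.2)) i ∈
        uinvLattice (fun p : {w : SymGrp m // IsMinLeft Jset w} × Γ =>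
          Tb p.1.1 • unit (Γb p.2)) := by
      intro i
      rcases eq_or_ne i p0 with rfl | hne
      · rw [hd, Function.update_self]
        have hrw : HSum Tb k • unit (Γb γ) = Tb (bElt m k) • unit (Γb γ) +
            ∑ j ∈ Finset.Icc (k+1) (m+1),
              (T ((k:ℤ) - (j:ℤ)) : A) • (Tb (bElt m j) • unit (Γb γ)) := by
          rw [HSum_smul]
          have hsplit : Finset.Icc k (m+1) = insert k (Finset.Icc (k+1) (m+1)) := by
            ext x
            simp only [Finset.mem_Icc, Finset.mem_insert]
            omega
          rw [hsplit, Finset.sum_insert (by simp only [Finset.mem_Icc]; omega),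
            sub_self, T_zero, one_smul]
        rw [hrw]
        have hcancel : Tb (bElt m k) • unit (Γb γ) +
            (∑ j ∈ Finset.Icc (k+1) (m+1),
              (T ((k:ℤ) - (j:ℤ)) : A) • (Tb (bElt m j) • unit (Γb γ))) -
            Tb (p0.1 : SymGrp m) • unit (Γb p0.2) =
            ∑ j ∈ Finset.Icc (k+1) (m+1),
              (T ((k:ℤ) - (j:ℤ)) : A) • (Tb (bElt m j) • unit (Γb γ)) := by
          rw [hp0]
          abel
        rw [hcancel]
        apply Submodule.sum_mem
        intro j hj
        rw [Finset.mem_Icc] at hj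
        apply Submodule.subset_span
        refine ⟨j - k - 1, ⟨⟨bElt m j, hbmin j⟩, γ⟩, ?_⟩
        congr 1
        congr 1
        omega
      · rw [hd, Function.update_of_ne hne]
        exact hc.congruent i
    have hdc := hc.unique d hdbar hdcong
    have := congrFun hdc p0
    rw [hd, Function.update_self] at this
    exact this.symm
  have hgoal1 : c p0 = ∑ j ∈ Finset.Icc k (m + 1),
      (T ((k : ℤ) - (j : ℤ)) : A) • (Tb (bElt m j) • unit (Γb γ)) := by
    rw [hpart1, HSum_smul]
  refine ⟨hgoal1, ?_⟩
  -- ==================== identify w0K ====================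
  have hparabfix : ∀ w ∈ parab m Kset, w ∈ FixOut m (k-1) (m-1) := by
    intro w hw
    induction hw using Subgroup.closure_induction with
    | mem x hx =>
      obtain ⟨i, hiK, rfl⟩ := hx
      rw [hKset] at hiK
      obtain ⟨hi1, hi2⟩ := hiK
      exact sg_mem_FixOut (by omega) hi2
    | one => exact one_mem_FixOut
    | mul x y hx hy ihx ihy => exact mul_mem_FixOut ihx ihy
    | inv x hx ihx => exact inv_mem_FixOut ihx
  have hgammaP_parab : ∀ d a b : ℕ, b - a = d → k - 1 ≤ a → b ≤ m - 1 →
      gammaP m a b ∈ parab m Kset := by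
    intro d
    induction d with
    | zero =>
      intro a b hab _ _
      rw [gammaP_eq_one (by omega)]
      exact one_mem _
    | succ d ih =>
      intro a b hab ha hb
      have hab' : a < b := by omega
      rw [gammaP_cons hab']
      apply mul_mem
      · apply Subgroup.subset_closure
        refine ⟨⟨a, by omega⟩, ?_, ?_⟩
        · rw [hKset]
          constructor
          · show k ≤ a + 1
            omega
          · show a + 1 ≤ m - 1
            omega
        · rw [sgN_eq (by omega) (by omega)]
          exact congrArg (sg m) (Fin.ext (by show a = a + 1 - 1; omega))
      · exact ih (a+1) b (by omega) (by omega) hb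
  have hblockRev_parab : ∀ b : ℕ, b ≤ m - 1 → blockRev m (k-1) b ∈ parab m Kset := by
    intro b
    induction b using Nat.strong_induction_on with
    | _ b ih =>
      intro hb
      by_cases hba : b ≤ k - 1
      · rw [blockRev_eq_one hba]
        exact one_mem _
      · push_neg at hba
        rw [blockRev_decomp (by omega) (by omega)]
        apply mul_mem
        · exact hgammaP_parab (b - (k-1)) (k-1) b rfl (le_refl _) hb
        · exact ih (b-1) (by omega) (by omega)
  have hw0K_eq : w0K = blockRev m (k-1) (m-1) := by
    have h1 : len (blockRev m (k-1) (m-1)) ≤ len w0K :=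
      hw0Kmax _ (hblockRev_parab (m-1) (le_refl _))
    have h2 := len_le_blockRev (a := k-1) (b := m-1) (by omega) w0K (hparabfix w0K hw0K)
    by_contra hne
    have := h2.2 hne
    omega
  have hw1_eq : bElt m k * w0K = blockRev m (k-1) m := by
    rw [hw0K_eq, bElt_eq_gammaP hk1]
    exact (blockRev_decomp (by omega) (le_refl m)).symm
  -- ==================== identify Cb at the block reversal ====================
  have hCbw1 : Cb (blockRev m (k-1) m) = h1elt Tb (k-1) := by
    set d' : SymGrp m → H := Function.update Cb (blockRev m (k-1) m) (h1elt Tb (k-1)) with hd'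
    have hd'bar : ∀ w, barH (d' w) = d' w := by
      intro w
      rcases eq_or_ne w (blockRev m (k-1) m) with rfl | hne
      · rw [hd', Function.update_self]
        exact barH_h1_eq Tb hT1 hTmul hTquad barH hbarH_smul hbarH_T (k-1)
      · rw [hd', Function.update_of_ne hne]
        exact hCb.bar_invariant w
    have hd'cong : ∀ w, d' w - Tb w ∈ uinvLattice ⇑Tb := by
      intro w
      rcases eq_or_ne w (blockRev m (k-1) m) with rfl | hne
      · rw [hd', Function.update_self]
        have hw1F : blockRev m (k-1) m ∈ FixOut m (k-1) m :=
          blockRev_mem_FixOut (le_refl m)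
        have hsplit : h1elt Tb (k-1) =
            (∑ y ∈ (FixOut m (k-1) m).erase (blockRev m (k-1) m),
              (T ((len y : ℤ) - (len (blockRev m (k-1) m) : ℤ)) : A) • Tb y) +
            Tb (blockRev m (k-1) m) := by
          unfold h1elt
          rw [← Finset.sum_erase_add _ _ hw1F, sub_self, T_zero, one_smul]
        rw [hsplit, add_sub_cancel_right]
        apply Submodule.sum_mem
        intro y hy
        rw [Finset.mem_erase] at hy
        have hylt : len y < len (blockRev m (k-1) m) :=
          (len_le_blockRev (le_refl m) y hy.2).2 hy.1
        apply Submodule.subset_span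
        refine ⟨len (blockRev m (k-1) m) - len y - 1, y, ?_⟩
        congr 1
        congr 1
        omega
      · rw [hd', Function.update_of_ne hne]
        exact hCb.congruent w
    have hdc := hCb.unique d' hd'bar hd'cong
    have := congrFun hdc (blockRev m (k-1) m)
    rw [hd', Function.update_self] at this
    exact this.symm
  -- ==================== compute the action ====================
  rw [hw1_eq, hCbw1]
  rw [hpart1]
  -- expand h1elt • U
  have hact : h1elt Tb (k-1) • unit (Γb γ) =
      qfact (m + 1 - k) • (HSum Tb k • unit (Γb γ)) := by
    unfold h1elt
    rw [Finset.sum_smul]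
    have hexp1 : ∀ y ∈ FixOut m (k-1) m,
        ((T ((len y : ℤ) - (len (blockRev m (k-1) m) : ℤ)) : A) • Tb y) • unit (Γb γ) =
        (T ((len y : ℤ) - (len (blockRev m (k-1) m) : ℤ)) : A) • (Tb y • unit (Γb γ)) := by
      intro y hy
      rw [smul_assoc]
    rw [Finset.sum_congr rfl hexp1]
    rw [sum_FixOut_eq (by omega) hm (le_refl m)]
    have hinner : ∀ j' ∈ Finset.Icc (k-1) m,
        ∑ v ∈ FixOut m (k-1) (m-1),
          (T ((len (gammaP m j' m * v) : ℤ) - (len (blockRev m (k-1) m) : ℤ)) : A) •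
            (Tb (gammaP m j' m * v) • unit (Γb γ)) =
        (qfact (m + 1 - k) * T (((k:ℤ) - 1 - (j':ℤ)))) •
          (Tb (gammaP m j' m) • unit (Γb γ)) := by
      intro j' hj'
      rw [Finset.mem_Icc] at hj'
      have hstep : ∀ v ∈ FixOut m (k-1) (m-1),
          (T ((len (gammaP m j' m * v) : ℤ) - (len (blockRev m (k-1) m) : ℤ)) : A) •
            (Tb (gammaP m j' m * v) • unit (Γb γ)) =
          (T (((m:ℤ) - j') + 2 * (len v : ℤ) - (len (blockRev m (k-1) m) : ℤ)) : A) •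
            (Tb (gammaP m j' m) • unit (Γb γ)) := by
        intro v hv
        have hlen : len (gammaP m j' m * v) = (m - j') + len v :=
          len_gammaP_mul (le_refl m) hv hj'.1 hj'.2
        have hleng : len (gammaP m j' m) = m - j' := by
          have := len_gammaP_mul (le_refl m) (one_mem_FixOut (a := k-1) (b := m-1))
            hj'.1 hj'.2
          rwa [mul_one, len_one, add_zero] at this
        have hmulTb : Tb (gammaP m j' m * v) = Tb (gammaP m j' m) * Tb v :=
          hTmul _ _ (by rw [hlen, hleng])
        rw [hmulTb, mul_smul]
        rw [Tb_fix_smul_unit Tb hT1 hTmul Jset E Γb Lset mu tE unit hbox γ (k-1) (m-1)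
          (by omega) hblock v hv]
        rw [smul_comm_AH, smul_smul, ← T_add, hlen]
        congr 2
        push_cast [Nat.cast_sub hj'.2, Nat.cast_sub]
        ring
      rw [Finset.sum_congr rfl hstep]
      rw [← Finset.sum_smul]
      congr 1
      have hfactor : ∀ v ∈ FixOut m (k-1) (m-1),
          (T (((m:ℤ) - j') + 2 * (len v : ℤ) - (len (blockRev m (k-1) m) : ℤ)) : A) =
          T (((m:ℤ) - j') - (len (blockRev m (k-1) m) : ℤ)) * T (2 * (len v : ℤ)) := by
        intro v hv
        rw [← T_add]
        congr 1
        ring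
      rw [Finset.sum_congr rfl hfactor, ← Finset.mul_sum]
      rw [QP (by omega) (by omega)]
      have hqrw : (m - 1) + 1 - (k - 1) = m + 1 - k := by omega
      rw [hqrw]
      have hNrel : len (blockRev m (k-1) m) =
          (m - (k-1)) + len (blockRev m (k-1) (m-1)) :=
        len_blockRev_decomp (by omega) (le_refl m)
      rw [← mul_assoc, mul_comm (T ((m:ℤ) - j' - (len (blockRev m (k-1) m) : ℤ)) : A)
        (qfact (m+1-k)), mul_assoc, ← T_add]
      congr 2
      rw [hNrel]
      push_cast [Nat.cast_sub (show k - 1 ≤ m by omega)]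
      have hc1 : ((k:ℤ) - 1) = ((k - 1 : ℕ) : ℤ) := by push_cast [Nat.cast_sub hk1]; ring
      omega
    rw [Finset.sum_congr rfl hinner]
    -- reindex j = j' + 1
    rw [HSum_smul, Finset.smul_sum]
    apply Finset.sum_nbij' (i := fun j' => j' + 1) (j := fun j => j - 1)
    · intro j' hj'
      rw [Finset.mem_Icc] at hj' ⊢
      omega
    · intro j hj
      rw [Finset.mem_Icc] at hj ⊢
      omega
    · intro j' _
      omega
    · intro j hj
      rw [Finset.mem_Icc] at hj
      omega
    · intro j' hj'
      rw [Finset.mem_Icc] at hj'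
      rw [bElt_eq_gammaP (by omega)]
      have hj1 : j' + 1 - 1 = j' := by omega
      rw [hj1, mul_smul]
      congr 1
      congr 1
      push_cast
      ring
  rw [hact]

end
end

section
/- Let Λ be a W-graph for a Coxeter system (W,S) and s ∈ S. Then the kernel of the additive map m_{C_s − [2]} : AΛ → AΛ (left multiplication by C_s − [2]) is exactly AΛ⁻_s, the A-span of the vertices whose descent set contains s. If moreover s commutes with every t ∈ S, then for any H-module F the map m_{C_s − [2]} : F → F is an H-module homomorphism. Consequently, for W = S_n and any W_{S∖s₂}-graph Λ, AΛ⁻_{s₁} is a cellular submodule of AΛ. -/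
/-!
# Statement 16 (Lemma: the kernel of multiplication by `C_s − [2]` on a W-graph)

`A = ℤ[u,u⁻¹]`, `[2] = u + u⁻¹`, `H` is the Hecke algebra of a Coxeter system `(W,S)` with
standard basis `{T_w}` and `C_s = T_s + u⁻¹`.  A `W`-graph `Λ` (vertices with edge weights
`μ(δ,γ) ∈ ℤ` and descent sets `L(γ) ⊆ S`) makes `AΛ = Λ →₀ A` into a left `H`-module where
`C_s` acts by `C_s γ = [2] γ` if `s ∈ L(γ)` and `C_s γ = ∑_{δ : s ∈ L(δ)} μ(δ,γ) δ`
otherwise.  `Λ⁻_s = {γ : s ∈ L(γ)}`.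

Claims: (1) the kernel of `m_{C_s − [2]} : AΛ → AΛ` is exactly `A Λ⁻_s`;
(2) if `s` commutes with every `t ∈ S` then `m_{C_s − [2]} : F → F` is an `H`-module
homomorphism for every `H`-module `F`;
(3) consequently, for `W = S_n` and any `W_{S∖s₂}`-graph `Λ` (encoded by its vertex data
together with the Hecke relations satisfied by the `W`-graph operators), `A Λ⁻_{s₁}` is a
cellular submodule of `AΛ`, i.e. the span of `Λ⁻_{s₁}` is stable under all the `W_{S∖s₂}`-graph
operators `C_t`, `t ∈ S∖s₂`.  (Simple reflections of `S_n` are indexed by `Fin m`, `n = m+1`,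
with `s₁, s₂` corresponding to the indices `0, 1`.)
-/

noncomputable section
open LaurentPolynomial
open scoped Classical

/-- The value of the `W`-graph operator `C_s` on a basis vertex `γ`:
`[2]·γ` if `s ∈ L γ`, and `∑_{δ : s ∈ L δ} μ(δ,γ)·δ` otherwise. -/
def wgValue {B V : Type*} (mu : V → V → ℤ) (L : V → Set B) (i : B) (γ : V) : V →₀ A :=
  if i ∈ L γ then qtwo • Finsupp.single γ (1 : A)
  else ∑ᶠ δ ∈ {δ : V | i ∈ L δ}, mu δ γ • Finsupp.single δ (1 : A)

/-- The `W`-graph operator `C_s` on `AΛ = Λ →₀ A`, extended `A`-linearly from `wgValue`. -/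
def wgOp {B V : Type*} (mu : V → V → ℤ) (L : V → Set B) (i : B) :
    (V →₀ A) →ₗ[A] (V →₀ A) :=
  Finsupp.lsum A fun γ => LinearMap.toSpanSingleton A _ (wgValue mu L i γ)

/-- The span `A Λ⁻_s` of the vertices whose descent set contains `s` (index `i`). -/
def descentSpan {B V : Type*} (L : V → Set B) (i : B) : Submodule A (V →₀ A) :=
  Submodule.span A {y | ∃ γ : V, i ∈ L γ ∧ y = Finsupp.single γ (1 : A)}

/-! ### Auxiliary lemmas -/

lemma qtwo_ne_zero : qtwo ≠ 0 := by
  intro h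
  have := congrArg (fun p : A => p.coeff 1) h
  simp [qtwo] at this

lemma wgValue_mem {B V : Type*} (mu : V → V → ℤ) (L : V → Set B)
    (hmufin : ∀ γ : V, {δ : V | mu δ γ ≠ 0}.Finite) (i : B) (γ : V) :
    wgValue mu L i γ ∈ descentSpan L i := by
  unfold wgValue
  split_ifs with h
  · exact Submodule.smul_mem _ _ (Submodule.subset_span ⟨γ, h, rfl⟩)
  · set f : V → (V →₀ A) := fun δ => mu δ γ • Finsupp.single δ (1 : A) with hf
    have hfin : ({δ : V | i ∈ L δ} ∩ Function.support f).Finite := by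
      apply (hmufin γ).subset
      rintro δ ⟨-, hδ⟩
      intro h0
      apply hδ
      simp [hf, h0]
    rw [finsum_mem_eq_sum _ hfin]
    apply Submodule.sum_mem
    intro δ hδ
    rw [Set.Finite.mem_toFinset] at hδ
    have hmem : Finsupp.single δ (1:A) ∈ descentSpan L i :=
      Submodule.subset_span ⟨δ, hδ.1, rfl⟩
    exact zsmul_mem hmem (mu δ γ)

lemma descentSpan_eq_supported {B V : Type*} (L : V → Set B) (i : B) :
    descentSpan L i = Finsupp.supported A A {γ : V | i ∈ L γ} := by
  rw [Finsupp.supported_eq_span_single, descentSpan]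
  congr 1
  ext y
  simp only [Set.mem_image, Set.mem_setOf_eq]
  constructor
  · rintro ⟨γ, hγ, rfl⟩; exact ⟨γ, hγ, rfl⟩
  · rintro ⟨γ, hγ, rfl⟩; exact ⟨γ, hγ, rfl⟩

lemma op_mem_descentSpan {B V : Type*} (mu : V → V → ℤ) (L : V → Set B)
    (hmufin : ∀ γ : V, {δ : V | mu δ γ ≠ 0}.Finite) (i : B)
    (Cop : (V →₀ A) →ₗ[A] (V →₀ A))
    (hC : ∀ γ : V, Cop (Finsupp.single γ (1 : A)) = wgValue mu L i γ) (y : V →₀ A) :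
    Cop y ∈ descentSpan L i := by
  induction y using Finsupp.induction_linear with
  | zero => simp
  | add f g hf hg => rw [map_add]; exact Submodule.add_mem _ hf hg
  | single a b =>
    have : Finsupp.single a b = b • Finsupp.single a (1:A) := by simp
    rw [this, map_smul, hC]
    exact Submodule.smul_mem _ _ (wgValue_mem mu L hmufin i a)

lemma keyIff {B V : Type*} (mu : V → V → ℤ) (L : V → Set B)
    (hmufin : ∀ γ : V, {δ : V | mu δ γ ≠ 0}.Finite) (i : B)
    (Cop : (V →₀ A) →ₗ[A] (V →₀ A))
    (hC : ∀ γ : V, Cop (Finsupp.single γ (1 : A)) = wgValue mu L i γ) (x : V →₀ A) :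
    Cop x = qtwo • x ↔ x ∈ descentSpan L i := by
  constructor
  · intro hx
    have hmem : qtwo • x ∈ descentSpan L i := hx ▸ op_mem_descentSpan mu L hmufin i Cop hC x
    rw [descentSpan_eq_supported, Finsupp.mem_supported] at hmem ⊢
    intro γ hγ
    have := hmem
    by_contra hne
    have hγ' : γ ∈ (qtwo • x).support := by
      rw [Finsupp.mem_support_iff, Finsupp.smul_apply, smul_eq_mul]
      exact mul_ne_zero qtwo_ne_zero (by simpa [Finsupp.mem_support_iff] using hγ)
    exact hne (this hγ')
  · intro hx
    have : descentSpan L i ≤ LinearMap.ker (Cop - qtwo • LinearMap.id) := by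
      rw [descentSpan, Submodule.span_le]
      rintro y ⟨γ, hγ, rfl⟩
      simp only [SetLike.mem_coe, LinearMap.mem_ker, LinearMap.sub_apply, LinearMap.smul_apply,
        LinearMap.id_apply, hC, wgValue, if_pos hγ, sub_self]
    have := this hx
    rw [LinearMap.mem_ker, LinearMap.sub_apply, LinearMap.smul_apply, LinearMap.id_apply,
      sub_eq_zero] at this
    exact this

lemma Tb_comm {B W : Type*} [Group W] (M : CoxeterMatrix B) (cs : CoxeterSystem M W)
    (H : Type*) [Ring H] [Algebra A H] (Tb : Module.Basis W A H)
    (hTmul : ∀ v w : W, cs.length (v * w) = cs.length v + cs.length w →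
      Tb (v * w) = Tb v * Tb w)
    (hTquad : ∀ i : B, Tb (cs.simple i) * Tb (cs.simple i) =
      (T 1 - T (-1) : A) • Tb (cs.simple i) + 1)
    (i : B) (hcomm : ∀ j : B, cs.simple i * cs.simple j = cs.simple j * cs.simple i)
    (h : H) : Tb (cs.simple i) * h = h * Tb (cs.simple i) := by
  have hcen : ∀ w : W, cs.simple i * w = w * cs.simple i := by
    intro w
    have hw : w ∈ Subgroup.closure (Set.range cs.simple) := by
      rw [cs.subgroup_closure_range_simple]; trivial
    induction hw using Subgroup.closure_induction with
    | mem x hx => obtain ⟨j, rfl⟩ := hx; exact hcomm j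
    | one => simp
    | mul x y _ _ hx hy => rw [← mul_assoc, hx, mul_assoc, hy, mul_assoc]
    | inv x _ hx =>
      have := congrArg (fun z => x⁻¹ * z * x⁻¹) hx.symm
      simpa [mul_assoc] using this
  have key : ∀ w : W, Tb (cs.simple i) * Tb w = Tb w * Tb (cs.simple i) := by
    intro w
    rcases cs.length_simple_mul w i with hl | hl
    · have h1 : Tb (cs.simple i * w) = Tb (cs.simple i) * Tb w :=
        hTmul _ _ (by rw [hl, cs.length_simple]; ring)
      have h2 : Tb (w * cs.simple i) = Tb w * Tb (cs.simple i) :=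
        hTmul _ _ (by rw [← hcen w, hl, cs.length_simple])
      rw [← h1, ← h2, hcen w]
    · set v := cs.simple i * w with hv
      have hwv : w = cs.simple i * v := by
        rw [hv, ← mul_assoc, cs.simple_mul_simple_self, one_mul]
      have hlv : cs.length w = cs.length v + 1 := by omega
      have h1 : Tb w = Tb (cs.simple i) * Tb v := by
        rw [hwv]; exact hTmul _ _ (by rw [← hwv, hlv, cs.length_simple]; ring)
      have h2 : Tb w = Tb v * Tb (cs.simple i) := by
        have hw' : w = v * cs.simple i := by rw [← hcen v, ← hwv]
        rw [hw']; exact hTmul _ _ (by rw [← hw', hlv, cs.length_simple])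
      calc Tb (cs.simple i) * Tb w = (Tb (cs.simple i) * Tb (cs.simple i)) * Tb v := by
            rw [h1, mul_assoc]
        _ = (T 1 - T (-1) : A) • Tb w + Tb v := by
            rw [hTquad, add_mul, smul_mul_assoc, one_mul, h1]
        _ = Tb v * ((T 1 - T (-1) : A) • Tb (cs.simple i) + 1) := by
            rw [mul_add, mul_smul_comm, mul_one, h2]
        _ = Tb w * Tb (cs.simple i) := by rw [← hTquad, ← mul_assoc, ← h2]
  have : LinearMap.mulLeft A (Tb (cs.simple i)) = LinearMap.mulRight A (Tb (cs.simple i)) :=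
    Tb.ext fun w => key w
  exact congrFun (congrArg DFunLike.coe this) h

lemma end_commute_of_sub_commute {V : Type} (X Y : Module.End A (V →₀ A)) (a : A)
    (h : (X - a • 1) * (Y - a • 1) = (Y - a • 1) * (X - a • 1)) : X * Y = Y * X := by
  have hcent : ∀ Z : Module.End A (V →₀ A), Commute (a • 1) Z := fun Z => by
    unfold Commute SemiconjBy
    rw [smul_mul_assoc, mul_smul_comm, one_mul, mul_one]
  have hX : X = (X - a • 1) + a • 1 := by abel
  have hY : Y = (Y - a • 1) + a • 1 := by abel
  have : Commute X Y := by
    rw [hX, hY]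
    exact ((Commute.add_right h (hcent _).symm).add_left
      ((Commute.add_right (hcent _) (hcent _))))
  exact this

lemma wgOp_single {B V : Type*} (mu : V → V → ℤ) (L : V → Set B) (i : B) (γ : V) :
    wgOp mu L i (Finsupp.single γ (1 : A)) = wgValue mu L i γ := by
  simp [wgOp]

/-- **Statement 16.** -/
theorem kernel_of_Cs_minus_two_eq_descent_span
    -- a Coxeter system `(W, S)`, simple reflections indexed by `B`
    {B W : Type*} [Group W] (M : CoxeterMatrix B) (cs : CoxeterSystem M W)
    -- its Hecke algebra `H` over `A`, with standard basis `{T_w}` and the Hecke relations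
    (H : Type*) [Ring H] [Algebra A H] (Tb : Module.Basis W A H)
    (hT1 : Tb 1 = 1)
    (hTmul : ∀ v w : W, cs.length (v * w) = cs.length v + cs.length w →
      Tb (v * w) = Tb v * Tb w)
    (hTquad : ∀ i : B, Tb (cs.simple i) * Tb (cs.simple i) =
      (T 1 - T (-1) : A) • Tb (cs.simple i) + 1)
    -- a `W`-graph `Λ`: vertex set `V`, edge weights `mu`, descent sets `L`, such that the
    -- `W`-graph formulas define a left `H`-module structure `ρ` on `AΛ = V →₀ A`
    {V : Type*} (mu : V → V → ℤ) (L : V → Set B)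
    (hmufin : ∀ γ : V, {δ : V | mu δ γ ≠ 0}.Finite)
    (ρ : H →ₐ[A] Module.End A (V →₀ A))
    (hρ : ∀ (i : B) (γ : V),
      ρ (Tb (cs.simple i) + (T (-1) : A) • 1) (Finsupp.single γ (1 : A)) = wgValue mu L i γ) :
    -- (1) the kernel of multiplication by `C_s − [2]` on `AΛ` is exactly `A Λ⁻_s`
    (∀ (i : B) (x : V →₀ A),
      ρ (Tb (cs.simple i) + (T (-1) : A) • 1) x = qtwo • x ↔ x ∈ descentSpan L i) ∧
    -- (2) if `s` commutes with every `t ∈ S`, then for any `H`-module `F`, multiplication by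
    -- `C_s − [2]` is an `H`-module homomorphism
    (∀ i : B, (∀ j : B, cs.simple i * cs.simple j = cs.simple j * cs.simple i) →
      ∀ (F : Type) [AddCommGroup F] [Module H F], ∀ (h : H) (x : F),
        (Tb (cs.simple i) + (T (-1) : A) • 1 - qtwo • 1) • (h • x) =
          h • ((Tb (cs.simple i) + (T (-1) : A) • 1 - qtwo • 1) • x)) ∧
    -- (3) for `W = S_n` (simples indexed by `Fin m`, `s₁ ↔ 0`, `s₂ ↔ 1`) and any
    -- `W_{S∖s₂}`-graph `Λ'` — vertex data whose operators satisfy the type `A` Hecke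
    -- relations of the parabolic subgroup `W_{S∖s₂}` — the span `A Λ'⁻_{s₁}` is stable
    -- under every `W_{S∖s₂}`-graph operator `C_t`, `t ∈ S∖s₂`: a cellular submodule of `AΛ'`
    (∀ (m : ℕ) (hm : 2 ≤ m) (V' : Type) (mu' : V' → V' → ℤ) (L' : V' → Set (Fin m)),
      (∀ γ : V', {δ : V' | mu' δ γ ≠ 0}.Finite) →
      (∀ (γ : V') (i : Fin m), i ∈ L' γ → i ≠ ⟨1, by omega⟩) →
      (∀ i : Fin m, i ≠ ⟨1, by omega⟩ →
        (wgOp mu' L' i - (T (-1) : A) • 1) * (wgOp mu' L' i - (T (-1) : A) • 1) =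
          (T 1 - T (-1) : A) • (wgOp mu' L' i - (T (-1) : A) • 1) + 1) →
      (∀ i j : Fin m, i ≠ ⟨1, by omega⟩ → j ≠ ⟨1, by omega⟩ → (j : ℕ) = (i : ℕ) + 1 →
        (wgOp mu' L' i - (T (-1) : A) • 1) * (wgOp mu' L' j - (T (-1) : A) • 1)
            * (wgOp mu' L' i - (T (-1) : A) • 1) =
          (wgOp mu' L' j - (T (-1) : A) • 1) * (wgOp mu' L' i - (T (-1) : A) • 1)
            * (wgOp mu' L' j - (T (-1) : A) • 1)) →
      (∀ i j : Fin m, i ≠ ⟨1, by omega⟩ → j ≠ ⟨1, by omega⟩ → (i : ℕ) + 1 < (j : ℕ) →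
        (wgOp mu' L' i - (T (-1) : A) • 1) * (wgOp mu' L' j - (T (-1) : A) • 1) =
          (wgOp mu' L' j - (T (-1) : A) • 1) * (wgOp mu' L' i - (T (-1) : A) • 1)) →
      ∀ i : Fin m, i ≠ ⟨1, by omega⟩ →
        ∀ x ∈ descentSpan L' (⟨0, by omega⟩ : Fin m),
          wgOp mu' L' i x ∈ descentSpan L' (⟨0, by omega⟩ : Fin m)) := by
  refine ⟨?_, ?_, ?_⟩
  · intro i x
    exact keyIff mu L hmufin i (ρ (Tb (cs.simple i) + (T (-1) : A) • 1)) (hρ i) x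
  · intro i hc F _ _ h x
    have hc' : (Tb (cs.simple i) + (T (-1) : A) • 1 - qtwo • 1) * h =
        h * (Tb (cs.simple i) + (T (-1) : A) • 1 - qtwo • 1) := by
      rw [sub_mul, mul_sub, add_mul, mul_add, Tb_comm M cs H Tb hTmul hTquad i hc h,
        smul_mul_assoc, mul_smul_comm, smul_mul_assoc, mul_smul_comm, one_mul, mul_one]
    rw [← mul_smul, ← mul_smul, hc']
  · intro m hm V' mu' L' hmufin' hL1 hquad hbraid hcomm i hi x hx
    set z : Fin m := ⟨0, by omega⟩ with hz
    by_cases hiz : i = z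
    · subst hiz
      exact op_mem_descentSpan mu' L' hmufin' z (wgOp mu' L' z) (wgOp_single mu' L' z) x
    · have hz1 : z ≠ (⟨1, by omega⟩ : Fin m) := by
        intro h
        exact absurd (congrArg Fin.val h) (by simp [hz])
      have hlt : (z : ℕ) + 1 < (i : ℕ) := by
        have h0 : (i : ℕ) ≠ 0 := fun h => hiz (Fin.ext (by simp [hz, h]))
        have h1 : (i : ℕ) ≠ 1 := fun h => hi (Fin.ext (by simp [h]))
        simp only [hz]
        omega
      have hco := hcomm z i hz1 hi hlt
      have hXY := end_commute_of_sub_commute (wgOp mu' L' z) (wgOp mu' L' i) (T (-1)) hco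
      have hxz : wgOp mu' L' z x = qtwo • x :=
        (keyIff mu' L' hmufin' z (wgOp mu' L' z) (wgOp_single mu' L' z) x).mpr hx
      have hkey : wgOp mu' L' z (wgOp mu' L' i x) = qtwo • (wgOp mu' L' i x) := by
        calc wgOp mu' L' z (wgOp mu' L' i x) = (wgOp mu' L' z * wgOp mu' L' i) x := rfl
          _ = (wgOp mu' L' i * wgOp mu' L' z) x := by rw [hXY]
          _ = wgOp mu' L' i (wgOp mu' L' z x) := rfl
          _ = qtwo • wgOp mu' L' i x := by rw [hxz, map_smul]
      exact (keyIff mu' L' hmufin' z (wgOp mu' L' z) (wgOp_single mu' L' z) _).mp hkey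

end
end
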